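/- arXiv:1911.03152 — 8 statements merged into one kernel-verified Lean document; each statement's English description precedes it below -/
import Mathlib

section
/- Let λ < 0 and let f : ℝ → ℝ be continuous and non-decreasing. If u and v are both classical solutions of (P_f^λ) on Ω, then u(x) = v(x) for every x in the closure of Ω. -/
open Set MeasureTheory Filter Topology

/-- The Laplacian of `u` at `x`: the trace of the Hessian of `u`. -/
noncomputable def laplacian {N : ℕ} (u : EuclideanSpace ℝ (Fin N) → ℝ)
    (x : EuclideanSpace ℝ (Fin N)) : ℝ :=
  ∑ i : Fin N, iteratedFDeriv ℝ 2 u x ![EuclideanSpace.single i 1, EuclideanSpace.single i 1]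

/-- A classical solution of the problem `(P_f^λ)` on `Ω`:
`u` is continuous on the closure of `Ω`, twice continuously differentiable on `Ω`,
satisfies `-Δ u = λ f(u)` in `Ω` and `u = 0` on `∂ Ω`. -/
def IsClassicalSolution {N : ℕ} (Ω : Set (EuclideanSpace ℝ (Fin N))) (lam : ℝ)
    (f : ℝ → ℝ) (u : EuclideanSpace ℝ (Fin N) → ℝ) : Prop :=
  ContinuousOn u (closure Ω) ∧ ContDiffOn ℝ 2 u Ω ∧
    (∀ x ∈ Ω, -laplacian u x = lam * f (u x)) ∧
    (∀ x ∈ frontier Ω, u x = 0)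

/-- Condition (1.2): `f` is continuous, non-decreasing, non-negative and `f 0 > 0`. -/
def Cond12 (f : ℝ → ℝ) : Prop :=
  Continuous f ∧ Monotone f ∧ (∀ t, 0 ≤ f t) ∧ 0 < f 0

/-- One-dimensional second derivative test: if `φ` is differentiable near `0`, its derivative
has derivative `c` at `0`, and `φ` has a local max at `0`, then `c ≤ 0`. -/
private lemma secondDerivTest {φ : ℝ → ℝ} {c : ℝ}
    (hd : ∀ᶠ t in 𝓝 (0:ℝ), DifferentiableAt ℝ φ t)
    (h2 : HasDerivAt (deriv φ) c 0) (hmax : IsLocalMax φ 0) : c ≤ 0 := by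
  by_contra hc
  push_neg at hc
  have hz : deriv φ 0 = 0 := hmax.deriv_eq_zero
  have hslope : Tendsto (slope (deriv φ) 0) (𝓝[≠] 0) (𝓝 c) :=
    hasDerivAt_iff_tendsto_slope.mp h2
  have hpos : ∀ᶠ t in 𝓝[>] (0:ℝ), 0 < deriv φ t := by
    have h1 : ∀ᶠ t in 𝓝[≠] (0:ℝ), 0 < slope (deriv φ) 0 t :=
      hslope.eventually (eventually_gt_nhds hc)
    have h2' : ∀ᶠ t in 𝓝[>] (0:ℝ), 0 < slope (deriv φ) 0 t :=
      nhdsWithin_mono 0 (fun t ht => ne_of_gt ht) h1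
    filter_upwards [h2', self_mem_nhdsWithin] with t ht ht0
    have hs : slope (deriv φ) 0 t = deriv φ t / t := by
      simp [slope_def_field, hz]
    rw [hs] at ht
    have := mul_pos ht ht0
    rwa [div_mul_cancel₀ _ (ne_of_gt ht0)] at this
  obtain ⟨δ1, hδ1, hIoc⟩ := mem_nhdsGT_iff_exists_Ioc_subset.mp hpos
  obtain ⟨ε1, hε1, hball1⟩ := Metric.eventually_nhds_iff.mp hd
  obtain ⟨ε2, hε2, hball2⟩ := Metric.eventually_nhds_iff.mp (hmax : ∀ᶠ t in 𝓝 0, φ t ≤ φ 0)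
  set δ : ℝ := min δ1 (min (ε1 / 2) (ε2 / 2)) with hδdef
  have hδ0 : 0 < δ := lt_min hδ1 (lt_min (by linarith) (by linarith))
  have hmono : StrictMonoOn φ (Icc 0 δ) := by
    apply strictMonoOn_of_deriv_pos (convex_Icc 0 δ)
    · intro t ht
      have : DifferentiableAt ℝ φ t := by
        apply hball1
        rw [Real.dist_eq, sub_zero, abs_of_nonneg ht.1]
        calc t ≤ δ := ht.2
          _ ≤ ε1 / 2 := le_trans (min_le_right _ _) (min_le_left _ _)
          _ < ε1 := by linarith
      exact this.continuousAt.continuousWithinAt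
    · intro t ht
      rw [interior_Icc] at ht
      exact hIoc ⟨ht.1, le_trans (le_of_lt ht.2) (min_le_left _ _)⟩
  have h01 : φ 0 < φ δ := hmono (left_mem_Icc.mpr (le_of_lt hδ0)) (right_mem_Icc.mpr (le_of_lt hδ0)) hδ0
  have h02 : φ δ ≤ φ 0 := by
    apply hball2
    rw [Real.dist_eq, sub_zero, abs_of_pos hδ0]
    calc δ ≤ ε2 / 2 := le_trans (min_le_right _ _) (min_le_right _ _)
      _ < ε2 := by linarith
  linarith

/-- Along a line through a point of an open set on which `g` is `C²`, the composed function
is differentiable with derivative given by `fderiv`. -/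
private lemma line_hasDerivAt {N : ℕ} {Ω : Set (EuclideanSpace ℝ (Fin N))} (hΩo : IsOpen Ω)
    {g : EuclideanSpace ℝ (Fin N) → ℝ} (hg : ContDiffOn ℝ 2 g Ω)
    {x : EuclideanSpace ℝ (Fin N)} (hx : x ∈ Ω) (d : EuclideanSpace ℝ (Fin N)) :
    ∀ᶠ t in 𝓝 (0:ℝ), HasDerivAt (fun s : ℝ => g (x + s • d)) (fderiv ℝ g (x + t • d) d) t := by
  have hL : ∀ t : ℝ, HasDerivAt (fun s : ℝ => x + s • d) d t := by
    intro t
    simpa using ((hasDerivAt_id t).smul_const d).const_add x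
  have hcont : Continuous fun t : ℝ => x + t • d :=
    continuous_const.add (continuous_id.smul continuous_const)
  have hev : ∀ᶠ t in 𝓝 (0:ℝ), x + t • d ∈ Ω := by
    have h0 : x + (0:ℝ) • d = x := by simp
    have : Ω ∈ 𝓝 ((fun t : ℝ => x + t • d) 0) := by
      simpa [h0] using hΩo.mem_nhds hx
    exact hcont.continuousAt.preimage_mem_nhds this
  filter_upwards [hev] with t ht
  have hdiff : DifferentiableAt ℝ g (x + t • d) :=
    (hg.contDiffAt (hΩo.mem_nhds ht)).differentiableAt two_ne_zero
  exact hdiff.hasFDerivAt.comp_hasDerivAt t (hL t)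

/-- The second derivative along a line equals the second Fréchet derivative applied twice. -/
private lemma line_deriv2 {N : ℕ} {Ω : Set (EuclideanSpace ℝ (Fin N))} (hΩo : IsOpen Ω)
    {g : EuclideanSpace ℝ (Fin N) → ℝ} (hg : ContDiffOn ℝ 2 g Ω)
    {x : EuclideanSpace ℝ (Fin N)} (hx : x ∈ Ω) (d : EuclideanSpace ℝ (Fin N)) :
    HasDerivAt (deriv fun t : ℝ => g (x + t • d)) (fderiv ℝ (fderiv ℝ g) x d d) 0 := by
  have hline := line_hasDerivAt hΩo hg hx d
  have h1 : ContDiffAt ℝ 2 g x := hg.contDiffAt (hΩo.mem_nhds hx)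
  have h2 : ContDiffAt ℝ 1 (fderiv ℝ g) x := h1.fderiv_right (by norm_num)
  have h3 : DifferentiableAt ℝ (fderiv ℝ g) x := h2.differentiableAt one_ne_zero
  have hL : HasDerivAt (fun t : ℝ => x + t • d) d 0 := by
    simpa using ((hasDerivAt_id (0:ℝ)).smul_const d).const_add x
  have h0 : x + (0:ℝ) • d = x := by simp
  have hc : HasDerivAt (fun t : ℝ => fderiv ℝ g (x + t • d)) (fderiv ℝ (fderiv ℝ g) x d) 0 := by
    have h3' : HasFDerivAt (fderiv ℝ g) (fderiv ℝ (fderiv ℝ g) x) ((fun t : ℝ => x + t • d) 0) := by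
      simpa [h0] using h3.hasFDerivAt
    exact h3'.comp_hasDerivAt 0 hL
  have happ : HasDerivAt (fun t : ℝ => fderiv ℝ g (x + t • d) d)
      (fderiv ℝ (fderiv ℝ g) x d d) 0 := by
    have := ((ContinuousLinearMap.apply ℝ ℝ d).hasFDerivAt).comp_hasDerivAt 0 hc
    exact this
  have heq : deriv (fun t : ℝ => g (x + t • d)) =ᶠ[𝓝 (0:ℝ)]
      fun t => fderiv ℝ g (x + t • d) d := by
    filter_upwards [hline] with t ht
    exact ht.deriv
  exact happ.congr_of_eventuallyEq heq

/-- One-sided comparison: any two classical solutions satisfy `u ≤ v` on `Ω`. -/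
private lemma solution_le {N : ℕ} (hN : 2 ≤ N) (Ω : Set (EuclideanSpace ℝ (Fin N)))
    (hΩo : IsOpen Ω) (hΩb : Bornology.IsBounded Ω)
    (lam : ℝ) (hlam : lam < 0) (f : ℝ → ℝ) (hfm : Monotone f)
    (u v : EuclideanSpace ℝ (Fin N) → ℝ)
    (hu : IsClassicalSolution Ω lam f u) (hv : IsClassicalSolution Ω lam f v) :
    ∀ x ∈ Ω, u x ≤ v x := by
  obtain ⟨huc, huC2, hueq, hub⟩ := hu
  obtain ⟨hvc, hvC2, hveq, hvb⟩ := hv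
  set w : EuclideanSpace ℝ (Fin N) → ℝ := fun y => u y - v y with hwdef
  have hwC2 : ContDiffOn ℝ 2 w Ω := huC2.sub hvC2
  have hwc : ContinuousOn w (closure Ω) := huc.sub hvc
  set U : Set (EuclideanSpace ℝ (Fin N)) := Ω ∩ w ⁻¹' (Ioi 0) with hUdef
  have hUo : IsOpen U := (hwc.mono subset_closure).isOpen_inter_preimage hΩo isOpen_Ioi
  have hclUΩ : closure U ⊆ closure Ω := closure_mono inter_subset_left
  obtain ⟨R, hR⟩ := hΩb.subset_closedBall 0
  have hclball : closure Ω ⊆ Metric.closedBall 0 R :=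
    closure_minimal hR Metric.isClosed_closedBall
  set M : ℝ := max (R ^ 2) 1 with hMdef
  have hM1 : (1:ℝ) ≤ M := le_max_right _ _
  have hM : ∀ y ∈ closure Ω, ‖y‖ ^ 2 ≤ M := by
    intro y hy
    have h1 : ‖y‖ ≤ R := by
      have := hclball hy
      rwa [Metric.mem_closedBall, dist_zero_right] at this
    have h2 : ‖y‖ ^ 2 ≤ R ^ 2 := pow_le_pow_left₀ (norm_nonneg y) h1 2
    exact le_trans h2 (le_max_left _ _)
  -- The Laplacian of w at points of Ω
  have hsum : ∀ x0 ∈ Ω, 0 < w x0 →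
      0 ≤ ∑ i : Fin N, fderiv ℝ (fderiv ℝ w) x0 (EuclideanSpace.single i 1)
        (EuclideanSpace.single i 1) := by
    intro x0 hx0 hwpos
    have hdu : DifferentiableAt ℝ (fderiv ℝ u) x0 :=
      ((huC2.contDiffAt (hΩo.mem_nhds hx0)).fderiv_right (m := 1) (by norm_num)).differentiableAt one_ne_zero
    have hdv : DifferentiableAt ℝ (fderiv ℝ v) x0 :=
      ((hvC2.contDiffAt (hΩo.mem_nhds hx0)).fderiv_right (m := 1) (by norm_num)).differentiableAt one_ne_zero
    have hev : fderiv ℝ w =ᶠ[𝓝 x0] fun y => fderiv ℝ u y - fderiv ℝ v y := by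
      filter_upwards [hΩo.mem_nhds hx0] with y hy
      exact fderiv_sub ((huC2.contDiffAt (hΩo.mem_nhds hy)).differentiableAt two_ne_zero)
        ((hvC2.contDiffAt (hΩo.mem_nhds hy)).differentiableAt two_ne_zero)
    have hfd2 : fderiv ℝ (fderiv ℝ w) x0 =
        fderiv ℝ (fderiv ℝ u) x0 - fderiv ℝ (fderiv ℝ v) x0 := by
      rw [hev.fderiv_eq]
      exact fderiv_sub hdu hdv
    have hlap : ∀ g : EuclideanSpace ℝ (Fin N) → ℝ, ContDiffOn ℝ 2 g Ω →
        laplacian g x0 = ∑ i : Fin N, fderiv ℝ (fderiv ℝ g) x0 (EuclideanSpace.single i 1)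
          (EuclideanSpace.single i 1) := by
      intro g hg
      unfold laplacian
      refine Finset.sum_congr rfl fun i _ => ?_
      rw [iteratedFDeriv_two_apply]
      simp
    have hvu : v x0 < u x0 := by simpa [hwdef, sub_pos] using hwpos
    have hfu : f (v x0) ≤ f (u x0) := hfm hvu.le
    have hulap : laplacian u x0 = -(lam * f (u x0)) := by
      have := hueq x0 hx0; linarith
    have hvlap : laplacian v x0 = -(lam * f (v x0)) := by
      have := hveq x0 hx0; linarith
    have hkey : ∑ i : Fin N, fderiv ℝ (fderiv ℝ w) x0 (EuclideanSpace.single i 1)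
        (EuclideanSpace.single i 1) = laplacian u x0 - laplacian v x0 := by
      rw [hlap u huC2, hlap v hvC2, ← Finset.sum_sub_distrib]
      refine Finset.sum_congr rfl fun i _ => ?_
      rw [hfd2]
      simp
    rw [hkey, hulap, hvlap]
    nlinarith
  -- main argument
  intro x hx
  by_contra hlt
  push_neg at hlt
  have hxU : x ∈ U := ⟨hx, by simpa [hwdef, sub_pos] using hlt⟩
  have hbound : ∀ ε : ℝ, 0 < ε → w x ≤ ε * M := by
    intro ε hε
    set h : EuclideanSpace ℝ (Fin N) → ℝ := fun y => w y + ε * ‖y‖ ^ 2 with hhdef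
    have hK : IsCompact (closure U) := (hΩb.subset inter_subset_left).isCompact_closure
    have hhcont : ContinuousOn h (closure U) :=
      (hwc.mono hclUΩ).add ((continuous_const.mul (continuous_norm.pow 2)).continuousOn)
    obtain ⟨x0, hx0cl, hx0max⟩ := hK.exists_isMaxOn ⟨x, subset_closure hxU⟩ hhcont
    by_cases hx0U : x0 ∈ U
    · exfalso
      have hx0Ω : x0 ∈ Ω := hx0U.1
      have hloc : IsLocalMax h x0 :=
        hx0max.isLocalMax (mem_of_superset (hUo.mem_nhds hx0U) subset_closure)
      have hdir : ∀ i : Fin N, fderiv ℝ (fderiv ℝ w) x0 (EuclideanSpace.single i 1)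
          (EuclideanSpace.single i 1) ≤ -(2 * ε) := by
        intro i
        set d : EuclideanSpace ℝ (Fin N) := EuclideanSpace.single i (1:ℝ) with hddef
        have hnd : ‖d‖ = 1 := by simp [hddef, EuclideanSpace.norm_single]
        set c : ℝ := 2 * (inner ℝ x0 d : ℝ) with hcdef
        have hexp : ∀ t : ℝ, ‖x0 + t • d‖ ^ 2 = ‖x0‖ ^ 2 + c * t + t ^ 2 := by
          intro t
          rw [norm_add_sq_real, real_inner_smul_right, norm_smul, hcdef]
          rw [mul_pow, Real.norm_eq_abs, sq_abs, hnd]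
          ring
        set φw : ℝ → ℝ := fun t => w (x0 + t • d) with hφwdef
        set φq : ℝ → ℝ := fun t => ε * ‖x0 + t • d‖ ^ 2 with hφqdef
        have hqder : ∀ t : ℝ, HasDerivAt φq (ε * (c + 2 * t)) t := by
          intro t
          have hpoly : HasDerivAt (fun s : ℝ => ε * (‖x0‖ ^ 2 + c * s + s ^ 2))
              (ε * (c + 2 * t)) t := by
            have h1 : HasDerivAt (fun s : ℝ => ‖x0‖ ^ 2 + c * s + s ^ 2) (c + 2 * t) t := by
              have : HasDerivAt (fun s : ℝ => ‖x0‖ ^ 2 + c * s + s ^ 2) _ t := ((hasDerivAt_const t (‖x0‖ ^ 2)).add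
                ((hasDerivAt_id t).const_mul c)).add (hasDerivAt_pow 2 t)
              convert this using 1
              ring
            exact h1.const_mul ε
          apply hpoly.congr_of_eventuallyEq
          filter_upwards with s
          rw [hφqdef]
          simp only [hexp s]
        have hqderiv : deriv φq = fun t => ε * (c + 2 * t) := by
          funext t; exact (hqder t).deriv
        have hq2 : HasDerivAt (deriv φq) (ε * 2) 0 := by
          rw [hqderiv]
          have : HasDerivAt (fun t : ℝ => c + 2 * t) 2 0 := by
            simpa using ((hasDerivAt_id (0:ℝ)).const_mul 2).const_add c
          simpa using this.const_mul ε
        have hwline := line_hasDerivAt hΩo hwC2 hx0Ω d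
        have hw2 := line_deriv2 hΩo hwC2 hx0Ω d
        have hdiffev : ∀ᶠ t in 𝓝 (0:ℝ), DifferentiableAt ℝ (fun t => φw t + φq t) t := by
          filter_upwards [hwline] with t ht
          exact ht.differentiableAt.add (hqder t).differentiableAt
        have hderiv_eq : deriv (fun t => φw t + φq t) =ᶠ[𝓝 (0:ℝ)]
            fun t => deriv φw t + deriv φq t := by
          filter_upwards [hwline] with t ht
          exact deriv_add ht.differentiableAt (hqder t).differentiableAt
        have hsum2 : HasDerivAt (fun t => deriv φw t + deriv φq t)
            (fderiv ℝ (fderiv ℝ w) x0 d d + ε * 2) 0 := hw2.add hq2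
        have hφ2 : HasDerivAt (deriv (fun t => φw t + φq t))
            (fderiv ℝ (fderiv ℝ w) x0 d d + ε * 2) 0 :=
          hsum2.congr_of_eventuallyEq hderiv_eq
        have hlocφ : IsLocalMax (fun t : ℝ => φw t + φq t) 0 := by
          have hLt : Tendsto (fun t : ℝ => x0 + t • d) (𝓝 0) (𝓝 x0) := by
            have hcont : Continuous fun t : ℝ => x0 + t • d :=
              continuous_const.add (continuous_id.smul continuous_const)
            have := hcont.tendsto 0
            simpa using this
          have hloc' : IsMaxFilter h (𝓝 x0) ((fun t : ℝ => x0 + t • d) 0) := by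
            simp only [zero_smul, add_zero]; exact hloc
          exact IsMaxFilter.comp_tendsto (f := h) (g := fun t : ℝ => x0 + t • d)
            (b := (0:ℝ)) hloc' hLt
        have := secondDerivTest hdiffev hφ2 hlocφ
        linarith
      have hsumle : (∑ i : Fin N, fderiv ℝ (fderiv ℝ w) x0 (EuclideanSpace.single i 1)
          (EuclideanSpace.single i 1)) ≤ (N : ℝ) * (-(2 * ε)) := by
        have h1 : (∑ i : Fin N, fderiv ℝ (fderiv ℝ w) x0 (EuclideanSpace.single i 1)
            (EuclideanSpace.single i 1)) ≤ ∑ _i : Fin N, (-(2 * ε)) :=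
          Finset.sum_le_sum fun i _ => hdir i
        simpa [Finset.sum_const, Finset.card_univ, mul_comm] using h1
      have hge := hsum x0 hx0Ω (by simpa [hwdef] using hx0U.2)
      have hN0 : (0:ℝ) < N := by positivity
      nlinarith
    · have hx0cl' : x0 ∈ closure Ω := hclUΩ hx0cl
      have hwx0 : w x0 ≤ 0 := by
        by_cases hx0Ω : x0 ∈ Ω
        · by_contra hpos
          push_neg at hpos
          exact hx0U ⟨hx0Ω, hpos⟩
        · have hfr : x0 ∈ frontier Ω := by
            rw [hΩo.frontier_eq]
            exact ⟨hx0cl', hx0Ω⟩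
          simp [hwdef, hub x0 hfr, hvb x0 hfr]
      have hle : w x + ε * ‖x‖ ^ 2 ≤ w x0 + ε * ‖x0‖ ^ 2 := hx0max (subset_closure hxU)
      have hMx0 := hM x0 hx0cl'
      have h1 : 0 ≤ ε * ‖x‖ ^ 2 := mul_nonneg hε.le (sq_nonneg _)
      have h2 : ε * ‖x0‖ ^ 2 ≤ ε * M := mul_le_mul_of_nonneg_left hMx0 hε.le
      linarith
  -- conclude w x ≤ 0
  have hwx : 0 < w x := by simpa [hwdef, sub_pos] using hlt
  have hM0 : (0:ℝ) < M := by linarith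
  have hb := hbound (w x / (2 * M)) (by positivity)
  have hhalf : w x / (2 * M) * M = w x / 2 := by
    field_simp
  rw [hhalf] at hb
  linarith

/-- Uniqueness: for `λ < 0` and `f` continuous and non-decreasing, any two classical
solutions of `(P_f^λ)` on `Ω` coincide on the closure of `Ω`. -/
theorem stmt_0 {N : ℕ} (hN : 2 ≤ N) (Ω : Set (EuclideanSpace ℝ (Fin N)))
    (hΩo : IsOpen Ω) (hΩb : Bornology.IsBounded Ω) (hΩne : Ω.Nonempty)
    (lam : ℝ) (hlam : lam < 0) (f : ℝ → ℝ) (hfc : Continuous f) (hfm : Monotone f)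
    (u v : EuclideanSpace ℝ (Fin N) → ℝ)
    (hu : IsClassicalSolution Ω lam f u) (hv : IsClassicalSolution Ω lam f v) :
    ∀ x ∈ closure Ω, u x = v x := by
  intro x hx
  by_cases hxΩ : x ∈ Ω
  · exact le_antisymm (solution_le hN Ω hΩo hΩb lam hlam f hfm u v hu hv x hxΩ)
      (solution_le hN Ω hΩo hΩb lam hlam f hfm v u hv hu x hxΩ)
  · have hfr : x ∈ frontier Ω := by
      rw [hΩo.frontier_eq]
      exact ⟨hx, hxΩ⟩
    rw [hu.2.2.2 x hfr, hv.2.2.2 x hfr]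
end

section
/- Let f satisfy condition (1.2) and assume t₀ ∈ (−∞, 0) is such that f(t) = 0 for every t ≤ t₀ and f(t) > 0 for every t > t₀. Suppose that for each λ < 0, u_λ is a classical solution of (P_f^λ) on Ω. Then u_λ converges to the constant t₀ uniformly on compact subsets of Ω as λ → −∞: for every compact set K ⊂ Ω and every ε > 0 there exists λ̄ < 0 such that sup_{x ∈ K} |u_λ(x) − t₀| < ε for all λ < λ̄. -/
open Set MeasureTheory Filter Topology

section Aux

variable {N : ℕ}

lemma quad_contDiff' (c : EuclideanSpace ℝ (Fin N)) :
    ContDiff ℝ 2 (fun y : EuclideanSpace ℝ (Fin N) => ‖y - c‖ ^ 2) :=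
  (contDiff_norm_sq ℝ).comp (contDiff_id.sub contDiff_const)

lemma quad_fderiv (c : EuclideanSpace ℝ (Fin N)) :
    fderiv ℝ (fun y : EuclideanSpace ℝ (Fin N) => ‖y - c‖ ^ 2)
      = fun y => (2 : ℝ) • (innerSL ℝ (y - c)) := by
  funext y
  have h : HasFDerivAt (fun y : EuclideanSpace ℝ (Fin N) => ‖y - c‖ ^ 2)
      ((2 : ℝ) • (innerSL ℝ (y - c))) y := by
    have h1 := (hasStrictFDerivAt_norm_sq (y - c)).hasFDerivAt
    have h2 : HasFDerivAt (fun y : EuclideanSpace ℝ (Fin N) => y - c)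
        (ContinuousLinearMap.id ℝ _) y := (hasFDerivAt_id y).sub_const c
    have := h1.comp y h2
    rw [ContinuousLinearMap.comp_id, two_smul ℕ] at this
    rw [two_smul ℝ]
    exact this
  exact h.fderiv

lemma quad_second (c : EuclideanSpace ℝ (Fin N)) (x v : EuclideanSpace ℝ (Fin N)) :
    iteratedFDeriv ℝ 2 (fun y : EuclideanSpace ℝ (Fin N) => ‖y - c‖ ^ 2) x ![v, v]
      = 2 * ‖v‖ ^ 2 := by
  rw [iteratedFDeriv_two_apply, quad_fderiv]
  have h : HasFDerivAt (fun y : EuclideanSpace ℝ (Fin N) => (2 : ℝ) • (innerSL ℝ (y - c)))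
      ((2 : ℝ) • (innerSL (𝕜 := ℝ) (E := EuclideanSpace ℝ (Fin N)))) x := by
    have h2 : HasFDerivAt (fun y : EuclideanSpace ℝ (Fin N) =>
        ((2 : ℝ) • (innerSL (𝕜 := ℝ))) y) ((2 : ℝ) • (innerSL (𝕜 := ℝ)))
        x := ContinuousLinearMap.hasFDerivAt _
    have h3 := h2.sub_const (((2 : ℝ) • (innerSL (𝕜 := ℝ)
        (E := EuclideanSpace ℝ (Fin N)))) c)
    refine h3.congr_of_eventuallyEq (Filter.Eventually.of_forall fun y => ?_)
    simp [smul_sub, map_sub]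
  rw [h.fderiv]
  simp only [Matrix.cons_val_zero, Matrix.cons_val_one, Matrix.head_cons,
    ContinuousLinearMap.smul_apply, innerSL_apply_apply, smul_eq_mul]
  change 2 * inner ℝ v v = _
  rw [real_inner_self_eq_norm_sq]

lemma laplacian_quad (a : ℝ) (c x : EuclideanSpace ℝ (Fin N)) :
    laplacian (fun y => a * ‖y - c‖ ^ 2) x = 2 * N * a := by
  unfold laplacian
  have key : ∀ i : Fin N, iteratedFDeriv ℝ 2 (fun y : EuclideanSpace ℝ (Fin N) =>
      a * ‖y - c‖ ^ 2) x ![EuclideanSpace.single i 1, EuclideanSpace.single i 1] = a * 2 := by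
    intro i
    have h1 : (fun y : EuclideanSpace ℝ (Fin N) => a * ‖y - c‖ ^ 2)
        = a • (fun y : EuclideanSpace ℝ (Fin N) => ‖y - c‖ ^ 2) := rfl
    rw [h1, iteratedFDeriv_const_smul_apply (quad_contDiff' c).contDiffAt]
    simp [quad_second, EuclideanSpace.norm_single]
  simp only [key, Finset.sum_const, Finset.card_univ, Fintype.card_fin, nsmul_eq_mul]
  ring

lemma laplacian_add {s : Set (EuclideanSpace ℝ (Fin N))} (hs : IsOpen s)
    {g h : EuclideanSpace ℝ (Fin N) → ℝ} (hg : ContDiffOn ℝ 2 g s)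
    (hh : ContDiffOn ℝ 2 h s) {x : EuclideanSpace ℝ (Fin N)} (hx : x ∈ s) :
    laplacian (fun y => g y + h y) x = laplacian g x + laplacian h x := by
  unfold laplacian
  rw [← Finset.sum_add_distrib]
  refine Finset.sum_congr rfl fun i _ => ?_
  rw [← iteratedFDerivWithin_of_isOpen 2 hs hx, ← iteratedFDerivWithin_of_isOpen 2 hs hx,
    ← iteratedFDerivWithin_of_isOpen 2 hs hx,
    iteratedFDerivWithin_add_apply' (hg x hx) (hh x hx) hs.uniqueDiffOn hx]
  simp

lemma laplacian_neg (g : EuclideanSpace ℝ (Fin N) → ℝ) (x : EuclideanSpace ℝ (Fin N)) :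
    laplacian (fun y => -g y) x = - laplacian g x := by
  unfold laplacian
  rw [← Finset.sum_neg_distrib]
  refine Finset.sum_congr rfl fun i _ => ?_
  have : (fun y => -g y) = -g := rfl
  rw [this, iteratedFDeriv_neg_apply]
  simp

lemma second_deriv_nonpos_of_localMax {s : Set (EuclideanSpace ℝ (Fin N))} (hs : IsOpen s)
    {g : EuclideanSpace ℝ (Fin N) → ℝ} {x : EuclideanSpace ℝ (Fin N)}
    (hg : ContDiffOn ℝ 2 g s) (hx : x ∈ s) (hmax : IsLocalMax g x)
    (v : EuclideanSpace ℝ (Fin N)) :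
    iteratedFDeriv ℝ 2 g x ![v, v] ≤ 0 := by
  by_contra hc
  push_neg at hc
  rw [iteratedFDeriv_two_apply] at hc
  simp only [Matrix.cons_val_zero, Matrix.cons_val_one, Matrix.head_cons] at hc
  set φ : ℝ → EuclideanSpace ℝ (Fin N) := fun t => x + t • v with hφdef
  have hφcont : Continuous φ := by fun_prop
  have hφd : ∀ t : ℝ, HasDerivAt φ v t := by
    intro t
    simpa [hφdef] using ((hasDerivAt_id t).smul_const v).const_add x
  set T : Set ℝ := φ ⁻¹' s with hT
  have hTo : IsOpen T := hs.preimage hφcont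
  have h0T : (0 : ℝ) ∈ T := by simp [hT, hφdef, hx]
  set G : ℝ → ℝ := fun t => fderiv ℝ g (φ t) v with hG
  set H : ℝ → ℝ := fun t => fderiv ℝ (fderiv ℝ g) (φ t) v v with hH
  have hgd : DifferentiableOn ℝ g s := hg.differentiableOn (by norm_num)
  have hfd1 : ContDiffOn ℝ 1 (fderiv ℝ g) s := hg.fderiv_of_isOpen hs (by norm_num)
  have hfd1' : DifferentiableOn ℝ (fderiv ℝ g) s := hfd1.differentiableOn (by norm_num)
  have hgφ : ∀ t ∈ T, HasDerivAt (fun t => g (φ t)) (G t) t := by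
    intro t ht
    have h1 : DifferentiableAt ℝ g (φ t) := hgd.differentiableAt (hs.mem_nhds ht)
    exact h1.hasFDerivAt.comp_hasDerivAt t (hφd t)
  have hGd : ∀ t ∈ T, HasDerivAt G (H t) t := by
    intro t ht
    have h1 : DifferentiableAt ℝ (fderiv ℝ g) (φ t) := hfd1'.differentiableAt (hs.mem_nhds ht)
    have h2 : HasDerivAt (fun t => fderiv ℝ g (φ t)) (fderiv ℝ (fderiv ℝ g) (φ t) v) t :=
      h1.hasFDerivAt.comp_hasDerivAt t (hφd t)
    have h3 := (ContinuousLinearMap.apply ℝ ℝ v).hasFDerivAt.comp_hasDerivAt t h2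
    exact h3
  have hGc : ContinuousOn G T :=
    (hfd1.continuousOn.comp hφcont.continuousOn (fun t ht => ht)).clm_apply continuousOn_const
  have hHc : ContinuousOn H T := by
    have h2 : ContinuousOn (fderiv ℝ (fderiv ℝ g)) s :=
      hfd1.continuousOn_fderiv_of_isOpen hs (by norm_num)
    have h3 : ContinuousOn (fun t => fderiv ℝ (fderiv ℝ g) (φ t)) T :=
      h2.comp hφcont.continuousOn (fun t ht => ht)
    exact (h3.clm_apply continuousOn_const).clm_apply continuousOn_const
  have hH0 : 0 < H 0 := by simpa [hH, hφdef] using hc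
  have hev : ∀ᶠ t in 𝓝 (0:ℝ), t ∈ T ∧ 0 < H t := by
    have h1 : ∀ᶠ t in 𝓝 (0:ℝ), t ∈ T := hTo.mem_nhds h0T
    have h2 : ContinuousAt H 0 := (hHc.continuousAt (hTo.mem_nhds h0T))
    have h3 : ∀ᶠ t in 𝓝 (0:ℝ), 0 < H t := h2 (Ioi_mem_nhds hH0)
    exact h1.and h3
  obtain ⟨δ, hδpos, hδ⟩ := Metric.eventually_nhds_iff_ball.mp hev
  have hIcc : ∀ t ∈ Icc (0:ℝ) (δ/2), t ∈ T ∧ 0 < H t := by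
    intro t ht
    apply hδ
    rw [Metric.mem_ball, Real.dist_eq, sub_zero, abs_of_nonneg ht.1]
    linarith [ht.2]
  have hG0 : G 0 = 0 := by
    have := hmax.fderiv_eq_zero
    simp [hG, hφdef, this]
  have hGmono : StrictMonoOn G (Icc 0 (δ/2)) := by
    apply strictMonoOn_of_deriv_pos (convex_Icc _ _)
    · exact hGc.mono (fun t ht => (hIcc t ht).1)
    · intro t ht
      rw [interior_Icc] at ht
      have ht' : t ∈ Icc (0:ℝ) (δ/2) := ⟨le_of_lt ht.1, le_of_lt ht.2⟩
      rw [(hGd t (hIcc t ht').1).deriv]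
      exact (hIcc t ht').2
  have hgmono : StrictMonoOn (fun t => g (φ t)) (Icc 0 (δ/2)) := by
    apply strictMonoOn_of_deriv_pos (convex_Icc _ _)
    · intro t ht
      exact ((hgφ t (hIcc t ht).1).continuousAt).continuousWithinAt
    · intro t ht
      rw [interior_Icc] at ht
      have ht' : t ∈ Icc (0:ℝ) (δ/2) := ⟨le_of_lt ht.1, le_of_lt ht.2⟩
      rw [(hgφ t (hIcc t ht').1).deriv]
      have := hGmono (left_mem_Icc.mpr (by linarith)) ht' ht.1
      rw [hG0] at this
      exact this
  have hpull : ∀ᶠ t in 𝓝 (0:ℝ), g (φ t) ≤ g x := by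
    have : Tendsto φ (𝓝 0) (𝓝 x) := by
      have := hφcont.tendsto 0
      simpa [hφdef] using this
    exact this.eventually hmax
  have hpull' : ∀ᶠ t in 𝓝[>] (0:ℝ), g (φ t) ≤ g x ∧ t < δ/2 :=
    (eventually_nhdsWithin_of_eventually_nhds hpull).and
      (eventually_nhdsWithin_of_eventually_nhds
        (Filter.Tendsto.eventually_lt_const (by linarith) tendsto_id))
  obtain ⟨t, ht, htpos⟩ := (hpull'.and self_mem_nhdsWithin).exists
  have htm : t ∈ Icc (0:ℝ) (δ/2) := ⟨le_of_lt htpos, le_of_lt ht.2⟩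
  have h0m : (0:ℝ) ∈ Icc (0:ℝ) (δ/2) := left_mem_Icc.mpr (by linarith)
  have hlt := hgmono h0m htm htpos
  simp only [hφdef] at hlt
  simp only [zero_smul, add_zero] at hlt
  exact absurd ht.1 (not_le.mpr hlt)

lemma maxPrinciple (hN : 1 ≤ N) {s : Set (EuclideanSpace ℝ (Fin N))} (hso : IsOpen s)
    (hsb : Bornology.IsBounded s) {w : EuclideanSpace ℝ (Fin N) → ℝ}
    (hwc : ContinuousOn w (closure s)) (hw2 : ContDiffOn ℝ 2 w s)
    (hsub : ∀ x ∈ s, 0 ≤ laplacian w x) {M : ℝ}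
    (hM : ∀ y ∈ frontier s, w y ≤ M) :
    ∀ x ∈ closure s, w x ≤ M := by
  intro x hxcl
  obtain ⟨R, hR⟩ := (hsb.closure).subset_closedBall 0
  have hRnn : 0 ≤ R := by
    have := hR hxcl
    have := Metric.mem_closedBall.mp this
    nlinarith [dist_nonneg (x := x) (y := 0)]
  have key : ∀ δ : ℝ, 0 < δ → w x ≤ M + δ * R ^ 2 := by
    intro δ hδ
    set q : EuclideanSpace ℝ (Fin N) → ℝ := fun y => δ * ‖y - 0‖ ^ 2 with hq
    set wδ : EuclideanSpace ℝ (Fin N) → ℝ := fun y => w y + q y with hwδ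
    have hqc : ContDiff ℝ 2 q := (contDiff_const.mul (quad_contDiff' 0))
    have hwδc : ContinuousOn wδ (closure s) := hwc.add (hqc.continuous.continuousOn)
    have hcpt : IsCompact (closure s) := hsb.isCompact_closure
    obtain ⟨z, hzcl, hzmax⟩ := hcpt.exists_isMaxOn ⟨x, hxcl⟩ hwδc
    have hzcase : z ∈ s ∨ z ∈ frontier s := by
      rcases (closure_eq_interior_union_frontier s ▸ hzcl) with h | h
      · exact Or.inl (by rwa [hso.interior_eq] at h)
      · exact Or.inr h
    rcases hzcase with hz | hz
    · exfalso
      have hloc : IsLocalMax wδ z :=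
        hzmax.isLocalMax (mem_of_superset (hso.mem_nhds hz) subset_closure)
      have hwδ2 : ContDiffOn ℝ 2 wδ s := hw2.add (hqc.contDiffOn)
      have hsum : laplacian wδ z ≤ 0 := by
        unfold laplacian
        apply Finset.sum_nonpos
        intro i _
        exact second_deriv_nonpos_of_localMax hso hwδ2 hz hloc _
      have heq : laplacian wδ z = laplacian w z + 2 * N * δ := by
        have := laplacian_add hso hw2 hqc.contDiffOn (x := z) hz
        rw [this, laplacian_quad]
      have hNpos : (0:ℝ) < 2 * N * δ := by
        have : (1:ℝ) ≤ N := by exact_mod_cast hN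
        nlinarith
      have := hsub z hz
      linarith [heq ▸ hsum]
    · have h1 : wδ x ≤ wδ z := hzmax hxcl
      have h2 : wδ z ≤ M + δ * R ^ 2 := by
        have hzR : ‖z - 0‖ ≤ R := by
          have := hR (frontier_subset_closure hz)
          simpa [Metric.mem_closedBall, dist_eq_norm] using this
        have : q z ≤ δ * R ^ 2 := by
          have h3 : ‖z - 0‖ ^ 2 ≤ R ^ 2 := by nlinarith [norm_nonneg (z - 0)]
          exact mul_le_mul_of_nonneg_left h3 (le_of_lt hδ)
        have := hM z hz
        simp only [hwδ]
        linarith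
      have h3 : 0 ≤ q x := by positivity
      simp only [hwδ] at h1 h2
      linarith
  by_contra hcon
  push_neg at hcon
  obtain ⟨δ, hδpos, hδlt⟩ : ∃ δ : ℝ, 0 < δ ∧ δ * R ^ 2 < w x - M := by
    refine ⟨(w x - M) / (2 * (R ^ 2 + 1)), div_pos (by linarith) (by positivity), ?_⟩
    rw [div_mul_eq_mul_div, div_lt_iff₀ (by positivity)]
    nlinarith [sq_nonneg R]
  linarith [key δ hδpos]

end Aux

/-- Theorem 1.1 (case `t₀ ∈ ℝ`): the solutions `u_λ` converge to the constant `t₀`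
uniformly on compact subsets of `Ω` as `λ → -∞`. -/
theorem stmt_4 {N : ℕ} (hN : 2 ≤ N) (Ω : Set (EuclideanSpace ℝ (Fin N)))
    (hΩo : IsOpen Ω) (hΩb : Bornology.IsBounded Ω) (hΩne : Ω.Nonempty)
    (f : ℝ → ℝ) (hf : Cond12 f)
    (t₀ : ℝ) (ht₀ : t₀ < 0) (hf0 : ∀ t ≤ t₀, f t = 0) (hfpos : ∀ t, t₀ < t → 0 < f t)
    (u : ℝ → EuclideanSpace ℝ (Fin N) → ℝ)
    (hu : ∀ lam < (0:ℝ), IsClassicalSolution Ω lam f (u lam)) :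
    ∀ K ⊆ Ω, IsCompact K → ∀ ε > 0, ∃ lb < (0:ℝ), ∀ lam < lb, ∀ x ∈ K,
      |u lam x - t₀| < ε := by
  obtain ⟨hfc, hfmono, hfnn, hf0pos⟩ := hf
  have hN1 : 1 ≤ N := le_trans (by norm_num) hN
  have hNR : (1:ℝ) ≤ N := by exact_mod_cast hN1
  -- Negativity: every solution is ≤ 0 on closure Ω
  have hle0 : ∀ lam < (0:ℝ), ∀ x ∈ closure Ω, u lam x ≤ 0 := by
    intro lam hlam
    obtain ⟨hc, h2, heq, hbd⟩ := hu lam hlam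
    refine maxPrinciple hN1 hΩo hΩb hc h2 ?_ ?_
    · intro x hx
      have := heq x hx
      have hlap : laplacian (u lam) x = -lam * f (u lam x) := by linarith
      rw [hlap]
      have := hfnn (u lam x)
      nlinarith
    · intro y hy
      rw [hbd y hy]
  -- Lower bound: every solution is ≥ t₀ on Ω
  have hget : ∀ lam < (0:ℝ), ∀ x ∈ Ω, t₀ ≤ u lam x := by
    intro lam hlam
    obtain ⟨hc, h2, heq, hbd⟩ := hu lam hlam
    set B : Set (EuclideanSpace ℝ (Fin N)) := Ω ∩ (u lam) ⁻¹' (Iio t₀) with hB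
    have hBo : IsOpen B :=
      ContinuousOn.isOpen_inter_preimage (hc.mono subset_closure) hΩo isOpen_Iio
    have hBsub : B ⊆ Ω := inter_subset_left
    have hclB : closure B ⊆ closure Ω := closure_mono hBsub
    have hBle : ∀ y ∈ closure B, u lam y ≤ t₀ := by
      intro y hy
      have hclosed : IsClosed ((closure Ω) ∩ (u lam) ⁻¹' (Iic t₀)) :=
        ContinuousOn.preimage_isClosed_of_isClosed hc isClosed_closure isClosed_Iic
      have hsub2 : B ⊆ (closure Ω) ∩ (u lam) ⁻¹' (Iic t₀) := by
        rintro z ⟨hz1, hz2⟩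
        refine ⟨subset_closure hz1, ?_⟩
        show u lam z ≤ t₀
        exact le_of_lt hz2
      exact (closure_minimal hsub2 hclosed hy).2
    have hkey : ∀ y ∈ closure B, -(u lam y) ≤ -t₀ := by
      apply maxPrinciple hN1 hBo (hΩb.subset hBsub)
      · exact (hc.mono hclB).neg
      · exact (h2.mono hBsub).neg
      · intro y hy
        have hy' : y ∈ Ω := hBsub hy
        have hval : f (u lam y) = 0 := hf0 _ (le_of_lt hy.2)
        have := heq y hy'
        have hlap0 : laplacian (fun z => -(u lam z)) y = 0 := by
          rw [laplacian_neg]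
          have : laplacian (u lam) y = -lam * f (u lam y) := by linarith
          rw [this, hval]; ring
        rw [hlap0]
      · intro y hy
        have hy1 : y ∈ closure B := frontier_subset_closure hy
        have hy2 : u lam y ≤ t₀ := hBle y hy1
        have hynB : y ∉ B := by
          rw [hBo.frontier_eq] at hy
          exact hy.2
        rcases (closure_eq_interior_union_frontier Ω ▸ hclB hy1) with hyΩ | hyf
        · rw [hΩo.interior_eq] at hyΩ
          have : ¬ (u lam y < t₀) := fun hlt => hynB ⟨hyΩ, hlt⟩
          linarith [not_lt.mp this]
        · have := hbd y hyf
          linarith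
    intro x hx
    by_contra hcon
    push_neg at hcon
    have hxB : x ∈ B := ⟨hx, hcon⟩
    have := hkey x (subset_closure hxB)
    linarith
  -- Main argument
  intro K hK hKc ε hε
  obtain ⟨δ, hδpos, hδsub⟩ := hKc.exists_cthickening_subset_open hΩo hK
  have hball : ∀ x ∈ K, Metric.closedBall x δ ⊆ Ω := fun x hx =>
    subset_trans (Metric.closedBall_subset_cthickening hx δ) hδsub
  set c : ℝ := f (t₀ + ε/2) with hc
  have hcpos : 0 < c := hfpos _ (by linarith)
  set P : ℝ := c * δ ^ 2 / (2 * N) with hP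
  have hPpos : 0 < P := by
    apply div_pos (by positivity)
    positivity
  refine ⟨min (-1) ((t₀ + ε/2) / P), lt_of_le_of_lt (min_le_left _ _) (by norm_num), ?_⟩
  intro lam hlam x₀ hx₀
  have hlam0 : lam < 0 := lt_of_lt_of_le hlam (le_trans (min_le_left _ _) (by norm_num))
  have hlamP : lam * P < t₀ + ε/2 := by
    have h1 : lam < (t₀ + ε/2) / P := lt_of_lt_of_le hlam (min_le_right _ _)
    calc lam * P < ((t₀ + ε/2) / P) * P := by
          exact mul_lt_mul_of_pos_right h1 hPpos
      _ = t₀ + ε/2 := div_mul_cancel₀ _ (ne_of_gt hPpos)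
  obtain ⟨hc', h2', heq', hbd'⟩ := hu lam hlam0
  have hx₀Ω : x₀ ∈ Ω := hK hx₀
  -- claim: u lam x₀ ≤ t₀ + ε/2
  have hupper : u lam x₀ ≤ t₀ + ε/2 := by
    by_contra hcon
    push_neg at hcon
    set A : Set (EuclideanSpace ℝ (Fin N)) :=
      (Metric.ball x₀ δ) ∩ (u lam) ⁻¹' (Ioi (t₀ + ε/2)) with hA
    have hAΩ : A ⊆ Ω := fun y hy =>
      hball x₀ hx₀ (Metric.ball_subset_closedBall hy.1)
    have hAo : IsOpen A := ContinuousOn.isOpen_inter_preimage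
      ((hc'.mono subset_closure).mono (fun y hy => hball x₀ hx₀
        (Metric.ball_subset_closedBall hy))) Metric.isOpen_ball isOpen_Ioi
    have hclA : closure A ⊆ Metric.closedBall x₀ δ :=
      subset_trans (closure_mono inter_subset_left) Metric.closure_ball_subset_closedBall
    have hclAΩ : closure A ⊆ Ω := subset_trans hclA (hball x₀ hx₀)
    set a : ℝ := (-lam) * c / (2 * N) with ha
    have hapos : 0 < a := by
      apply div_pos (by nlinarith)
      positivity
    set w : EuclideanSpace ℝ (Fin N) → ℝ := fun y => u lam y + (-a) * ‖y - x₀‖ ^ 2 with hw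
    have hqc2 : ContDiff ℝ 2 (fun y : EuclideanSpace ℝ (Fin N) => (-a) * ‖y - x₀‖ ^ 2) :=
      contDiff_const.mul (quad_contDiff' x₀)
    have hwle : ∀ y ∈ closure A, w y ≤ t₀ + ε/2 := by
      apply maxPrinciple hN1 hAo (hΩb.subset hAΩ)
      · exact (hc'.mono (subset_trans hclAΩ subset_closure)).add
          hqc2.continuous.continuousOn
      · exact (h2'.mono hAΩ).add hqc2.contDiffOn
      · intro y hy
        have hyΩ : y ∈ Ω := hAΩ hy
        have hlapw : laplacian w y = laplacian (u lam) y + 2 * N * (-a) := by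
          rw [laplacian_add hAo (h2'.mono hAΩ) hqc2.contDiffOn hy, laplacian_quad]
        have hlapu : laplacian (u lam) y = -lam * f (u lam y) := by
          have := heq' y hyΩ
          linarith
        have hfy : c ≤ f (u lam y) := hfmono (le_of_lt hy.2)
        have h2Na : 2 * N * a = (-lam) * c := by
          rw [ha]
          field_simp
        rw [hlapw, hlapu]
        nlinarith
      · intro y hy
        have hy1 : y ∈ closure A := frontier_subset_closure hy
        have hyball : y ∈ Metric.closedBall x₀ δ := hclA hy1
        have hyΩ : y ∈ Ω := hball x₀ hx₀ hyball
        have hynA : y ∉ A := by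
          rw [hAo.frontier_eq] at hy
          exact hy.2
        by_cases hyb : y ∈ Metric.ball x₀ δ
        · -- interior of ball: u lam y ≤ t₀ + ε/2
          have : ¬ (t₀ + ε/2 < u lam y) := fun hlt => hynA ⟨hyb, hlt⟩
          have h4 : u lam y ≤ t₀ + ε/2 := not_lt.mp this
          have h5 : (-a) * ‖y - x₀‖ ^ 2 ≤ 0 := by nlinarith [sq_nonneg ‖y - x₀‖]
          simp only [hw]
          linarith
        · -- on the sphere: ‖y - x₀‖ = δ
          have hdist : dist y x₀ = δ := by
            have h4 := Metric.mem_closedBall.mp hyball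
            have h5 : ¬ (dist y x₀ < δ) := fun h => hyb (Metric.mem_ball.mpr h)
            linarith [not_lt.mp h5]
          have hnorm : ‖y - x₀‖ = δ := by rwa [← dist_eq_norm]
          have hu0 : u lam y ≤ 0 := hle0 lam hlam0 y (subset_closure hyΩ)
          have haP : a * δ ^ 2 = (-lam) * P := by
            rw [ha, hP]
            field_simp
          simp only [hw, hnorm]
          have : (-a) * δ ^ 2 = lam * P := by rw [neg_mul]; rw [haP]; ring
          rw [this]
          linarith
    have := hwle x₀ (subset_closure ⟨Metric.mem_ball_self hδpos, hcon⟩)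
    simp only [hw, sub_self, norm_zero] at this
    have h0 : (0:ℝ) ^ 2 = 0 := by norm_num
    rw [h0, mul_zero, add_zero] at this
    linarith
  have hlower : t₀ ≤ u lam x₀ := hget lam hlam0 x₀ hx₀Ω
  rw [abs_lt]
  constructor <;> linarith
end

section
/- Let f satisfy condition (1.2) and assume additionally f(t) > 0 for every t ∈ ℝ. Suppose that for each λ < 0, u_λ is a classical solution of (P_f^λ) on Ω. Then u_λ → −∞ uniformly on compact subsets of Ω as λ → −∞: for every compact set K ⊂ Ω and every M > 0 there exists λ̄ < 0 such that u_λ(x) ≤ −M for all x ∈ K and all λ < λ̄. -/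
open Set MeasureTheory Filter Topology

/-- One-dimensional second derivative test at a local maximum. -/
lemma second_deriv_test {φ ψ : ℝ → ℝ} {D : ℝ}
    (hφ : ∀ᶠ t in 𝓝 (0:ℝ), HasDerivAt φ (ψ t) t)
    (hψ : HasDerivAt ψ D 0) (hmax : IsLocalMax φ 0) : D ≤ 0 := by
  by_contra hD
  push_neg at hD
  have hψ0 : ψ 0 = 0 := by
    have h0 := hφ.self_of_nhds
    have h1 := hmax.deriv_eq_zero
    rwa [h0.deriv] at h1
  have hslope : Tendsto (slope ψ 0) (𝓝[≠] (0:ℝ)) (𝓝 D) :=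
    hasDerivAt_iff_tendsto_slope.mp hψ
  have hpos : ∀ᶠ t in 𝓝[>] (0:ℝ), 0 < slope ψ 0 t := by
    have hmono : 𝓝[>] (0:ℝ) ≤ 𝓝[≠] (0:ℝ) :=
      nhdsWithin_mono _ (fun x hx => ne_of_gt hx)
    exact (hslope.mono_left hmono).eventually (eventually_gt_nhds hD)
  obtain ⟨ε, hε, hIoo⟩ := mem_nhdsGT_iff_exists_Ioo_subset.mp hpos
  obtain ⟨ε₂, hε₂, h₂⟩ := Metric.eventually_nhds_iff.mp (hφ.and hmax)
  set m := min ε ε₂ / 2 with hm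
  have hε' : (0:ℝ) < ε := hε
  have hm0 : 0 < m := by positivity
  have hmε : m < ε := by
    have : min ε ε₂ ≤ ε := min_le_left _ _
    simp only [hm]; linarith
  have hmε₂ : m < ε₂ := by
    have : min ε ε₂ ≤ ε₂ := min_le_right _ _
    simp only [hm]; linarith
  have hball : ∀ t : ℝ, t ∈ Icc (0:ℝ) m → HasDerivAt φ (ψ t) t ∧ φ t ≤ φ 0 := by
    intro t ht
    refine h₂ ?_
    rw [Real.dist_eq, sub_zero, abs_of_nonneg ht.1]
    exact lt_of_le_of_lt ht.2 hmε₂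
  have hsm : StrictMonoOn φ (Icc (0:ℝ) m) := by
    refine strictMonoOn_of_deriv_pos (convex_Icc _ _) ?_ ?_
    · intro t ht
      exact ((hball t ht).1).continuousAt.continuousWithinAt
    · intro t ht
      rw [interior_Icc] at ht
      have htε : t ∈ Ioo (0:ℝ) ε := ⟨ht.1, lt_trans ht.2 hmε⟩
      have hs : 0 < slope ψ 0 t := hIoo htε
      rw [slope_def_field, hψ0, sub_zero, sub_zero] at hs
      have hψt : 0 < ψ t := by
        rcases div_pos_iff.mp hs with ⟨h1, _⟩ | ⟨_, h2⟩
        · exact h1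
        · linarith [ht.1]
      rw [((hball t ⟨ht.1.le, ht.2.le⟩).1).deriv]
      exact hψt
  have hlt : φ 0 < φ m :=
    hsm (by constructor <;> [rfl; exact hm0.le]) ⟨hm0.le, le_rfl⟩ hm0
  have := (hball m ⟨hm0.le, le_rfl⟩).2
  linarith

open scoped RealInnerProductSpace in
/-- Second directional derivative bound at a local max of `u - c‖·-x₀‖²`. -/
lemma dir_second_deriv {N : ℕ} {Ω : Set (EuclideanSpace ℝ (Fin N))} (hΩo : IsOpen Ω)
    {u : EuclideanSpace ℝ (Fin N) → ℝ} (hC2 : ContDiffOn ℝ 2 u Ω)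
    {z x₀ : EuclideanSpace ℝ (Fin N)} (hz : z ∈ Ω) {c : ℝ}
    (hmax : IsLocalMax (fun w => u w - c * ‖w - x₀‖ ^ 2) z)
    (e : EuclideanSpace ℝ (Fin N)) (he : ‖e‖ = 1) :
    fderiv ℝ (fderiv ℝ u) z e e ≤ 2 * c := by
  set A : ℝ := ‖z - x₀‖ ^ 2 with hA
  set B : ℝ := 2 * ⟪z - x₀, e⟫ with hB
  have key : ∀ t : ℝ, ‖(z + t • e) - x₀‖ ^ 2 = A + B * t + t ^ 2 := by
    intro t
    have h1 : (z + t • e) - x₀ = (z - x₀) + t • e := by abel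
    rw [h1, norm_add_sq_real, real_inner_smul_right, norm_smul, Real.norm_eq_abs,
      he, mul_one, sq_abs, hA, hB]
    ring
  have hline : ∀ t : ℝ, HasDerivAt (fun s : ℝ => z + s • e) e t := by
    intro t
    have := ((hasDerivAt_id t).smul_const e).const_add z
    simpa using this
  have hlinec : Continuous (fun t : ℝ => z + t • e) := by
    exact continuous_const.add (continuous_id.smul continuous_const)
  have hL0 : (fun t : ℝ => z + t • e) 0 = z := by simp
  have htend : Tendsto (fun t : ℝ => z + t • e) (𝓝 0) (𝓝 z) := by
    have h := hlinec.continuousAt (x := (0:ℝ))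
    unfold ContinuousAt at h
    simpa using h
  have hmemΩ : ∀ᶠ t in 𝓝 (0:ℝ), z + t • e ∈ Ω :=
    htend.eventually (hΩo.eventually_mem hz)
  -- the function along the line and its derivative
  have hφψ : ∀ᶠ t in 𝓝 (0:ℝ),
      HasDerivAt (fun s : ℝ => u (z + s • e) - c * (A + B * s + s ^ 2))
        (fderiv ℝ u (z + t • e) e - c * (B + 2 * t)) t := by
    filter_upwards [hmemΩ] with t htΩ
    have hud : DifferentiableAt ℝ u (z + t • e) :=
      (hC2.contDiffAt (hΩo.mem_nhds htΩ)).differentiableAt (by norm_num)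
    have h1 : HasDerivAt (fun s : ℝ => u (z + s • e)) (fderiv ℝ u (z + t • e) e) t :=
      hud.hasFDerivAt.comp_hasDerivAt t (hline t)
    have hp : HasDerivAt (fun s : ℝ => A + B * s + s ^ 2) (B + 2 * t) t := by
      have h := ((hasDerivAt_const t A).add
        (HasDerivAt.const_mul B (hasDerivAt_id t))).add (hasDerivAt_pow 2 t)
      simp at h; exact h
    exact h1.sub (HasDerivAt.const_mul c hp)
  -- derivative of the derivative at 0
  have hCAt : ContDiffAt ℝ 2 u z := hC2.contDiffAt (hΩo.mem_nhds hz)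
  have hF1 : ContDiffAt ℝ 1 (fderiv ℝ u) z := hCAt.fderiv_right (by norm_num)
  have hFd : DifferentiableAt ℝ (fderiv ℝ u) z := hF1.differentiableAt one_ne_zero
  have hF : HasFDerivAt (fun w => fderiv ℝ u w e)
      ((ContinuousLinearMap.apply ℝ ℝ e).comp (fderiv ℝ (fderiv ℝ u) z)) z :=
    (ContinuousLinearMap.apply ℝ ℝ e).hasFDerivAt.comp z hFd.hasFDerivAt
  have h3 : HasDerivAt (fun s : ℝ => fderiv ℝ u (z + s • e) e)
      (fderiv ℝ (fderiv ℝ u) z e e) 0 := by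
    have h := hF.comp_hasDerivAt_of_eq 0 (hline 0) hL0.symm
    simp at h; exact h
  have h4 : HasDerivAt (fun s : ℝ => c * (B + 2 * s)) (2 * c) 0 := by
    have h := HasDerivAt.const_mul c
      ((hasDerivAt_const (0:ℝ) B).add (HasDerivAt.const_mul 2 (hasDerivAt_id (0:ℝ))))
    simp at h; rw [mul_comm 2 c]; exact h
  have hψD : HasDerivAt (fun t : ℝ => fderiv ℝ u (z + t • e) e - c * (B + 2 * t))
      (fderiv ℝ (fderiv ℝ u) z e e - 2 * c) 0 := h3.sub h4
  -- local max along the line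
  have hmaxφ : IsLocalMax (fun s : ℝ => u (z + s • e) - c * (A + B * s + s ^ 2)) 0 := by
    have hev := htend.eventually hmax
    filter_upwards [hev] with t ht
    simp only [← key]
    simpa [key 0] using ht
  have := second_deriv_test hφψ hψD hmaxφ
  linarith

/-- Theorem 1.1 (case `t₀ = -∞`): if `f > 0` everywhere then the solutions `u_λ` tend to
`-∞` uniformly on compact subsets of `Ω` as `λ → -∞`. -/
theorem stmt_5 {N : ℕ} (hN : 2 ≤ N) (Ω : Set (EuclideanSpace ℝ (Fin N)))
    (hΩo : IsOpen Ω) (hΩb : Bornology.IsBounded Ω) (hΩne : Ω.Nonempty)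
    (f : ℝ → ℝ) (hf : Cond12 f) (hfpos : ∀ t, 0 < f t)
    (u : ℝ → EuclideanSpace ℝ (Fin N) → ℝ)
    (hu : ∀ lam < (0:ℝ), IsClassicalSolution Ω lam f (u lam)) :
    ∀ K ⊆ Ω, IsCompact K → ∀ M > (0:ℝ), ∃ lb < (0:ℝ), ∀ lam < lb, ∀ x ∈ K,
      u lam x ≤ -M := by
  intro K hKΩ hK M hM
  obtain ⟨δ, hδ, hthick⟩ := hK.exists_thickening_subset_open hΩo hKΩ
  set c₀ : ℝ := f (-M - 1) with hc₀def
  have hc₀ : 0 < c₀ := hfpos _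
  have hNR : (0:ℝ) < N := by
    have : (2:ℝ) ≤ N := by exact_mod_cast hN
    linarith
  have hlbneg : -(4 * (N:ℝ) * (M + 1)) / (c₀ * δ ^ 2) < 0 := by
    rw [neg_div]
    have : (0:ℝ) < 4 * (N:ℝ) * (M + 1) / (c₀ * δ ^ 2) := by positivity
    linarith
  refine ⟨-(4 * N * (M + 1)) / (c₀ * δ ^ 2), hlbneg, ?_⟩
  intro lam hlam x₀ hx₀
  rw [neg_div] at hlam
  by_contra hcon
  push_neg at hcon
  have hlam0 : lam < 0 := by
    rw [neg_div] at hlbneg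
    linarith
  obtain ⟨hcont, hC2, hpde, hbd⟩ := hu lam hlam0
  have hlamM : 4 * N * (M + 1) < (-lam) * (c₀ * δ ^ 2) := by
    have h := (div_lt_iff₀ (by positivity : (0:ℝ) < c₀ * δ ^ 2)).mp
      (by linarith : 4 * N * (M + 1) / (c₀ * δ ^ 2) < -lam)
    linarith
  set a : ℝ := u lam x₀ with ha
  set c : ℝ := (-lam) * c₀ / (4 * N) with hc_def
  have hc : 0 < c := by
    have : 0 < -lam := by nlinarith
    positivity
  set g : EuclideanSpace ℝ (Fin N) → ℝ := fun w => u lam w - c * ‖w - x₀‖ ^ 2 with hg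
  set V : Set (EuclideanSpace ℝ (Fin N)) := Ω ∩ (u lam) ⁻¹' (Ioi (a - 1)) with hV
  have hVsub : V ⊆ Ω := inter_subset_left
  have hVopen : IsOpen V :=
    hC2.continuousOn.isOpen_inter_preimage hΩo isOpen_Ioi
  have hx₀V : x₀ ∈ V := by
    refine ⟨hKΩ hx₀, ?_⟩
    simp only [mem_preimage, mem_Ioi]
    linarith
  have hclV : IsCompact (closure V) :=
    Metric.isCompact_of_isClosed_isBounded isClosed_closure ((hΩb.subset hVsub).closure)
  have hgc : ContinuousOn g (closure V) := by
    refine ContinuousOn.sub (hcont.mono ?_) ?_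
    · exact closure_mono hVsub
    · exact (continuous_const.mul
        (((continuous_id.sub continuous_const).norm).pow 2)).continuousOn
  obtain ⟨z, hzcl, hzmax⟩ := hclV.exists_isMaxOn ⟨x₀, subset_closure hx₀V⟩ hgc
  have hgle : a ≤ g z := by
    have h := hzmax (subset_closure hx₀V)
    simpa [hg, ← ha] using h
  by_cases hzV : z ∈ V
  · -- interior maximum: contradiction with the PDE
    have hzΩ : z ∈ Ω := hzV.1
    have hzu : a - 1 < u lam z := hzV.2
    have hlocmax : IsLocalMax g z :=
      hzmax.isLocalMax (mem_nhds_iff.mpr ⟨V, subset_closure, hVopen, hzV⟩)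
    have hdir : ∀ i : Fin N,
        fderiv ℝ (fderiv ℝ (u lam)) z (EuclideanSpace.single i 1)
          (EuclideanSpace.single i 1) ≤ 2 * c := by
      intro i
      exact dir_second_deriv hΩo hC2 hzΩ hlocmax _ (by simp [EuclideanSpace.norm_single])
    have hlap : laplacian (u lam) z = ∑ i : Fin N,
        fderiv ℝ (fderiv ℝ (u lam)) z (EuclideanSpace.single i 1)
          (EuclideanSpace.single i 1) := by
      unfold laplacian
      refine Finset.sum_congr rfl fun i _ => ?_
      rw [iteratedFDeriv_two_apply]
      simp
    have hsum : laplacian (u lam) z ≤ N * (2 * c) := by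
      rw [hlap]
      calc ∑ i : Fin N, fderiv ℝ (fderiv ℝ (u lam)) z (EuclideanSpace.single i 1)
            (EuclideanSpace.single i 1) ≤ ∑ _i : Fin N, 2 * c :=
          Finset.sum_le_sum fun i _ => hdir i
        _ = N * (2 * c) := by
          rw [Finset.sum_const, Finset.card_univ, Fintype.card_fin, nsmul_eq_mul]
    have hpde' : laplacian (u lam) z = (-lam) * f (u lam z) := by
      have := hpde z hzΩ
      linarith
    have hfz : c₀ ≤ f (u lam z) := hf.2.1 (by linarith : -M - 1 ≤ u lam z)
    have hprod : (N:ℝ) * (2 * c) = (-lam) * c₀ / 2 := by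
      rw [hc_def]
      field_simp
      ring
    have hposl : 0 < (-lam) * c₀ := by nlinarith
    nlinarith [mul_le_mul_of_nonneg_left hfz (by nlinarith : (0:ℝ) ≤ -lam)]
  · -- maximum on the boundary of V
    by_cases hzΩ : z ∈ Ω
    · -- then u z ≤ a - 1
      have hznV : u lam z ≤ a - 1 := by
        by_contra h
        push_neg at h
        exact hzV ⟨hzΩ, h⟩
      have : g z ≤ u lam z := by
        have : 0 ≤ c * ‖z - x₀‖ ^ 2 := by positivity
        simp only [hg]; linarith
      linarith
    · -- then z is on the frontier of Ω, far from x₀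
      have hzfr : z ∈ frontier Ω := by
        have hzclΩ : z ∈ closure Ω := (closure_mono hVsub) hzcl
        rw [frontier, hΩo.interior_eq]
        exact ⟨hzclΩ, hzΩ⟩
      have huz : u lam z = 0 := hbd z hzfr
      have hdist : δ ≤ ‖z - x₀‖ := by
        by_contra h
        push_neg at h
        have : z ∈ Metric.thickening δ K := by
          rw [Metric.mem_thickening_iff]
          exact ⟨x₀, hx₀, by rwa [dist_eq_norm]⟩
        exact hzΩ (hthick this)
      have hgz : g z ≤ -(c * δ ^ 2) := by
        have h1 : c * δ ^ 2 ≤ c * ‖z - x₀‖ ^ 2 :=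
          mul_le_mul_of_nonneg_left (pow_le_pow_left₀ hδ.le hdist 2) hc.le
        simp only [hg, huz, zero_sub]
        linarith
      -- c * δ² > M + 1
      have hcd : M + 1 < c * δ ^ 2 := by
        rw [hc_def, div_mul_eq_mul_div, lt_div_iff₀ (by positivity : (0:ℝ) < 4 * N)]
        nlinarith
      linarith
end

section
/- Let f satisfy condition (1.2) and assume t₀ ∈ (−∞, 0) is such that f(t) = 0 for every t ≤ t₀ and f(t) > 0 for every t > t₀. Suppose that for each λ < 0, u_λ is a classical solution of (P_f^λ) on Ω. Then for every compact set K ⊂ Ω there exist a constant C > 0 and λ̄ < 0 such that |λ f(u_λ(x))| ≤ C for all x ∈ K and all λ < λ̄. -/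
open Set MeasureTheory Filter Topology

section Aux

variable {N : ℕ}

/-- The constant bilinear map `2⟪·,·⟫`. -/
noncomputable def GG : EuclideanSpace ℝ (Fin N) →L[ℝ] EuclideanSpace ℝ (Fin N) →L[ℝ] ℝ :=
  (2:ℝ) • (innerSL ℝ)

lemma hasFDerivAt_Q (x y : EuclideanSpace ℝ (Fin N)) :
    HasFDerivAt (fun z : EuclideanSpace ℝ (Fin N) => ‖z - x‖^2) (GG (N := N) (y - x)) y := by
  have h1 := (hasStrictFDerivAt_norm_sq (y - x)).hasFDerivAt
  have h2 : HasFDerivAt (fun z : EuclideanSpace ℝ (Fin N) => z - x)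
      (ContinuousLinearMap.id ℝ (EuclideanSpace ℝ (Fin N))) y :=
    (hasFDerivAt_id y).sub_const x
  have h3 := h1.comp y h2
  have h4 : (GG (N := N) (y - x))
      = (2 • (innerSL ℝ) (y - x)).comp (ContinuousLinearMap.id ℝ (EuclideanSpace ℝ (Fin N))) := by
    ext z; simp [GG]; rfl
  rw [h4]
  exact h3

lemma hasFDerivAt_fderiv_Q (x y : EuclideanSpace ℝ (Fin N)) :
    HasFDerivAt (fun z : EuclideanSpace ℝ (Fin N) =>
      fderiv ℝ (fun w : EuclideanSpace ℝ (Fin N) => ‖w - x‖^2) z) (GG (N := N)) y := by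
  have key : ∀ z : EuclideanSpace ℝ (Fin N),
      fderiv ℝ (fun w : EuclideanSpace ℝ (Fin N) => ‖w - x‖^2) z
      = GG (N := N) z - GG (N := N) x := by
    intro z
    rw [(hasFDerivAt_Q x z).fderiv]
    simp
  rw [funext key]
  exact (GG (N := N)).hasFDerivAt.sub_const _

lemma GG_single (i : Fin N) :
    GG (N := N) (EuclideanSpace.single i 1) (EuclideanSpace.single i 1) = 2 := by
  simp [GG, real_inner_self_eq_norm_sq]
  change (inner ℝ (EuclideanSpace.single i (1:ℝ)) (EuclideanSpace.single i (1:ℝ)) : ℝ) = 1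
  simp [real_inner_self_eq_norm_sq]

/-- Laplacian of `u + a‖· - x‖²` on an open set. -/
lemma lap_add_sq {Ω : Set (EuclideanSpace ℝ (Fin N))} (hΩ : IsOpen Ω)
    {u : EuclideanSpace ℝ (Fin N) → ℝ} (hu : ContDiffOn ℝ 2 u Ω)
    {y : EuclideanSpace ℝ (Fin N)} (hy : y ∈ Ω) (a : ℝ) (x : EuclideanSpace ℝ (Fin N)) :
    laplacian (fun z => u z + a * ‖z - x‖^2) y = laplacian u y + a * (2*N) := by
  have hmem : Ω ∈ 𝓝 y := hΩ.mem_nhds hy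
  have hud : ∀ z ∈ Ω, DifferentiableAt ℝ u z := fun z hz =>
    ((hu.contDiffAt (hΩ.mem_nhds hz)).differentiableAt (by norm_num))
  have hQd : ∀ z : EuclideanSpace ℝ (Fin N),
      DifferentiableAt ℝ (fun w : EuclideanSpace ℝ (Fin N) => ‖w - x‖^2) z := fun z =>
    (hasFDerivAt_Q x z).differentiableAt
  have hev : (fun z => fderiv ℝ (fun w => u w + a * ‖w - x‖^2) z) =ᶠ[𝓝 y]
      (fun z => fderiv ℝ u z + a • fderiv ℝ (fun w : EuclideanSpace ℝ (Fin N) => ‖w - x‖^2) z) := by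
    filter_upwards [hmem] with z hz
    rw [fderiv_fun_add (hud z hz) ((hQd z).const_mul a), fderiv_const_mul (hQd z)]
  have hu2 : DifferentiableAt ℝ (fun z => fderiv ℝ u z) y := by
    have h1 : ContDiffOn ℝ 1 (fderiv ℝ u) Ω := hu.fderiv_of_isOpen hΩ le_rfl
    exact ((h1.contDiffAt hmem).differentiableAt one_ne_zero)
  have hsum : HasFDerivAt (fun z => fderiv ℝ u z
      + a • fderiv ℝ (fun w : EuclideanSpace ℝ (Fin N) => ‖w - x‖^2) z)
      (fderiv ℝ (fderiv ℝ u) y + a • GG (N := N)) y :=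
    hu2.hasFDerivAt.add ((hasFDerivAt_fderiv_Q x y).const_smul a)
  have hsum2 : HasFDerivAt (fun z => fderiv ℝ (fun w => u w + a * ‖w - x‖^2) z)
      (fderiv ℝ (fderiv ℝ u) y + a • GG (N := N)) y := hsum.congr_of_eventuallyEq hev
  have hterm : ∀ i : Fin N,
      iteratedFDeriv ℝ 2 (fun z => u z + a * ‖z - x‖^2) y
        ![EuclideanSpace.single i 1, EuclideanSpace.single i 1]
      = iteratedFDeriv ℝ 2 u y ![EuclideanSpace.single i 1, EuclideanSpace.single i 1] + a * 2 := by
    intro i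
    rw [iteratedFDeriv_two_apply, iteratedFDeriv_two_apply, hsum2.fderiv]
    have := GG_single i
    simp only [Matrix.cons_val_zero, Matrix.cons_val_one, Matrix.head_cons,
      ContinuousLinearMap.add_apply, ContinuousLinearMap.coe_smul', Pi.smul_apply,
      ContinuousLinearMap.smul_apply, smul_eq_mul, this]
  unfold laplacian
  rw [Finset.sum_congr rfl (fun i _ => hterm i), Finset.sum_add_distrib]
  simp
  ring

lemma lap_neg (u : EuclideanSpace ℝ (Fin N) → ℝ) (y : EuclideanSpace ℝ (Fin N)) :
    laplacian (fun z => -u z) y = - laplacian u y := by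
  unfold laplacian
  rw [← Finset.sum_neg_distrib]
  refine Finset.sum_congr rfl fun i _ => ?_
  have : (fun z => -u z) = -u := rfl
  rw [this, iteratedFDeriv_neg_apply]
  simp

/-- 1D second derivative test. -/
lemma second_test {g h : ℝ → ℝ} {ε : ℝ} (hε : 0 < ε)
    (hg : ∀ t : ℝ, |t| ≤ ε → HasDerivAt g (h t) t)
    (hmax : ∀ t : ℝ, |t| ≤ ε → g t ≤ g 0) {c : ℝ}
    (hh : HasDerivAt h c 0) : c ≤ 0 := by
  by_contra hc
  push_neg at hc
  have hlm : IsLocalMax g 0 := by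
    have h1 : ∀ᶠ t in 𝓝 (0:ℝ), |t| < ε := by
      simpa using eventually_abs_sub_lt (0:ℝ) hε
    filter_upwards [h1] with t ht using hmax t ht.le
  have hd0 : h 0 = 0 := by
    have := hlm.deriv_eq_zero
    rwa [(hg 0 (by simpa using hε.le)).deriv] at this
  have hslope : Tendsto (slope h 0) (𝓝[≠] 0) (𝓝 c) :=
    hasDerivAt_iff_tendsto_slope.1 hh
  have hpos : ∀ᶠ t in 𝓝[≠] (0:ℝ), 0 < slope h 0 t :=
    hslope.eventually (eventually_gt_nhds hc)
  rw [eventually_nhdsWithin_iff, Metric.eventually_nhds_iff] at hpos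
  obtain ⟨δ, hδ, hδ'⟩ := hpos
  set a := min (δ/2) ε with ha
  have ha0 : 0 < a := lt_min (by linarith) hε
  have haε : a ≤ ε := min_le_right _ _
  have hhpos : ∀ t : ℝ, 0 < t → t ≤ a → 0 < h t := by
    intro t ht hta
    have h1 : dist t 0 < δ := by
      rw [Real.dist_eq, sub_zero, abs_of_pos ht]
      calc t ≤ a := hta
        _ ≤ δ/2 := min_le_left _ _
        _ < δ := by linarith
    have := hδ' h1 (by simp [ht.ne'])
    rw [slope_def_field, hd0, sub_zero, sub_zero, div_pos_iff] at this
    rcases this with ⟨h3, _⟩ | ⟨_, h4⟩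
    · exact h3
    · linarith
  have hmono : StrictMonoOn g (Set.Icc 0 a) := by
    apply strictMonoOn_of_deriv_pos (convex_Icc 0 a)
    · intro t ht
      exact ((hg t (by rw [abs_le]; exact ⟨by linarith [ht.1], le_trans ht.2 haε⟩)).differentiableAt).continuousAt.continuousWithinAt
    · intro t ht
      rw [interior_Icc] at ht
      rw [(hg t (by rw [abs_le]; constructor <;> [linarith [ht.1]; exact le_trans ht.2.le haε])).deriv]
      exact hhpos t ht.1 ht.2.le
  have := hmono (Set.left_mem_Icc.2 ha0.le) (Set.right_mem_Icc.2 ha0.le) ha0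
  have := hmax a (by rw [abs_of_pos ha0]; exact haε)
  linarith

/-- At an interior maximum point, the Laplacian is nonpositive. -/
lemma laplacian_nonpos_at_max {U : Set (EuclideanSpace ℝ (Fin N))} (hU : IsOpen U)
    {u : EuclideanSpace ℝ (Fin N) → ℝ} (hu : ContDiffOn ℝ 2 u U)
    {z : EuclideanSpace ℝ (Fin N)} (hz : z ∈ U) (hmax : ∀ y ∈ U, u y ≤ u z) :
    laplacian u z ≤ 0 := by
  have hdu : ∀ y ∈ U, DifferentiableAt ℝ u y := fun y hy =>
    (hu.contDiffAt (hU.mem_nhds hy)).differentiableAt (by norm_num)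
  have hdu2 : DifferentiableAt ℝ (fderiv ℝ u) z :=
    ((hu.fderiv_of_isOpen hU (m := 1) le_rfl).contDiffAt (hU.mem_nhds hz)).differentiableAt one_ne_zero
  have key : ∀ v : EuclideanSpace ℝ (Fin N),
      iteratedFDeriv ℝ 2 u z ![v, v] ≤ 0 := by
    intro v
    set φ : ℝ → EuclideanSpace ℝ (Fin N) := fun t => z + t • v with hφ
    have hφc : Continuous φ := by continuity
    have hφ0 : φ 0 = z := by simp [hφ]
    have hmem : ∀ᶠ t in 𝓝 (0:ℝ), φ t ∈ U := by
      have := hφc.continuousAt (x := (0:ℝ))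
      rw [ContinuousAt, hφ0] at this
      exact this (hU.mem_nhds hz)
    rw [Metric.eventually_nhds_iff] at hmem
    obtain ⟨ε, hε, hεm⟩ := hmem
    have hin : ∀ t : ℝ, |t| ≤ ε/2 → φ t ∈ U := by
      intro t ht
      exact hεm (by rw [Real.dist_eq, sub_zero]; linarith [abs_nonneg t])
    have hφd : ∀ t : ℝ, HasDerivAt φ v t := by
      intro t
      have : HasDerivAt (fun s : ℝ => s • v) ((1:ℝ) • v) t := (hasDerivAt_id t).smul_const v
      simpa [hφ] using this.const_add z
    have hgd : ∀ t : ℝ, |t| ≤ ε/2 →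
        HasDerivAt (fun s => u (φ s)) (fderiv ℝ u (φ t) v) t := by
      intro t ht
      exact ((hdu _ (hin t ht)).hasFDerivAt).comp_hasDerivAt t (hφd t)
    have hhd : HasDerivAt (fun t => fderiv ℝ u (φ t) v)
        (fderiv ℝ (fderiv ℝ u) z v v) 0 := by
      have h1 : HasDerivAt (fun t => fderiv ℝ u (φ t)) (fderiv ℝ (fderiv ℝ u) z v) 0 := by
        have h0 := hdu2.hasFDerivAt
        rw [← hφ0] at h0
        have h2 := h0.comp_hasDerivAt 0 (hφd 0)
        rw [hφ0] at h2
        exact h2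
      exact (ContinuousLinearMap.apply ℝ ℝ v).hasFDerivAt.comp_hasDerivAt 0 h1
    have := second_test (by linarith : (0:ℝ) < ε/2)
      (fun t ht => hgd t ht)
      (fun t ht => by rw [hφ0]; exact hmax _ (hin t ht)) hhd
    rw [iteratedFDeriv_two_apply]
    simpa using this
  unfold laplacian
  exact Finset.sum_nonpos fun i _ => key _

/-- Maximum principle: a strictly subharmonic function attains its max outside the open set. -/
lemma exists_boundary_max {V : Set (EuclideanSpace ℝ (Fin N))} (hVo : IsOpen V)
    (hVb : Bornology.IsBounded V) {v : EuclideanSpace ℝ (Fin N) → ℝ}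
    (hvc : ContinuousOn v (closure V)) (hvd : ContDiffOn ℝ 2 v V)
    (hΔ : ∀ y ∈ V, 0 < laplacian v y) {x : EuclideanSpace ℝ (Fin N)} (hx : x ∈ V) :
    ∃ z ∈ closure V \ V, v x ≤ v z := by
  have hcpt : IsCompact (closure V) := hVb.isCompact_closure
  obtain ⟨z, hzc, hzmax⟩ := hcpt.exists_isMaxOn ⟨x, subset_closure hx⟩ hvc
  have hzV : z ∉ V := by
    intro hzV
    have h1 := laplacian_nonpos_at_max hVo hvd hzV (fun y hy => hzmax (subset_closure hy))
    exact absurd h1 (not_le.2 (hΔ z hzV))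
  exact ⟨z, ⟨hzc, hzV⟩, hzmax (subset_closure hx)⟩

end Aux

section Bounds

variable {N : ℕ} {Ω : Set (EuclideanSpace ℝ (Fin N))} {lam : ℝ} {f : ℝ → ℝ}
  {w : EuclideanSpace ℝ (Fin N) → ℝ} {t₀ : ℝ}

lemma contDiff_quad (a : ℝ) (x : EuclideanSpace ℝ (Fin N)) :
    ContDiff ℝ 2 (fun z : EuclideanSpace ℝ (Fin N) => a * ‖z - x‖^2) :=
  contDiff_const.mul ((contDiff_norm_sq ℝ).comp (contDiff_id.sub contDiff_const))

lemma lap_w (hsol : IsClassicalSolution Ω lam f w) {y : EuclideanSpace ℝ (Fin N)}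
    (hy : y ∈ Ω) : laplacian w y = -(lam * f (w y)) := by
  have := hsol.2.2.1 y hy
  linarith

lemma sol_le_zero (hN : 2 ≤ N) (hΩo : IsOpen Ω) (hΩb : Bornology.IsBounded Ω)
    (hlam : lam < 0) (hf : Cond12 f) (hsol : IsClassicalSolution Ω lam f w) :
    ∀ x ∈ Ω, w x ≤ 0 := by
  intro x hx
  have hNpos : (0:ℝ) < (N:ℝ) := by
    have : 0 < N := lt_of_lt_of_le two_pos hN
    exact_mod_cast this
  obtain ⟨R, hR⟩ := hΩb.subset_closedBall 0
  have hRc : closure Ω ⊆ Metric.closedBall 0 R := closure_minimal hR Metric.isClosed_closedBall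
  by_contra hpos
  push_neg at hpos
  set η := w x / (R^2 + 1) with hη
  have hR0 : (0:ℝ) ≤ R := by
    have := hRc (subset_closure hx)
    have := Metric.mem_closedBall.1 this
    linarith [dist_nonneg (x := x) (y := (0: EuclideanSpace ℝ (Fin N)))]
  have hηpos : 0 < η := by
    apply div_pos hpos
    nlinarith
  set v := fun z : EuclideanSpace ℝ (Fin N) => w z + η * ‖z - 0‖^2 with hv
  have hvc : ContinuousOn v (closure Ω) :=
    hsol.1.add ((contDiff_quad η 0).continuous.continuousOn)
  have hvd : ContDiffOn ℝ 2 v Ω := hsol.2.1.add (contDiff_quad η 0).contDiffOn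
  have hΔ : ∀ y ∈ Ω, 0 < laplacian v y := by
    intro y hy
    rw [hv, lap_add_sq hΩo hsol.2.1 hy η 0, lap_w hsol hy]
    have h1 : 0 ≤ f (w y) := hf.2.2.1 _
    nlinarith
  obtain ⟨z, ⟨hzc, hzΩ⟩, hvxz⟩ := exists_boundary_max hΩo hΩb hvc hvd hΔ hx
  have hzf : z ∈ frontier Ω := by
    rw [frontier, hΩo.interior_eq]; exact ⟨hzc, hzΩ⟩
  have hwz : w z = 0 := hsol.2.2.2 z hzf
  have hznorm : ‖z - 0‖ ≤ R := by
    have := Metric.mem_closedBall.1 (hRc hzc)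
    rwa [dist_eq_norm] at this
  have h1 : v z ≤ η * R^2 := by
    have hvz : v z = w z + η * ‖z - 0‖^2 := rfl
    rw [hvz, hwz, zero_add]
    have : ‖z - 0‖^2 ≤ R^2 := by nlinarith [norm_nonneg (z - 0)]
    nlinarith
  have h2 : w x ≤ v x := by
    have hvx : v x = w x + η * ‖x - 0‖^2 := rfl
    rw [hvx]; nlinarith [sq_nonneg ‖x - 0‖]
  have : w x ≤ η * R^2 := le_trans h2 (le_trans hvxz h1)
  rw [hη] at this
  have hR1 : (0:ℝ) < R^2 + 1 := by nlinarith
  rw [div_mul_eq_mul_div, le_div_iff₀ hR1] at this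
  nlinarith

lemma sol_ge_t0 (hN : 2 ≤ N) (hΩo : IsOpen Ω) (hΩb : Bornology.IsBounded Ω)
    (hlam : lam < 0) (hf : Cond12 f) (ht₀ : t₀ < 0) (hf0 : ∀ t ≤ t₀, f t = 0)
    (hsol : IsClassicalSolution Ω lam f w) :
    ∀ x ∈ Ω, t₀ ≤ w x := by
  intro x hx
  have hNpos : (0:ℝ) < (N:ℝ) := by
    have : 0 < N := lt_of_lt_of_le two_pos hN
    exact_mod_cast this
  obtain ⟨R, hR⟩ := hΩb.subset_closedBall 0
  have hRc : closure Ω ⊆ Metric.closedBall 0 R := closure_minimal hR Metric.isClosed_closedBall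
  by_contra hlt
  push_neg at hlt
  have hR0 : (0:ℝ) ≤ R := by
    have := Metric.mem_closedBall.1 (hRc (subset_closure hx))
    linarith [dist_nonneg (x := x) (y := (0: EuclideanSpace ℝ (Fin N)))]
  set η := (t₀ - w x) / (R^2 + 1) with hη
  have hηpos : 0 < η := by
    apply div_pos (by linarith)
    nlinarith
  set V := Ω ∩ w⁻¹' (Iio t₀) with hV
  have hVo : IsOpen V := hsol.2.1.continuousOn.isOpen_inter_preimage hΩo isOpen_Iio
  have hVb : Bornology.IsBounded V := hΩb.subset inter_subset_left
  have hxV : x ∈ V := ⟨hx, hlt⟩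
  have hclV : closure V ⊆ closure Ω := closure_mono inter_subset_left
  set v := fun z : EuclideanSpace ℝ (Fin N) => -w z + η * ‖z - 0‖^2 with hv
  have hvc : ContinuousOn v (closure V) :=
    ((hsol.1.mono hclV).neg).add ((contDiff_quad η 0).continuous.continuousOn)
  have hwd : ContDiffOn ℝ 2 (fun z => -w z) V := (hsol.2.1.mono inter_subset_left).neg
  have hvd : ContDiffOn ℝ 2 v V := hwd.add (contDiff_quad η 0).contDiffOn
  have hΔ : ∀ y ∈ V, 0 < laplacian v y := by
    intro y hy
    rw [hv, lap_add_sq hVo hwd hy η 0, lap_neg, lap_w hsol hy.1,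
      hf0 _ (le_of_lt hy.2)]
    nlinarith
  obtain ⟨z, ⟨hzc, hzV⟩, hvxz⟩ := exists_boundary_max hVo hVb hvc hvd hΔ hxV
  have hwz : t₀ ≤ w z := by
    by_cases hzΩ : z ∈ Ω
    · by_contra h
      push_neg at h
      exact hzV ⟨hzΩ, h⟩
    · have hzf : z ∈ frontier Ω := by
        rw [frontier, hΩo.interior_eq]; exact ⟨hclV hzc, hzΩ⟩
      rw [hsol.2.2.2 z hzf]; linarith
  have hznorm : ‖z - 0‖ ≤ R := by
    have := Metric.mem_closedBall.1 (hRc (hclV hzc))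
    rwa [dist_eq_norm] at this
  have h1 : v z ≤ -t₀ + η * R^2 := by
    have hvz : v z = -w z + η * ‖z - 0‖^2 := rfl
    rw [hvz]
    have : ‖z - 0‖^2 ≤ R^2 := by nlinarith [norm_nonneg (z - 0)]
    nlinarith
  have h2 : -w x ≤ v x := by
    have hvx : v x = -w x + η * ‖x - 0‖^2 := rfl
    rw [hvx]; nlinarith [sq_nonneg ‖x - 0‖]
  have : -w x ≤ -t₀ + η * R^2 := le_trans h2 (le_trans hvxz h1)
  rw [hη] at this
  have hR1 : (0:ℝ) < R^2 + 1 := by nlinarith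
  rw [div_mul_eq_mul_div] at this
  have h3 : (t₀ - w x) * R ^ 2 / (R ^ 2 + 1) < t₀ - w x := by
    rw [div_lt_iff₀ hR1]
    nlinarith
  linarith

end Bounds

section Key

variable {N : ℕ} {Ω : Set (EuclideanSpace ℝ (Fin N))} {lam : ℝ} {f : ℝ → ℝ}
  {w : EuclideanSpace ℝ (Fin N) → ℝ} {t₀ : ℝ}

lemma key_bound (hN : 2 ≤ N) (hΩo : IsOpen Ω) (hΩb : Bornology.IsBounded Ω)
    (hlam : lam < 0) (hf : Cond12 f) (ht₀ : t₀ < 0) (hf0 : ∀ t ≤ t₀, f t = 0)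
    (hsol : IsClassicalSolution Ω lam f w)
    {x : EuclideanSpace ℝ (Fin N)} {r : ℝ} (hr : 0 < r)
    (hball : Metric.closedBall x r ⊆ Ω) :
    -lam * f (w x) ≤ 2 * N * (-t₀) / r^2 := by
  have hNpos : (0:ℝ) < (N:ℝ) := by
    have : 0 < N := lt_of_lt_of_le two_pos hN
    exact_mod_cast this
  have hxΩ : x ∈ Ω := hball (Metric.mem_closedBall_self hr.le)
  have hballo : Metric.ball x r ⊆ Ω := (Metric.ball_subset_closedBall).trans hball
  have hwcont : ContinuousOn w Ω := hsol.2.1.continuousOn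
  -- Step 1 : for every positive δ
  have step1 : ∀ δ : ℝ, δ ∈ Ioi (0:ℝ) → -lam * f (w x - δ) ≤ 2 * N * (-t₀) / r^2 := by
    intro δ hδ
    rw [mem_Ioi] at hδ
    set c' := -lam * f (w x - δ) with hc'
    have hc'0 : 0 ≤ c' := mul_nonneg (by linarith) (hf.2.2.1 _)
    -- Step 1a
    have step1a : ∀ η : ℝ, 0 < η → η * r^2 < δ * (2*N) →
        c' * r^2 ≤ (-t₀) * (2*N) + η * r^2 := by
      intro η hη hηδ
      set a := (η - c') / (2*(N:ℝ)) with ha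
      set v := fun z : EuclideanSpace ℝ (Fin N) => w z + a * ‖z - x‖^2 with hvdef
      set w' := fun z : EuclideanSpace ℝ (Fin N) => w z + (-c'/(2*(N:ℝ))) * ‖z - x‖^2 with hw'
      set U := Metric.ball x r ∩ w'⁻¹' (Ioi (w x - δ)) with hU
      have hw'c : ContinuousOn w' (Metric.ball x r) :=
        (hwcont.mono hballo).add ((contDiff_quad _ x).continuous.continuousOn)
      have hUo : IsOpen U := hw'c.isOpen_inter_preimage Metric.isOpen_ball isOpen_Ioi
      have hxU : x ∈ U := by
        constructor
        · exact Metric.mem_ball_self hr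
        · have : w' x = w x := by
            have : w' x = w x + (-c'/(2*(N:ℝ))) * ‖x - x‖^2 := rfl
            rw [this]; simp
          rw [mem_preimage, this, mem_Ioi]; linarith
      have hUb : Bornology.IsBounded U := Metric.isBounded_ball.subset inter_subset_left
      have hclU : closure U ⊆ Metric.closedBall x r :=
        (closure_mono inter_subset_left).trans Metric.closure_ball_subset_closedBall
      have hUΩ : U ⊆ Ω := inter_subset_left.trans hballo
      have hvc : ContinuousOn v (closure U) :=
        ((hwcont.mono hball).mono hclU).add ((contDiff_quad a x).continuous.continuousOn)
      have hvd : ContDiffOn ℝ 2 v U := (hsol.2.1.mono hUΩ).add (contDiff_quad a x).contDiffOn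
      have hΔ : ∀ y ∈ U, 0 < laplacian v y := by
        intro y hy
        rw [hvdef, lap_add_sq hΩo hsol.2.1 (hUΩ hy) a x, lap_w hsol (hUΩ hy)]
        have ha2 : a * (2*(N:ℝ)) = η - c' := by
          rw [ha]; field_simp
        have hwy : w x - δ < w y := by
          have h1 := hy.2
          rw [mem_preimage, mem_Ioi] at h1
          have h2 : w y = w' y + (c'/(2*(N:ℝ))) * ‖y - x‖^2 := by
            have : w' y = w y + (-c'/(2*(N:ℝ))) * ‖y - x‖^2 := rfl
            rw [this]; ring
          have h3 : 0 ≤ (c'/(2*(N:ℝ))) * ‖y - x‖^2 :=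
            mul_nonneg (div_nonneg hc'0 (by positivity)) (sq_nonneg _)
          have h5 : w' y ≤ w y := by rw [h2]; linarith
          linarith
        have hmono : f (w x - δ) ≤ f (w y) := hf.2.1 hwy.le
        have h4 : c' ≤ -lam * f (w y) :=
          mul_le_mul_of_nonneg_left hmono (by linarith)
        rw [ha2]
        nlinarith
      obtain ⟨z, ⟨hzc, hzU⟩, hvxz⟩ := exists_boundary_max hUo hUb hvc hvd hΔ hxU
      have hvx : v x = w x := by
        have : v x = w x + a * ‖x - x‖^2 := rfl
        rw [this]; simp
      have hzB : z ∈ Metric.closedBall x r := hclU hzc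
      have hznorm : ‖z - x‖ ≤ r := by
        have := Metric.mem_closedBall.1 hzB
        rwa [dist_eq_norm] at this
      have hvzw : v z = w z + a * ‖z - x‖^2 := rfl
      have hw'z : w' z = w z + (-c'/(2*(N:ℝ))) * ‖z - x‖^2 := rfl
      have hzUmem : z ∈ Metric.ball x r → w x - δ < w' z → z ∈ U := fun h1 h2 => ⟨h1, h2⟩
      clear_value c' a v w' U
      clear hΔ hvc hvd hUo hUb hxU hw'c hUΩ hclU hzc
      by_cases hzball : z ∈ Metric.ball x r
      · -- the max is in the ball, hence below the level w x - δ : contradiction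
        have hzlev : w' z ≤ w x - δ := by
          by_contra h
          push_neg at h
          exact hzU (hzUmem hzball h)
        have hvz : v z = w' z + (η/(2*(N:ℝ))) * ‖z - x‖^2 := by
          rw [hvzw, hw'z, ha]; field_simp; ring
        have h7 : (η/(2*(N:ℝ))) * ‖z - x‖^2 ≤ (η/(2*(N:ℝ))) * r^2 := by
          apply mul_le_mul_of_nonneg_left _ (by positivity)
          nlinarith [norm_nonneg (z - x)]
        have h8 : (η/(2*(N:ℝ))) * r^2 < δ := by
          rw [div_mul_eq_mul_div, div_lt_iff₀ (by linarith)]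
          linarith
        rw [hvx, hvz] at hvxz
        have hcontr : w x < w x := by
          calc w x ≤ w' z + (η/(2*(N:ℝ))) * ‖z - x‖^2 := hvxz
            _ ≤ (w x - δ) + (η/(2*(N:ℝ))) * r^2 := by linarith
            _ < w x := by linarith
        exact absurd hcontr (lt_irrefl _)
      · -- the max is on the sphere
        have hzr : ‖z - x‖ = r := by
          have : r ≤ dist z x := by
            by_contra h
            push_neg at h
            exact hzball (Metric.mem_ball.2 h)
          rw [dist_eq_norm] at this
          linarith
        have hwz0 : w z ≤ 0 := sol_le_zero hN hΩo hΩb hlam hf hsol z (hball hzB)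
        have hwxt : t₀ ≤ w x := sol_ge_t0 hN hΩo hΩb hlam hf ht₀ hf0 hsol x hxΩ
        have hvz : v z = w z + a * r^2 := by
          rw [hvzw, hzr]
        rw [hvx, hvz] at hvxz
        have h9 : t₀ ≤ w z + (η - c')/(2*(N:ℝ)) * r^2 := by rw [← ha]; linarith
        have h10 : t₀ * (2*(N:ℝ)) ≤ (w z + (η - c')/(2*(N:ℝ)) * r^2) * (2*(N:ℝ)) :=
          mul_le_mul_of_nonneg_right h9 (by linarith)
        have h11 : (η - c')/(2*(N:ℝ)) * r^2 * (2*(N:ℝ)) = (η - c') * r^2 := by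
          field_simp
        nlinarith
    -- Step 1b : let η → 0
    have step1b : c' * r^2 ≤ (-t₀) * (2*N) := by
      by_contra h
      push_neg at h
      set ε := c' * r^2 - (-t₀) * (2*(N:ℝ)) with hε
      have hεpos : 0 < ε := by rw [hε]; linarith
      set η := min (δ * (2*(N:ℝ))) ε / (2 * r^2) with hηdef
      have hη1 : 0 < η := by
        apply div_pos (lt_min (by positivity) hεpos) (by positivity)
      have hη2 : η * r^2 = min (δ * (2*(N:ℝ))) ε / 2 := by
        rw [hηdef]; field_simp
      have h12 := step1a η hη1 (by
        rw [hη2]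
        calc min (δ * (2*(N:ℝ))) ε / 2 < min (δ * (2*(N:ℝ))) ε := by
              have := lt_min (mul_pos hδ (by linarith : (0:ℝ) < 2*(N:ℝ))) hεpos
              linarith
          _ ≤ δ * (2*(N:ℝ)) := min_le_left _ _)
      rw [hη2] at h12
      have h13 : min (δ * (2*(N:ℝ))) ε / 2 < ε := by
        have h14 := min_le_right (δ * (2*(N:ℝ))) ε
        linarith
      rw [hε] at h13
      linarith
    rw [le_div_iff₀ (by positivity)]
    linarith
  -- Step 2 : let δ → 0
  have htend : Tendsto (fun δ : ℝ => -lam * f (w x - δ)) (𝓝[>] 0) (𝓝 (-lam * f (w x))) := by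
    have h1 : Tendsto (fun δ : ℝ => w x - δ) (𝓝[>] (0:ℝ)) (𝓝 (w x)) := by
      have h2 : Tendsto (fun δ : ℝ => w x - δ) (𝓝 (0:ℝ)) (𝓝 (w x - 0)) :=
        tendsto_const_nhds.sub tendsto_id
      rw [sub_zero] at h2
      exact h2.mono_left nhdsWithin_le_nhds
    exact tendsto_const_nhds.mul ((hf.1.tendsto _).comp h1)
  exact le_of_tendsto htend (eventually_nhdsWithin_of_forall step1)

end Key

/-- Local uniform bound (2.3): for every compact `K ⊂ Ω` there are `C > 0` and `λ̄ < 0`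
with `|λ f(u_λ)| ≤ C` on `K` for all `λ < λ̄`. -/
theorem stmt_6 {N : ℕ} (hN : 2 ≤ N) (Ω : Set (EuclideanSpace ℝ (Fin N)))
    (hΩo : IsOpen Ω) (hΩb : Bornology.IsBounded Ω) (hΩne : Ω.Nonempty)
    (f : ℝ → ℝ) (hf : Cond12 f)
    (t₀ : ℝ) (ht₀ : t₀ < 0) (hf0 : ∀ t ≤ t₀, f t = 0) (hfpos : ∀ t, t₀ < t → 0 < f t)
    (u : ℝ → EuclideanSpace ℝ (Fin N) → ℝ)
    (hu : ∀ lam < (0:ℝ), IsClassicalSolution Ω lam f (u lam)) :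
    ∀ K ⊆ Ω, IsCompact K → ∃ C > (0:ℝ), ∃ lb < (0:ℝ), ∀ lam < lb, ∀ x ∈ K,
      |lam * f (u lam x)| ≤ C := by
  intro K hKΩ hK
  have hNpos : (0:ℝ) < (N:ℝ) := by
    have : 0 < N := lt_of_lt_of_le two_pos hN
    exact_mod_cast this
  obtain ⟨r, hr, hrK⟩ : ∃ r > (0:ℝ), ∀ x ∈ K, Metric.closedBall x r ⊆ Ω := by
    obtain ⟨ε, hε, hsub⟩ := hK.exists_cthickening_subset_open hΩo hKΩ
    exact ⟨ε, hε, fun x hx =>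
      (Metric.closedBall_subset_cthickening hx ε).trans hsub⟩
  have hC : (0:ℝ) < 2 * N * (-t₀) / r^2 := by
    apply div_pos _ (by positivity)
    have : (0:ℝ) < -t₀ := by linarith
    positivity
  refine ⟨2 * N * (-t₀) / r^2, hC, -1, by norm_num, ?_⟩
  intro lam hlam x hx
  have hlam0 : lam < 0 := lt_trans hlam (by norm_num)
  have hsol := hu lam hlam0
  have hxΩ : x ∈ Ω := hKΩ hx
  have habs : |lam * f (u lam x)| = -lam * f (u lam x) := by
    rw [abs_of_nonpos (mul_nonpos_iff.2 (Or.inr ⟨hlam0.le, hf.2.2.1 _⟩))]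
    ring
  rw [habs]
  exact key_bound hN hΩo hΩb hlam0 hf ht₀ hf0 hsol hr (hrK x hx)
end

section
/- Let N ≥ 2, let B₁ be the open unit ball of ℝ^N, let t₀ < 0, 0 ≤ p ≤ 1 and λ < 0. Let v : [0, ∞) → (0, ∞) be twice continuously differentiable with v(0) = 1, v′(0) = 0 and v″(r) + ((N−1)/r) v′(r) = v(r)^p for every r > 0. Suppose α > 0 and ε := √(α^{1−p}/(−λ)) satisfy α · v(1/ε) = −t₀. Then the function u(x) := t₀ + α v(|x|/ε) is continuous on the closed unit ball, twice continuously differentiable on B₁, satisfies −Δu(x) = λ ((u(x) − t₀)⁺)^p for every x ∈ B₁, and u(x) = 0 for every x with |x| = 1. -/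
open Set MeasureTheory Filter Topology

theorem lem_sqrtsub (f g G : ℝ → ℝ) (ℓ : ℝ)
    (hf : ContinuousOn f (Ici 0))
    (hd : ∀ r > (0:ℝ), HasDerivAt f (g r) r)
    (hgc : ContinuousOn g (Ioi 0))
    (hlim : Tendsto (fun r => g r / r) (𝓝[>] 0) (𝓝 ℓ))
    (hG : ∀ s > (0:ℝ), G s = g (Real.sqrt s) / (2 * Real.sqrt s))
    (hG0 : G 0 = ℓ / 2) :
    (∀ s ∈ Ici (0:ℝ), HasDerivWithinAt (fun t => f (Real.sqrt t)) (G s) (Ici 0) s)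
      ∧ ContinuousOn G (Ici 0) := by
  have hsq : Tendsto Real.sqrt (𝓝[>] (0:ℝ)) (𝓝[>] 0) := by
    apply tendsto_nhdsWithin_of_tendsto_nhds_of_eventually_within
    · simpa using (Real.continuous_sqrt.tendsto 0).mono_left nhdsWithin_le_nhds
    · filter_upwards [self_mem_nhdsWithin] with r hr
      exact Real.sqrt_pos.2 hr
  have hGpos : Tendsto (fun r => g r / r / 2) (𝓝[>] (0:ℝ)) (𝓝 (ℓ / 2)) :=
    hlim.div_const 2
  have hslope : Tendsto (fun r => (f r - f 0) / r ^ 2) (𝓝[>] 0) (𝓝 (ℓ / 2)) := by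
    apply HasDerivAt.lhopital_zero_nhdsGT (f' := g) (g' := fun r => 2 * r)
    · filter_upwards [self_mem_nhdsWithin] with r hr
      exact ((hd r hr).sub_const (f 0))
    · filter_upwards with r
      have := hasDerivAt_pow 2 r
      simpa [mul_comm] using this
    · filter_upwards [self_mem_nhdsWithin] with r hr
      have : (0:ℝ) < r := hr
      positivity
    · have h0 : Tendsto f (𝓝[Ici 0] (0:ℝ)) (𝓝 (f 0)) := (hf 0 (by simp)).tendsto
      have : Tendsto f (𝓝[>] (0:ℝ)) (𝓝 (f 0)) :=
        h0.mono_left (nhdsWithin_mono _ Ioi_subset_Ici_self)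
      simpa using this.sub_const (f 0)
    · have := ((continuous_pow 2).tendsto (0:ℝ)).mono_left (nhdsWithin_le_nhds (s := Ioi 0))
      simpa using this
    · apply hGpos.congr'
      filter_upwards [self_mem_nhdsWithin] with r hr
      have hr' : (0:ℝ) < r := hr
      rw [div_div, mul_comm]
  have key : ∀ s > (0:ℝ), HasDerivAt (fun t => f (Real.sqrt t)) (G s) s := by
    intro s hs
    have hss : Real.sqrt s > 0 := Real.sqrt_pos.2 hs
    have h1 : HasDerivAt Real.sqrt (1 / (2 * Real.sqrt s)) s :=
      Real.hasDerivAt_sqrt (ne_of_gt hs)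
    have h2 := (hd _ hss).comp s h1
    rw [hG s hs]
    have : g (Real.sqrt s) * (1 / (2 * Real.sqrt s)) = g (Real.sqrt s) / (2 * Real.sqrt s) := by
      ring
    rw [← this]
    exact h2
  have hIci : (Ici (0:ℝ)) \ {0} = Ioi 0 := by
    ext t; simp [lt_iff_le_and_ne, eq_comm, and_comm]
  constructor
  · intro s hs
    rcases eq_or_lt_of_le (mem_Ici.1 hs) with h | h
    · subst h
      rw [hasDerivWithinAt_iff_tendsto_slope, hIci, hG0]
      have hcomp : Tendsto (fun t => (f (Real.sqrt t) - f 0) / (Real.sqrt t) ^ 2)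
          (𝓝[>] (0:ℝ)) (𝓝 (ℓ / 2)) := (hslope.comp hsq)
      apply hcomp.congr'
      filter_upwards [self_mem_nhdsWithin] with t ht
      have ht' : (0:ℝ) < t := ht
      rw [Real.sq_sqrt ht'.le, slope_def_field]
      simp [Real.sqrt_zero]
    · exact (key s h).hasDerivWithinAt
  · intro s hs
    rcases eq_or_lt_of_le (mem_Ici.1 hs) with h | h
    · subst h
      have hG' : Tendsto G (𝓝[>] (0:ℝ)) (𝓝 (ℓ/2)) := by
        have hcomp : Tendsto (fun s => g (Real.sqrt s) / Real.sqrt s / 2)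
            (𝓝[>] (0:ℝ)) (𝓝 (ℓ / 2)) := hGpos.comp hsq
        apply hcomp.congr'
        filter_upwards [self_mem_nhdsWithin] with t ht
        have : Real.sqrt t > 0 := Real.sqrt_pos.2 ht
        rw [hG t ht, div_div, mul_comm]
      have : ContinuousWithinAt G (Ici 0) 0 := by
        unfold ContinuousWithinAt
        rw [hG0]
        rw [show (Ici (0:ℝ)) = insert 0 (Ioi 0) by rw [Ioi_insert]]
        rw [nhdsWithin_insert]
        rw [Filter.tendsto_sup]
        exact ⟨hG0 ▸ tendsto_pure_nhds G 0, hG'⟩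
      exact this
    · have hmem : Ioi (0:ℝ) ∈ 𝓝[Ici 0] s := nhdsWithin_le_nhds (Ioi_mem_nhds h)
      apply ContinuousWithinAt.congr_of_eventuallyEq
        (f := fun s => g (Real.sqrt s) / (2 * Real.sqrt s))
      · apply ContinuousWithinAt.div
        · exact (((hgc _ (Real.sqrt_pos.2 h)).continuousAt
            (Ioi_mem_nhds (Real.sqrt_pos.2 h))).comp
            Real.continuous_sqrt.continuousAt).continuousWithinAt
        · exact (continuous_const.mul Real.continuous_sqrt).continuousWithinAt
        · have := Real.sqrt_pos.2 h; positivity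
      · filter_upwards [hmem] with t ht
        exact hG t ht
      · exact hG s h


theorem lem_ext2 (f f₁ f₂ : ℝ → ℝ)
    (h1 : ∀ s ∈ Ici (0:ℝ), HasDerivWithinAt f (f₁ s) (Ici 0) s)
    (h2 : ∀ s ∈ Ici (0:ℝ), HasDerivWithinAt f₁ (f₂ s) (Ici 0) s)
    (h3 : ContinuousOn f₂ (Ici 0)) :
    ∃ g : ℝ → ℝ, ContDiff ℝ 2 g ∧ (∀ s ≥ (0:ℝ), g s = f s) ∧
      (∀ s ≥ (0:ℝ), deriv g s = f₁ s) ∧ (∀ s ≥ (0:ℝ), deriv (deriv g) s = f₂ s) := by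
  set a := f 0 with ha
  set b := f₁ 0 with hb
  set c := f₂ 0 with hc
  set g : ℝ → ℝ := fun s => if 0 ≤ s then f s else a + b * s + c * s ^ 2 / 2 with hg
  set g₁ : ℝ → ℝ := fun s => if 0 ≤ s then f₁ s else b + c * s with hg₁
  set g₂ : ℝ → ℝ := fun s => f₂ (max s 0) with hg₂
  -- polynomial derivatives
  have hpoly1 : ∀ s : ℝ, HasDerivAt (fun t => a + b * t + c * t ^ 2 / 2) (b + c * s) s := by
    intro s
    have : HasDerivAt (fun t : ℝ => a + b * t + c * t ^ 2 / 2)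
        (0 + b * 1 + c * ((2:ℕ) * s ^ (2-1)) / 2) s :=
      (((hasDerivAt_const s a).add ((hasDerivAt_id s).const_mul b)).add
        (((hasDerivAt_pow 2 s).const_mul c).div_const 2))
    convert this using 1
    push_cast
    ring
  have hpoly2 : ∀ s : ℝ, HasDerivAt (fun t => b + c * t) c s := by
    intro s
    simpa using ((hasDerivAt_id s).const_mul c).const_add b
  have hdg : ∀ s : ℝ, HasDerivAt g (g₁ s) s := by
    intro s
    rcases lt_trichotomy s 0 with h | h | h
    · have : g₁ s = b + c * s := by simp [hg₁, not_le.2 h]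
      rw [this]
      apply (hpoly1 s).congr_of_eventuallyEq
      filter_upwards [Iio_mem_nhds h] with t ht
      simp [hg, not_le.2 (mem_Iio.1 ht)]
    · subst h
      have hIci : HasDerivWithinAt g b (Ici 0) 0 := by
        apply (h1 0 (by simp)).congr
        · intro t ht; simp [hg, ht.out]
        · simp [hg]
      have hIic : HasDerivWithinAt g b (Iic 0) 0 := by
        have := ((hpoly1 0).hasDerivWithinAt (s := Iic 0))
        simp only [mul_zero, add_zero] at this
        apply this.congr
        · intro t ht
          rcases eq_or_lt_of_le (mem_Iic.1 ht) with h' | h'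
          · subst h'; simp [hg, ha]
          · simp [hg, not_le.2 h']
        · simp [hg, ha]
      have := hIic.union hIci
      rw [Iic_union_Ici] at this
      rw [hasDerivWithinAt_univ] at this
      simpa [hg₁] using this
    · have : g₁ s = f₁ s := by simp [hg₁, h.le]
      rw [this]
      have hd := (h1 s h.le).hasDerivAt (Ici_mem_nhds h)
      apply hd.congr_of_eventuallyEq
      filter_upwards [Ioi_mem_nhds h] with t ht
      simp [hg, (le_of_lt (mem_Ioi.1 ht))]
  have hdg₁ : ∀ s : ℝ, HasDerivAt g₁ (g₂ s) s := by
    intro s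
    rcases lt_trichotomy s 0 with h | h | h
    · have : g₂ s = c := by simp [hg₂, max_eq_right h.le, hc]
      rw [this]
      apply (hpoly2 s).congr_of_eventuallyEq
      filter_upwards [Iio_mem_nhds h] with t ht
      simp [hg₁, not_le.2 (mem_Iio.1 ht)]
    · subst h
      have hIci : HasDerivWithinAt g₁ c (Ici 0) 0 := by
        apply (h2 0 (by simp)).congr
        · intro t ht; simp [hg₁, ht.out]
        · simp [hg₁]
      have hIic : HasDerivWithinAt g₁ c (Iic 0) 0 := by
        apply ((hpoly2 0).hasDerivWithinAt (s := Iic 0)).congr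
        · intro t ht
          rcases eq_or_lt_of_le (mem_Iic.1 ht) with h' | h'
          · subst h'; simp [hg₁, hb]
          · simp [hg₁, not_le.2 h']
        · simp [hg₁, hb]
      have := hIic.union hIci
      rw [Iic_union_Ici, hasDerivWithinAt_univ] at this
      simpa [hg₂] using this
    · have : g₂ s = f₂ s := by simp [hg₂, max_eq_left h.le]
      rw [this]
      have hd := (h2 s h.le).hasDerivAt (Ici_mem_nhds h)
      apply hd.congr_of_eventuallyEq
      filter_upwards [Ioi_mem_nhds h] with t ht
      simp [hg₁, (le_of_lt (mem_Ioi.1 ht))]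
  have hcg₂ : Continuous g₂ := by
    apply h3.comp_continuous (continuous_id.max continuous_const)
    intro x; simp
  have hderiv_g : deriv g = g₁ := funext fun s => (hdg s).deriv
  have hderiv_g₁ : deriv g₁ = g₂ := funext fun s => (hdg₁ s).deriv
  have hcd : ContDiff ℝ 2 g := by
    rw [show (2 : WithTop ℕ∞) = 1 + 1 from by norm_num]
    rw [contDiff_succ_iff_deriv]
    refine ⟨fun s => (hdg s).differentiableAt, by simp, ?_⟩
    rw [hderiv_g, contDiff_one_iff_deriv]
    exact ⟨fun s => (hdg₁ s).differentiableAt, hderiv_g₁ ▸ hcg₂⟩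
  refine ⟨g, hcd, ?_, ?_, ?_⟩
  · intro s hs; simp [hg, hs]
  · intro s hs; rw [hderiv_g]; simp [hg₁, hs]
  · intro s hs; rw [hderiv_g, hderiv_g₁]; simp [hg₂, max_eq_left hs]


theorem lem_lap {N : ℕ} (G : ℝ → ℝ) (hG : ContDiff ℝ 2 G) (x : EuclideanSpace ℝ (Fin N)) :
    laplacian (fun y => G (∑ i, y i ^ 2)) x
      = 2 * N * deriv G (∑ i, x i ^ 2)
        + 4 * (∑ i, x i ^ 2) * deriv (deriv G) (∑ i, x i ^ 2) := by
  classical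
  let E := EuclideanSpace ℝ (Fin N)
  set q : E → ℝ := fun y => ∑ i, y i ^ 2 with hqdef
  set L : E →L[ℝ] (E →L[ℝ] ℝ) :=
    ∑ i : Fin N, (2:ℝ) • ((EuclideanSpace.proj i).smulRight (EuclideanSpace.proj i)) with hL
  have hproj : ∀ (i : Fin N) (y : E), EuclideanSpace.proj (𝕜 := ℝ) i y = y i := fun _ _ => rfl
  have hLval : ∀ (y w : E), L y w = ∑ j, 2 * (y j * w j) := by
    intro y w
    simp only [hL, ContinuousLinearMap.sum_apply, ContinuousLinearMap.smul_apply,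
      ContinuousLinearMap.smulRight_apply, hproj, smul_eq_mul]
  have hq : ∀ y : E, HasFDerivAt q (L y) y := by
    intro y
    have : HasFDerivAt q (∑ i : Fin N, (2 * y i) • (EuclideanSpace.proj i : E →L[ℝ] ℝ)) y := by
      apply HasFDerivAt.fun_sum
      intro i _
      have hp : HasFDerivAt (fun z : E => z i) (EuclideanSpace.proj (𝕜 := ℝ) i) y :=
        (EuclideanSpace.proj (𝕜 := ℝ) i).hasFDerivAt
      have h2 := hp.mul hp
      have : (fun z : E => z i ^ 2) = fun z : E => z i * z i := by
        funext z; ring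
      rw [this]
      exact h2.congr_fderiv (by rw [two_mul, add_smul])
    convert this using 1
    ext w
    rw [hLval]
    simp only [ContinuousLinearMap.sum_apply, ContinuousLinearMap.smul_apply, hproj, smul_eq_mul]
    exact Finset.sum_congr rfl fun j _ => by ring
  have hGd : Differentiable ℝ G := hG.differentiable (by norm_num)
  have hG1 : ContDiff ℝ 1 (deriv G) := by
    have := (contDiff_succ_iff_deriv (n := 1)).1 (by
      rw [show (1:WithTop ℕ∞) + 1 = 2 from by norm_num]; exact hG)
    exact this.2.2
  have hGd' : Differentiable ℝ (deriv G) := hG1.differentiable (by norm_num)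
  have hu : ∀ y : E, HasFDerivAt (fun z => G (q z)) (deriv G (q y) • L y) y := by
    intro y
    exact ((hGd (q y)).hasDerivAt).comp_hasFDerivAt y (hq y)
  have hfd : (fderiv ℝ fun z => G (q z)) = fun y => deriv G (q y) • L y :=
    funext fun y => (hu y).fderiv
  set A : E →L[ℝ] (E →L[ℝ] ℝ) :=
    deriv G (q x) • L + (deriv (deriv G) (q x) • L x).smulRight (L x) with hA
  have hB : HasFDerivAt (fun y => deriv G (q y) • L y) A x := by
    have hc : HasFDerivAt (fun y => deriv G (q y)) (deriv (deriv G) (q x) • L x) x :=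
      ((hGd' (q x)).hasDerivAt).comp_hasFDerivAt x (hq x)
    have hf : HasFDerivAt (fun y : E => L y) L x := L.hasFDerivAt
    exact hc.smul hf
  have hsecond : fderiv ℝ (fderiv ℝ fun z => G (q z)) x = A := by
    rw [hfd]; exact hB.fderiv
  have key : ∀ i : Fin N,
      iteratedFDeriv ℝ 2 (fun z => G (q z)) x
        ![EuclideanSpace.single i 1, EuclideanSpace.single i 1]
        = 2 * deriv G (q x) + deriv (deriv G) (q x) * (2 * x i) * (2 * x i) := by
    intro i
    rw [iteratedFDeriv_two_apply, hsecond]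
    simp only [Matrix.cons_val_zero, Matrix.cons_val_one, Matrix.head_cons]
    rw [hA]
    have hsingle : ∀ y : E, L y (EuclideanSpace.single i 1) = 2 * y i := by
      intro y
      rw [hLval]
      simp [EuclideanSpace.single_apply, mul_ite, Finset.sum_ite_eq']
    simp only [ContinuousLinearMap.add_apply, ContinuousLinearMap.smul_apply,
      ContinuousLinearMap.smulRight_apply, smul_eq_mul]
    rw [hsingle, hsingle]
    simp [EuclideanSpace.single_apply]
    ring
  show (∑ i : Fin N, iteratedFDeriv ℝ 2 (fun z => G (q z)) x
      ![EuclideanSpace.single i 1, EuclideanSpace.single i 1]) = _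
  rw [Finset.sum_congr rfl (fun i _ => key i)]
  rw [Finset.sum_add_distrib]
  simp only [Finset.sum_const, Finset.card_univ, Fintype.card_fin, nsmul_eq_mul]
  have heq : ∑ i : Fin N, deriv (deriv G) (q x) * (2 * x i) * (2 * x i)
      = (∑ i, x i ^ 2) * (4 * deriv (deriv G) (q x)) :=
    (Finset.sum_congr rfl (fun i _ => by ring)).trans (Finset.sum_mul _ _ _).symm
  rw [heq]
  ring

set_option maxHeartbeats 2000000 in
/-- Corollary 1.4(ii), explicit solution in the unit ball: if `v` solves the radial ODE
`v'' + ((N-1)/r) v' = v^p` with `v(0) = 1`, `v'(0) = 0`, and `α, ε` are such that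
`α v(1/ε) = -t₀` with `ε = √(α^{1-p}/(-λ))`, then `u(x) = t₀ + α v(|x|/ε)` is a classical
solution of `-Δu = λ ((u - t₀)⁺)^p` in `B₁` vanishing on the unit sphere. -/
theorem stmt_10 {N : ℕ} (hN : 2 ≤ N) (t₀ : ℝ) (ht₀ : t₀ < 0)
    (p : ℝ) (hp0 : 0 ≤ p) (hp1 : p ≤ 1) (lam : ℝ) (hlam : lam < 0)
    (v : ℝ → ℝ) (hv : ContDiffOn ℝ 2 v (Ici 0)) (hvpos : ∀ r ≥ (0:ℝ), 0 < v r)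
    (hv0 : v 0 = 1) (hv'0 : derivWithin v (Ici 0) 0 = 0)
    (hode : ∀ r > (0:ℝ), deriv (deriv v) r + (((N:ℝ) - 1)/r) * deriv v r = v r ^ p)
    (α : ℝ) (hα : 0 < α) (ε : ℝ) (hε : ε = Real.sqrt (α ^ (1 - p) / (-lam)))
    (hmatch : α * v (1/ε) = -t₀) :
    ContinuousOn (fun x : EuclideanSpace ℝ (Fin N) => t₀ + α * v (‖x‖ / ε))
        (Metric.closedBall 0 1) ∧
      ContDiffOn ℝ 2 (fun x : EuclideanSpace ℝ (Fin N) => t₀ + α * v (‖x‖ / ε))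
        (Metric.ball 0 1) ∧
      (∀ x ∈ Metric.ball (0 : EuclideanSpace ℝ (Fin N)) 1,
        -laplacian (fun y => t₀ + α * v (‖y‖ / ε)) x
          = lam * (max ((t₀ + α * v (‖x‖ / ε)) - t₀) 0) ^ p) ∧
      (∀ x : EuclideanSpace ℝ (Fin N), ‖x‖ = 1 → t₀ + α * v (‖x‖ / ε) = 0) := by
  classical
  set dv := derivWithin v (Ici 0) with hdv
  set ddv := derivWithin dv (Ici 0) with hddv
  have hvc : ContinuousOn v (Ici 0) := hv.continuousOn
  have hdvC : ContinuousOn dv (Ici 0) :=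
    hv.continuousOn_derivWithin (uniqueDiffOn_Ici 0) (by norm_num)
  have hdvC1 : ContDiffOn ℝ 1 dv (Ici 0) :=
    hv.derivWithin (uniqueDiffOn_Ici 0) (by norm_num)
  have hddvC : ContinuousOn ddv (Ici 0) :=
    hdvC1.continuousOn_derivWithin (uniqueDiffOn_Ici 0) le_rfl
  have hdvAt : ∀ r > (0:ℝ), HasDerivAt v (dv r) r := by
    intro r hr
    have hmem : Ici (0:ℝ) ∈ 𝓝 r := Ici_mem_nhds hr
    have h1 : DifferentiableAt ℝ v r := (hv.contDiffAt hmem).differentiableAt (by norm_num)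
    have := h1.hasDerivAt
    rwa [← derivWithin_of_mem_nhds hmem] at this
  have hddvAt : ∀ r > (0:ℝ), HasDerivAt dv (ddv r) r := by
    intro r hr
    have hmem : Ici (0:ℝ) ∈ 𝓝 r := Ici_mem_nhds hr
    have h1 : DifferentiableAt ℝ dv r := (hdvC1.contDiffAt hmem).differentiableAt (by norm_num)
    have := h1.hasDerivAt
    rwa [← derivWithin_of_mem_nhds hmem] at this
  have hodes : ∀ r > (0:ℝ), ddv r + (((N:ℝ) - 1)/r) * dv r = v r ^ p := by
    intro r hr
    have hmem : Ici (0:ℝ) ∈ 𝓝 r := Ici_mem_nhds hr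
    have e1 : deriv v r = dv r := (derivWithin_of_mem_nhds hmem).symm
    have e2 : deriv (deriv v) r = ddv r := by
      have heq : deriv v =ᶠ[𝓝 r] dv := by
        filter_upwards [Ioi_mem_nhds hr] with t ht
        exact (derivWithin_of_mem_nhds (Ici_mem_nhds (mem_Ioi.1 ht))).symm
      rw [heq.deriv_eq, ← derivWithin_of_mem_nhds hmem]
    have := hode r hr
    rwa [e1, e2] at this
  -- the nonlinearity
  set h : ℝ → ℝ := fun r => v r ^ p with hh
  set dh : ℝ → ℝ := fun r => p * v r ^ (p - 1) * dv r with hdh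
  have hhd : ∀ r > (0:ℝ), HasDerivAt h (dh r) r := by
    intro r hr
    have hrp := (Real.hasDerivAt_rpow_const (x := v r) (p := p)
      (Or.inl (hvpos r hr.le).ne'))
    have := hrp.comp r (hdvAt r hr)
    simpa [hh, hdh, mul_comm, mul_assoc, mul_left_comm, Function.comp_def] using this
  have hhc : ContinuousOn h (Ici 0) := by
    intro r hr
    exact (Real.continuousAt_rpow_const (v r) p
      (Or.inl (hvpos r hr).ne')).comp_continuousWithinAt (hvc r hr)
  have hh0 : h 0 = 1 := by simp [hh, hv0]
  have hdv0 : dv 0 = 0 := hv'0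
  -- limits at 0+
  have hdvlim : Tendsto dv (𝓝[>] 0) (𝓝 0) := by
    have := (hdvC 0 (by simp)).tendsto
    rw [hdv0] at this
    exact this.mono_left (nhdsWithin_mono _ Ioi_subset_Ici_self)
  have hddvlim : Tendsto ddv (𝓝[>] 0) (𝓝 (ddv 0)) :=
    ((hddvC 0 (by simp)).tendsto).mono_left (nhdsWithin_mono _ Ioi_subset_Ici_self)
  have hhlim : Tendsto h (𝓝[>] 0) (𝓝 1) := by
    have := (hhc 0 (by simp)).tendsto
    rw [hh0] at this
    exact this.mono_left (nhdsWithin_mono _ Ioi_subset_Ici_self)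
  have hvlim : Tendsto v (𝓝[>] 0) (𝓝 1) := by
    have := (hvc 0 (by simp)).tendsto
    rw [hv0] at this
    exact this.mono_left (nhdsWithin_mono _ Ioi_subset_Ici_self)
  -- limit 1 : dv r / r → ddv 0
  have limit1 : Tendsto (fun r => dv r / r) (𝓝[>] 0) (𝓝 (ddv 0)) := by
    apply HasDerivAt.lhopital_zero_nhdsGT (f' := ddv) (g' := fun _ => (1:ℝ))
    · filter_upwards [self_mem_nhdsWithin] with r hr
      exact hddvAt r hr
    · filter_upwards with r; exact hasDerivAt_id r
    · filter_upwards with r; exact one_ne_zero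
    · exact hdvlim
    · exact tendsto_id.mono_left nhdsWithin_le_nhds
    · simpa using hddvlim
  -- value of ddv 0
  have hNpos : (0:ℝ) < (N:ℝ) := by
    have : 0 < N := lt_of_lt_of_le (by norm_num) hN
    exact_mod_cast this
  have hκ : ddv 0 = 1 / N := by
    have h2 : Tendsto ddv (𝓝[>] 0) (𝓝 (1 - ((N:ℝ) - 1) * ddv 0)) := by
      have hcomb : Tendsto (fun r => h r - ((N:ℝ) - 1) * (dv r / r)) (𝓝[>] 0)
          (𝓝 (1 - ((N:ℝ) - 1) * ddv 0)) := hhlim.sub ((limit1.const_mul _))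
      apply hcomb.congr'
      filter_upwards [self_mem_nhdsWithin] with r hr
      have hr' : (0:ℝ) < r := hr
      have := hodes r hr'
      field_simp at this ⊢
      linarith
    have := tendsto_nhds_unique hddvlim h2
    have hN1 : (N:ℝ) ≠ 0 := ne_of_gt hNpos
    field_simp at this ⊢
    linarith
  -- Z = dv r / r with value 1/N at 0
  set Z : ℝ → ℝ := fun r => if r = 0 then 1/(N:ℝ) else dv r / r with hZ
  have hZval : ∀ r > (0:ℝ), Z r = dv r / r := by
    intro r hr; simp [hZ, ne_of_gt hr]
  have hZ0 : Z 0 = 1/(N:ℝ) := by simp [hZ]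
  have limit1' : Tendsto Z (𝓝[>] 0) (𝓝 (1/(N:ℝ))) := by
    rw [← hκ] at *
    apply limit1.congr'
    filter_upwards [self_mem_nhdsWithin] with r hr
    exact (hZval r hr).symm
  have hZc : ContinuousOn Z (Ici 0) := by
    intro r hr
    rcases eq_or_lt_of_le (mem_Ici.1 hr) with h' | h'
    · subst h'
      unfold ContinuousWithinAt
      rw [hZ0, show (Ici (0:ℝ)) = insert 0 (Ioi 0) by rw [Ioi_insert], nhdsWithin_insert,
        Filter.tendsto_sup]
      exact ⟨hZ0 ▸ tendsto_pure_nhds Z 0, limit1'⟩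
    · have hmem : Ioi (0:ℝ) ∈ 𝓝[Ici 0] r := nhdsWithin_le_nhds (Ioi_mem_nhds h')
      apply ContinuousWithinAt.congr_of_eventuallyEq (f := fun t => dv t / t)
      · exact ((hdvC r hr).mono Ioi_subset_Ici_self |>.mono_of_mem_nhdsWithin hmem
          |>.div (continuousWithinAt_id) (ne_of_gt h'))
      · filter_upwards [hmem] with t ht
        exact hZval t ht
      · exact hZval r h'
  set gZ : ℝ → ℝ := fun r => (h r - (N:ℝ) * Z r) / r with hgZ
  have hZd : ∀ r > (0:ℝ), HasDerivAt Z (gZ r) r := by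
    intro r hr
    have hq : HasDerivAt (fun t => dv t / t) ((ddv r * r - dv r * 1) / r ^ 2) r :=
      (hddvAt r hr).div (hasDerivAt_id r) (ne_of_gt hr)
    have heq : (ddv r * r - dv r * 1) / r ^ 2 = gZ r := by
      have := hodes r hr
      rw [hgZ]
      dsimp only
      rw [hZval r hr]
      have hr0 : r ≠ 0 := ne_of_gt hr
      field_simp at this ⊢
      have hhr : h r = v r ^ p := rfl
      rw [hhr]
      linear_combination this
    rw [heq] at hq
    apply hq.congr_of_eventuallyEq
    filter_upwards [Ioi_mem_nhds hr] with t ht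
    exact hZval t (mem_Ioi.1 ht)
  -- ε basic facts
  have hlam' : (0:ℝ) < -lam := by linarith
  have hXpos : (0:ℝ) < α ^ (1 - p) / (-lam) :=
    div_pos (Real.rpow_pos_of_pos hα _) hlam'
  have hεpos : 0 < ε := hε ▸ Real.sqrt_pos.2 hXpos
  have hε2 : ε ^ 2 = α ^ (1 - p) / (-lam) := by
    rw [hε, Real.sq_sqrt hXpos.le]
  have hmul : α ^ p * α ^ (1 - p) = α := by
    rw [← Real.rpow_add hα]
    norm_num
  have keyc : α / ε ^ 2 = -lam * α ^ p := by
    rw [hε2]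
    have hlam0 : -lam ≠ 0 := ne_of_gt hlam'
    have hαp : α ^ (1-p) ≠ 0 := (Real.rpow_pos_of_pos hα _).ne'
    field_simp
    linear_combination lam * hmul
  -- limit 2 : gZ r / r → ℓ₂
  obtain ⟨M, hM⟩ : ∃ M, N = M + 2 := ⟨N - 2, by omega⟩
  set ℓ₂ : ℝ := p / ((N:ℝ) * ((N:ℝ) + 2)) with hℓ₂
  have limit2 : Tendsto (fun r => gZ r / r) (𝓝[>] 0) (𝓝 ℓ₂) := by
    have hbig : Tendsto (fun r => (r^(M+2) * h r - (N:ℝ) * (r^(M+1) * dv r)) / r^(M+4))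
        (𝓝[>] 0) (𝓝 ℓ₂) := by
      apply HasDerivAt.lhopital_zero_nhdsGT
        (f' := fun r => r^(M+2) * dh r) (g' := fun r => ((M:ℝ)+4) * r^(M+3))
      · filter_upwards [self_mem_nhdsWithin] with r hr
        have hr' : (0:ℝ) < r := hr
        have h1 := (hasDerivAt_pow (M+2) r).mul (hhd r hr')
        have h2 := ((hasDerivAt_pow (M+1) r).mul (hddvAt r hr')).const_mul (N:ℝ)
        have h3 := h1.sub h2
        refine h3.congr_deriv ?_
        symm
        have ode' : ddv r * r + ((N:ℝ) - 1) * dv r = h r * r := by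
          have := hodes r hr'
          have hr0 : r ≠ 0 := ne_of_gt hr'
          field_simp at this
          linarith
        rw [hM] at ode' ⊢
        push_cast at ode' ⊢
        linear_combination ((M:ℝ)+2) * r^M * ode'
      · filter_upwards with r
        have := hasDerivAt_pow (M+4) r
        push_cast at this ⊢
        convert this using 1
        try norm_num
      · filter_upwards [self_mem_nhdsWithin] with r hr
        have hr' : (0:ℝ) < r := hr
        positivity
      · have t1 : Tendsto (fun r : ℝ => r^(M+2) * h r) (𝓝[>] 0) (𝓝 0) := by
          have := ((continuous_pow (M+2)).tendsto (0:ℝ)).mono_left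
            (nhdsWithin_le_nhds (s := Ioi 0))
          have := this.mul hhlim
          simpa using this
        have t2 : Tendsto (fun r : ℝ => (N:ℝ) * (r^(M+1) * dv r)) (𝓝[>] 0) (𝓝 0) := by
          have hp1' := ((continuous_pow (M+1)).tendsto (0:ℝ)).mono_left
            (nhdsWithin_le_nhds (s := Ioi 0))
          have := (hp1'.mul hdvlim).const_mul (N:ℝ)
          simpa using this
        simpa using t1.sub t2
      · have := ((continuous_pow (M+4)).tendsto (0:ℝ)).mono_left
          (nhdsWithin_le_nhds (s := Ioi 0))
        simpa using this
      · have hmain : Tendsto (fun r => dh r / r / ((M:ℝ)+4)) (𝓝[>] 0)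
            (𝓝 ℓ₂) := by
          have hrp : Tendsto (fun r => v r ^ (p-1)) (𝓝[>] 0) (𝓝 1) := by
            have hc := (Real.continuousAt_rpow_const 1 (p-1) (Or.inl one_ne_zero)).tendsto
            have := hc.comp hvlim
            simpa [Function.comp_def, Real.one_rpow] using this
          have hprod : Tendsto (fun r => p * v r ^ (p-1) * (dv r / r)) (𝓝[>] 0)
              (𝓝 (p * 1 * (1/(N:ℝ)))) := by
            exact ((tendsto_const_nhds.mul hrp).mul (hκ ▸ limit1))
          have heq : ∀ r > (0:ℝ), p * v r ^ (p-1) * (dv r / r) = dh r / r := by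
            intro r hr
            rw [hdh]
            ring
          have := (hprod.congr' (by
            filter_upwards [self_mem_nhdsWithin] with r hr
            exact heq r hr)).div_const ((M:ℝ)+4)
          convert this using 2
          rw [hℓ₂, hM]
          push_cast
          have h2 : (M:ℝ) + 2 ≠ 0 := by positivity
          have h4 : (M:ℝ) + 4 ≠ 0 := by positivity
          field_simp
          ring
        apply hmain.congr'
        filter_upwards [self_mem_nhdsWithin] with r hr
        have hr' : (0:ℝ) < r := hr
        have hr0 : r ≠ 0 := ne_of_gt hr'
        rw [pow_succ]
        field_simp
        ring
    apply hbig.congr'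
    filter_upwards [self_mem_nhdsWithin] with r hr
    have hr' : (0:ℝ) < r := hr
    have hr0 : r ≠ 0 := ne_of_gt hr'
    rw [hgZ]
    dsimp only
    rw [hZval r hr']
    field_simp
    ring
  -- first application of the sqrt substitution
  set G₁ : ℝ → ℝ := fun s => Z (Real.sqrt s) / 2 with hG₁def
  obtain ⟨hV, hG₁c⟩ := lem_sqrtsub v dv G₁ (1/(N:ℝ)) hvc hdvAt
    (hdvC.mono Ioi_subset_Ici_self) (hκ ▸ limit1)
    (by
      intro s hs
      have hss : (0:ℝ) < Real.sqrt s := Real.sqrt_pos.2 hs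
      rw [hG₁def]
      dsimp only
      rw [hZval _ hss, div_div, mul_comm])
    (by rw [hG₁def]; dsimp only; rw [Real.sqrt_zero, hZ0])
  -- second application
  set G₂ : ℝ → ℝ := fun s => if s = 0 then ℓ₂/2 else gZ (Real.sqrt s) / (2 * Real.sqrt s)
    with hG₂def
  have hgZc : ContinuousOn gZ (Ioi 0) := by
    apply ContinuousOn.div
    · exact (hhc.mono Ioi_subset_Ici_self).sub
        (continuousOn_const.mul (hZc.mono Ioi_subset_Ici_self))
    · exact continuousOn_id
    · intro r hr; exact ne_of_gt (mem_Ioi.1 hr)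
  obtain ⟨hZV, hG₂c⟩ := lem_sqrtsub Z gZ G₂ ℓ₂ hZc hZd hgZc limit2
    (fun s hs => by rw [hG₂def]; exact if_neg (ne_of_gt hs))
    (by rw [hG₂def]; exact if_pos rfl)
  -- extension to a C² function on ℝ
  obtain ⟨g, hgC2, hgeq, hgd1, hgd2⟩ := lem_ext2 (fun t => v (Real.sqrt t)) G₁
    (fun s => G₂ s / 2) hV (fun s hs => (hZV s hs).div_const 2) (hG₂c.div_const 2)
  -- the pointwise radial identity
  have key : ∀ σ ≥ (0:ℝ), 2*(N:ℝ)*G₁ σ + 4*σ*(G₂ σ/2) = v (Real.sqrt σ) ^ p := by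
    intro σ hσ
    rcases eq_or_lt_of_le hσ with h' | h'
    · subst h'
      rw [hG₁def, hG₂def]
      dsimp only
      rw [if_pos rfl, Real.sqrt_zero, hZ0, hv0, Real.one_rpow]
      have hN0 : (N:ℝ) ≠ 0 := ne_of_gt hNpos
      field_simp
      try ring
    · have hss : (0:ℝ) < Real.sqrt σ := Real.sqrt_pos.2 h'
      have hsq : Real.sqrt σ ^ 2 = σ := Real.sq_sqrt (le_of_lt h')
      rw [hG₁def, hG₂def]
      dsimp only
      rw [if_neg (ne_of_gt h'), hZval _ hss, hgZ]
      dsimp only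
      rw [hZval _ hss]
      have hhval : h (Real.sqrt σ) = v (Real.sqrt σ) ^ p := rfl
      rw [← hhval, ← hsq]
      have hs0 : Real.sqrt σ ≠ 0 := ne_of_gt hss
      field_simp
      rw [Real.sqrt_sq hss.le]
      ring
  -- the extended profile Φ
  set E' := EuclideanSpace ℝ (Fin N)
  set Φ : ℝ → ℝ := fun s => t₀ + α * g (s / ε^2) with hΦdef
  have hqinner : ∀ s:ℝ, HasDerivAt (fun t : ℝ => t / ε^2) (1/ε^2) s := fun s =>
    (hasDerivAt_id s).div_const _
  have hgdiff : Differentiable ℝ g := hgC2.differentiable (by norm_num)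
  have hg1C : ContDiff ℝ 1 (deriv g) := by
    have := (contDiff_succ_iff_deriv (n := 1)).1 (by
      rw [show (1:WithTop ℕ∞) + 1 = 2 from by norm_num]; exact hgC2)
    exact this.2.2
  have hg1diff : Differentiable ℝ (deriv g) := hg1C.differentiable (by norm_num)
  have hΦd : ∀ s, HasDerivAt Φ (α * deriv g (s/ε^2) / ε^2) s := by
    intro s
    have h1 := ((hgdiff (s/ε^2)).hasDerivAt).comp s (hqinner s)
    have h2 := (h1.const_mul α).const_add t₀
    exact h2.congr_deriv (by ring)
  have hΦderiv : deriv Φ = fun s => α * deriv g (s/ε^2) / ε^2 :=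
    funext fun s => (hΦd s).deriv
  have hΦd2 : ∀ s, HasDerivAt (deriv Φ) (α * deriv (deriv g) (s/ε^2) / ε^2 / ε^2) s := by
    intro s
    rw [hΦderiv]
    have h1 := ((hg1diff (s/ε^2)).hasDerivAt).comp s (hqinner s)
    have h2 := (h1.const_mul α).div_const (ε^2)
    exact h2.congr_deriv (by ring)
  have hΦderiv2 : deriv (deriv Φ) = fun s => α * deriv (deriv g) (s/ε^2)/ε^2/ε^2 :=
    funext fun s => (hΦd2 s).deriv
  have hΦC2 : ContDiff ℝ 2 Φ :=
    contDiff_const.add (contDiff_const.mul (hgC2.comp (contDiff_id.div_const _)))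
  -- function equality
  have hnorm : ∀ y : E', ‖y‖ = Real.sqrt (∑ i, y i ^ 2) := by
    intro y
    rw [EuclideanSpace.norm_eq]
    congr 1
    exact Finset.sum_congr rfl fun i _ => by rw [Real.norm_eq_abs, sq_abs]
  have hSnn : ∀ y : E', (0:ℝ) ≤ ∑ i, y i ^ 2 := fun y =>
    Finset.sum_nonneg fun i _ => sq_nonneg _
  have hsqdiv : ∀ s:ℝ, 0 ≤ s → Real.sqrt (s / ε^2) = Real.sqrt s / ε := by
    intro s hs
    rw [Real.sqrt_div hs, Real.sqrt_sq hεpos.le]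
  have hufun : (fun y : E' => t₀ + α * v (‖y‖ / ε)) = fun y => Φ (∑ i, y i^2) := by
    funext y
    rw [hΦdef]
    dsimp only
    rw [hgeq _ (div_nonneg (hSnn y) (sq_nonneg ε)), hsqdiv _ (hSnn y), hnorm y]
  have hqC2 : ContDiff ℝ 2 (fun y : E' => ∑ i, y i ^ 2) := by
    apply ContDiff.sum
    intro i _
    exact ((EuclideanSpace.proj (𝕜 := ℝ) i).contDiff).pow 2
  refine ⟨?_, ?_, ?_, ?_⟩
  · rw [hufun]
    exact (hΦC2.comp hqC2).continuous.continuousOn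
  · rw [hufun]
    exact (hΦC2.comp hqC2).contDiffOn
  · intro x hx
    rw [hufun, lem_lap Φ hΦC2 x]
    set S := ∑ i, x i ^ 2 with hSdef
    have hS0 : (0:ℝ) ≤ S := hSnn x
    have hσ0 : (0:ℝ) ≤ S / ε^2 := div_nonneg hS0 (sq_nonneg ε)
    rw [hΦderiv2, hΦderiv]
    dsimp only
    rw [hgd1 _ hσ0, hgd2 _ hσ0]
    have hkey := key _ hσ0
    have hxnn : (0:ℝ) ≤ ‖x‖ / ε := div_nonneg (norm_nonneg x) hεpos.le
    have hmax : max ((t₀ + α * v (‖x‖/ε)) - t₀) 0 = α * v (‖x‖/ε) := by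
      rw [add_sub_cancel_left]
      exact max_eq_left (mul_nonneg hα.le (hvpos _ hxnn).le)
    rw [hmax]
    have hR : Real.sqrt (S/ε^2) = ‖x‖/ε := by rw [hsqdiv _ hS0, ← hnorm x]
    rw [← hR, Real.mul_rpow hα.le (hvpos _ (hR ▸ hxnn)).le]
    linear_combination (-(α/ε^2)) * hkey + (-(v (Real.sqrt (S/ε^2)) ^ p)) * keyc
  · intro x hx
    rw [hx]
    linarith [hmatch]
end

section
/- Let f satisfy condition (1.2) with f(t) > 0 for every t ∈ ℝ and f(t) → 0 as t → −∞. Let α, γ : (−∞, 0) → (0, ∞) satisfy γ(β) → 0 and β/α(β) → A as β → −∞, where A < 0, and let g : (−∞, −A) → (0, ∞) be continuous with f(α(β) t + β)/γ(β) → g(t) as β → −∞, locally uniformly in t ∈ (−∞, −A). Let v be continuous on the closure of Ω, twice continuously differentiable on Ω, with Δv(x) = g(v(x) − A) and v(x) < 0 for every x ∈ Ω, and v(x) = 0 for every x ∈ ∂Ω. Suppose that for each λ < 0, u_λ is a classical solution of (P_f^λ) on Ω, and that β_λ < 0 satisfies −λ = α(β_λ)/γ(β_λ) with β_λ → −∞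 as λ → −∞. Then u_λ/α(β_λ) → v uniformly on every compact subset of Ω as λ → −∞. -/
open Set MeasureTheory Filter Topology

lemma min_second_deriv {ψ Ψ : ℝ → ℝ} {d : ℝ}
    (hψ : ∀ᶠ t in 𝓝 (0:ℝ), HasDerivAt ψ (Ψ t) t)
    (hΨ : HasDerivAt Ψ d 0)
    (hmin : IsLocalMin ψ 0) : 0 ≤ d := by
  by_contra hd
  push_neg at hd
  have h0 : Ψ 0 = 0 := by
    have h1 : deriv ψ 0 = Ψ 0 := (hψ.self_of_nhds).deriv
    rw [hmin.deriv_eq_zero] at h1; exact h1.symm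
  have hs : Tendsto (slope Ψ 0) (𝓝[>] 0) (𝓝 d) :=
    (hasDerivAt_iff_tendsto_slope.1 hΨ).mono_left
      (nhdsWithin_mono _ (fun x hx => ne_of_gt hx))
  have hneg : ∀ᶠ t in 𝓝[>] (0:ℝ), Ψ t < 0 := by
    filter_upwards [hs.eventually (eventually_lt_nhds hd), self_mem_nhdsWithin] with t ht ht0
    have : slope Ψ 0 t = Ψ t / t := by simp [slope_def_field, h0]
    rw [this] at ht
    have := mul_neg_of_neg_of_pos ht (show (0:ℝ) < t from ht0)
    rwa [div_mul_cancel₀] at this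
    exact ne_of_gt ht0
  have hall : ∀ᶠ t in 𝓝[>] (0:ℝ),
      HasDerivAt ψ (Ψ t) t ∧ Ψ t < 0 ∧ ψ 0 ≤ ψ t := by
    filter_upwards [hψ.filter_mono nhdsWithin_le_nhds, hneg,
      hmin.filter_mono nhdsWithin_le_nhds] with t h1 h2 h3
    exact ⟨h1, h2, h3⟩
  obtain ⟨r, hr0, hr⟩ := (mem_nhdsGT_iff_exists_Ioc_subset).1 hall
  have hcont : ContinuousOn ψ (Icc 0 r) := by
    intro t ht
    rcases eq_or_lt_of_le ht.1 with h | h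
    · subst h; exact (hψ.self_of_nhds.continuousAt).continuousWithinAt
    · exact ((hr ⟨h, ht.2⟩).1.continuousAt).continuousWithinAt
  have hanti : StrictAntiOn ψ (Icc 0 r) := by
    apply strictAntiOn_of_deriv_neg (convex_Icc 0 r) hcont
    intro t ht
    rw [interior_Icc] at ht
    have h := hr ⟨ht.1, le_of_lt ht.2⟩
    rw [h.1.deriv]; exact h.2.1
  have h1 : ψ r < ψ 0 := hanti ⟨le_rfl, le_of_lt hr0⟩ ⟨le_of_lt hr0, le_rfl⟩ hr0
  have h2 : ψ 0 ≤ ψ r := (hr ⟨hr0, le_rfl⟩).2.2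
  linarith

lemma laplacian_nonneg_of_isLocalMin {N : ℕ} {Ω : Set (EuclideanSpace ℝ (Fin N))}
    (hΩo : IsOpen Ω) {φ : EuclideanSpace ℝ (Fin N) → ℝ} (hφ : ContDiffOn ℝ 2 φ Ω)
    {x0 : EuclideanSpace ℝ (Fin N)} (hx0 : x0 ∈ Ω) (hmin : IsLocalMin φ x0) :
    0 ≤ laplacian φ x0 := by
  have hCA : ContDiffAt ℝ 2 φ x0 := hφ.contDiffAt (hΩo.mem_nhds hx0)
  have hg1 : HasFDerivAt (fderiv ℝ φ) (fderiv ℝ (fderiv ℝ φ) x0) x0 :=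
    ((hCA.fderiv_right (m := 1) (le_refl 2)).differentiableAt one_ne_zero).hasFDerivAt
  apply Finset.sum_nonneg
  intro i _
  set e : EuclideanSpace ℝ (Fin N) := EuclideanSpace.single i 1 with he
  have hLd : ∀ t : ℝ, HasDerivAt (fun t : ℝ => x0 + t • e) e t := by
    intro t
    simpa using ((hasDerivAt_id t).smul_const e).const_add x0
  have hL0 : x0 + (0:ℝ) • e = x0 := by simp
  have hLcont : Tendsto (fun t : ℝ => x0 + t • e) (𝓝 0) (𝓝 x0) := by
    have := (hLd 0).continuousAt.tendsto
    rwa [hL0] at this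
  have hmem : ∀ᶠ t in 𝓝 (0:ℝ), x0 + t • e ∈ Ω := hLcont.eventually (hΩo.mem_nhds hx0)
  have hψ : ∀ᶠ t in 𝓝 (0:ℝ),
      HasDerivAt (fun t : ℝ => φ (x0 + t • e)) (fderiv ℝ φ (x0 + t • e) e) t := by
    filter_upwards [hmem] with t ht
    have hdφ : HasFDerivAt φ (fderiv ℝ φ (x0 + t • e)) (x0 + t • e) :=
      ((hφ.contDiffAt (hΩo.mem_nhds ht)).differentiableAt two_ne_zero).hasFDerivAt
    exact hdφ.comp_hasDerivAt t (hLd t)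
  have hΨ : HasDerivAt (fun t : ℝ => fderiv ℝ φ (x0 + t • e) e)
      (fderiv ℝ (fderiv ℝ φ) x0 e e) 0 := by
    have hc : HasFDerivAt (fun y => (ContinuousLinearMap.apply ℝ ℝ e) (fderiv ℝ φ y))
        ((ContinuousLinearMap.apply ℝ ℝ e).comp (fderiv ℝ (fderiv ℝ φ) x0)) x0 :=
      (ContinuousLinearMap.apply ℝ ℝ e).hasFDerivAt.comp x0 hg1
    have hc' : HasFDerivAt (fun y => (ContinuousLinearMap.apply ℝ ℝ e) (fderiv ℝ φ y))
        ((ContinuousLinearMap.apply ℝ ℝ e).comp (fderiv ℝ (fderiv ℝ φ) x0)) (x0 + (0:ℝ) • e) := by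
      rw [hL0]; exact hc
    have h2 := hc'.comp_hasDerivAt (0:ℝ) (hLd 0)
    exact h2
  have hminψ : IsLocalMin (fun t : ℝ => φ (x0 + t • e)) 0 := by
    have := hLcont.eventually hmin
    simpa [IsLocalMin, IsMinFilter, hL0] using this
  have key : 0 ≤ fderiv ℝ (fderiv ℝ φ) x0 e e := min_second_deriv hψ hΨ hminψ
  rw [iteratedFDeriv_two_apply]
  simpa using key

lemma laplacian_combo {N : ℕ} {Ω : Set (EuclideanSpace ℝ (Fin N))} (hΩo : IsOpen Ω)
    {p q : EuclideanSpace ℝ (Fin N) → ℝ}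
    (hp : ContDiffOn ℝ 2 p Ω) (hq : ContDiffOn ℝ 2 q Ω) (s t r : ℝ)
    {x : EuclideanSpace ℝ (Fin N)} (hx : x ∈ Ω) :
    laplacian (fun y => s * p y + t * q y + r) x
      = s * laplacian p x + t * laplacian q x := by
  have hdp : ∀ y ∈ Ω, DifferentiableAt ℝ p y := fun y hy =>
    (hp.contDiffAt (hΩo.mem_nhds hy)).differentiableAt two_ne_zero
  have hdq : ∀ y ∈ Ω, DifferentiableAt ℝ q y := fun y hy =>
    (hq.contDiffAt (hΩo.mem_nhds hy)).differentiableAt two_ne_zero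
  have h1 : fderiv ℝ (fun y => s * p y + t * q y + r) =ᶠ[𝓝 x]
      fun y => s • fderiv ℝ p y + t • fderiv ℝ q y := by
    filter_upwards [hΩo.mem_nhds hx] with y hy
    have Dp := hdp y hy
    have Dq := hdq y hy
    rw [show (fun y => s * p y + t * q y + r) = (fun y => (s * p y + t * q y) + r) from rfl,
      fderiv_add_const, fderiv_fun_add (Dp.const_mul s) (Dq.const_mul t),
      fderiv_const_mul Dp s, fderiv_const_mul Dq t]
  have hp2 : DifferentiableAt ℝ (fderiv ℝ p) x :=
    ((hp.contDiffAt (hΩo.mem_nhds hx)).fderiv_right (m := 1) (le_refl 2)).differentiableAt one_ne_zero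
  have hq2 : DifferentiableAt ℝ (fderiv ℝ q) x :=
    ((hq.contDiffAt (hΩo.mem_nhds hx)).fderiv_right (m := 1) (le_refl 2)).differentiableAt one_ne_zero
  have h2 : fderiv ℝ (fderiv ℝ (fun y => s * p y + t * q y + r)) x
      = s • fderiv ℝ (fderiv ℝ p) x + t • fderiv ℝ (fderiv ℝ q) x := by
    rw [h1.fderiv_eq, fderiv_fun_add (f := fun y => s • fderiv ℝ p y) (g := fun y => t • fderiv ℝ q y)
        (hp2.const_smul s) (hq2.const_smul t),
      fderiv_fun_const_smul hp2 s, fderiv_fun_const_smul hq2 t]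
  unfold laplacian
  simp only [iteratedFDeriv_two_apply, h2]
  simp only [ContinuousLinearMap.add_apply, ContinuousLinearMap.coe_smul',
    Pi.smul_apply, smul_eq_mul]
  rw [Finset.sum_add_distrib, ← Finset.mul_sum, ← Finset.mul_sum]

lemma nonneg_on_closure {N : ℕ} {Ω : Set (EuclideanSpace ℝ (Fin N))}
    (hΩo : IsOpen Ω) (hΩb : Bornology.IsBounded Ω)
    {φ : EuclideanSpace ℝ (Fin N) → ℝ}
    (hc : ContinuousOn φ (closure Ω)) (hd : ContDiffOn ℝ 2 φ Ω)
    (hfr : ∀ x ∈ frontier Ω, 0 ≤ φ x)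
    (hlap : ∀ x ∈ Ω, φ x < 0 → laplacian φ x < 0) :
    ∀ x ∈ closure Ω, 0 ≤ φ x := by
  intro x hx
  by_contra hneg
  push_neg at hneg
  have hcomp : IsCompact (closure Ω) :=
    Metric.isCompact_of_isClosed_isBounded isClosed_closure hΩb.closure
  obtain ⟨x0, hx0, hmin⟩ := hcomp.exists_isMinOn ⟨x, hx⟩ hc
  have hφx0 : φ x0 < 0 := lt_of_le_of_lt (hmin hx) hneg
  have hx0Ω : x0 ∈ Ω := by
    by_contra hno
    have : x0 ∈ frontier Ω := by
      rw [hΩo.frontier_eq]; exact ⟨hx0, hno⟩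
    exact absurd (hfr x0 this) (not_le.2 hφx0)
  have hloc : IsLocalMin φ x0 :=
    hmin.isLocalMin (Filter.mem_of_superset (hΩo.mem_nhds hx0Ω) subset_closure)
  exact absurd (laplacian_nonneg_of_isLocalMin hΩo hd hx0Ω hloc)
    (not_le.2 (hlap x0 hx0Ω hφx0))


set_option maxHeartbeats 2000000 in
/-- Theorem 1.6(ii): if `f > 0`, `f(t) → 0` as `t → -∞`, `β/α(β) → A < 0` and
`f(α(β)t + β)/γ(β) → g(t)` locally uniformly in `t < -A`, then `u_λ/α(β_λ)` converges
locally uniformly in `Ω` to the (negative) solution `v` of `Δ v = g(v - A)`, `v = 0` on `∂Ω`. -/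
theorem stmt_12 {N : ℕ} (hN : 2 ≤ N) (Ω : Set (EuclideanSpace ℝ (Fin N)))
    (hΩo : IsOpen Ω) (hΩb : Bornology.IsBounded Ω) (hΩne : Ω.Nonempty)
    (f : ℝ → ℝ) (hf : Cond12 f) (hfpos : ∀ t, 0 < f t)
    (hflim : Tendsto f atBot (𝓝 0))
    (α γ : ℝ → ℝ) (hαpos : ∀ β < (0:ℝ), 0 < α β) (hγpos : ∀ β < (0:ℝ), 0 < γ β)
    (hγ0 : Tendsto γ atBot (𝓝 0))
    (A : ℝ) (hA : A < 0) (hβα : Tendsto (fun β => β / α β) atBot (𝓝 A))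
    (g : ℝ → ℝ) (hgc : ContinuousOn g (Iio (-A))) (hgpos : ∀ t < -A, 0 < g t)
    (hconv : TendstoLocallyUniformlyOn (fun β t => f (α β * t + β) / γ β) g atBot (Iio (-A)))
    (v : EuclideanSpace ℝ (Fin N) → ℝ)
    (hvc : ContinuousOn v (closure Ω)) (hvd : ContDiffOn ℝ 2 v Ω)
    (hveq : ∀ x ∈ Ω, laplacian v x = g (v x - A)) (hvneg : ∀ x ∈ Ω, v x < 0)
    (hvbd : ∀ x ∈ frontier Ω, v x = 0)
    (u : ℝ → EuclideanSpace ℝ (Fin N) → ℝ)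
    (hu : ∀ lam < (0:ℝ), IsClassicalSolution Ω lam f (u lam))
    (β : ℝ → ℝ) (hβneg : ∀ lam < (0:ℝ), β lam < 0)
    (hβeq : ∀ lam < (0:ℝ), -lam = α (β lam) / γ (β lam))
    (hβatBot : Tendsto β atBot atBot) :
    ∀ K ⊆ Ω, IsCompact K →
      TendstoUniformlyOn (fun lam x => u lam x / α (β lam)) v atBot K := by
  intro K hK _
  rw [Metric.tendstoUniformlyOn_iff]
  intro ε₀ hε₀
  -- basic facts about v
  have hcomp : IsCompact (closure Ω) :=
    Metric.isCompact_of_isClosed_isBounded isClosed_closure hΩb.closure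
  obtain ⟨xm, hxm, hmOn⟩ := hcomp.exists_isMinOn hΩne.closure hvc
  set m : ℝ := v xm with hmdef
  have hclosure_cases : ∀ x ∈ closure Ω, x ∈ Ω ∨ x ∈ frontier Ω := by
    intro x hx
    by_cases h : x ∈ Ω
    · exact Or.inl h
    · exact Or.inr (by rw [hΩo.frontier_eq]; exact ⟨hx, h⟩)
  have hv0 : ∀ x ∈ closure Ω, v x ≤ 0 := by
    intro x hx
    rcases hclosure_cases x hx with h | h
    · exact (hvneg x h).le
    · exact (hvbd x h).le
  have hvm : ∀ x ∈ closure Ω, m ≤ v x := fun x hx => hmOn hx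
  have hm0 : m < 0 := by
    obtain ⟨xb, hxb⟩ := hΩne
    exact lt_of_le_of_lt (hmOn (subset_closure hxb)) (hvneg xb hxb)
  -- constants
  set ε : ℝ := min (1/2) (ε₀ / (2 * (1 - m))) with hεdef
  have hεpos : 0 < ε := by
    apply lt_min (by norm_num)
    apply div_pos hε₀
    nlinarith
  have hεhalf : ε ≤ 1/2 := min_le_left _ _
  set δ : ℝ := ε₀ / 4 with hδdef
  have hδpos : 0 < δ := by positivity
  set g₀ : ℝ := g (m - A) with hg₀def
  have hg₀pos : 0 < g₀ := hgpos _ (by linarith)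
  set err : ℝ := ε * g₀ / 2 with herrdef
  have herrpos : 0 < err := by positivity
  -- monotonicity of g on Iio (-A)
  have hloc := (tendstoLocallyUniformlyOn_iff_forall_isCompact isOpen_Iio).1 hconv
  have gmono : ∀ t1 t2 : ℝ, t1 < -A → t2 < -A → t1 ≤ t2 → g t1 ≤ g t2 := by
    intro t1 t2 h1 h2 h12
    have ht1 := (hloc {t1} (singleton_subset_iff.2 h1) isCompact_singleton).tendsto_at
      (mem_singleton t1)
    have ht2 := (hloc {t2} (singleton_subset_iff.2 h2) isCompact_singleton).tendsto_at
      (mem_singleton t2)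
    refine le_of_tendsto_of_tendsto ht1 ht2 ?_
    filter_upwards [eventually_lt_atBot (0:ℝ)] with b hb
    have ha := hαpos b hb
    have hcb := hγpos b hb
    have harg : α b * t1 + b ≤ α b * t2 + b := by nlinarith
    exact div_le_div_of_nonneg_right (hf.2.1 harg) hcb.le
  -- uniform convergence on the compact K* := Icc (m - A - δ/2) (-A - δ/2)
  have hKsub : Icc (m - A - δ/2) (-A - δ/2) ⊆ Iio (-A) := fun t ht =>
    lt_of_le_of_lt ht.2 (by linarith)
  have huc : TendstoUniformlyOn (fun b t => f (α b * t + b) / γ b) g atBot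
      (Icc (m - A - δ/2) (-A - δ/2)) := hloc _ hKsub isCompact_Icc
  have hucε := Metric.tendstoUniformlyOn_iff.1 huc err herrpos
  -- eventual facts in lam
  have hAD : ∀ᶠ lam in (atBot : Filter ℝ), |β lam / α (β lam) - A| < δ/2 := by
    have h1 := Metric.tendsto_nhds.1 hβα (δ/2) (by positivity)
    filter_upwards [hβatBot.eventually h1] with lam h
    rwa [Real.dist_eq] at h
  have hUCe : ∀ᶠ lam in (atBot : Filter ℝ), ∀ t ∈ Icc (m - A - δ/2) (-A - δ/2),
      dist (g t) (f (α (β lam) * t + β lam) / γ (β lam)) < err := hβatBot.eventually hucε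
  filter_upwards [eventually_lt_atBot (0:ℝ), hAD, hUCe] with lam hlam hADl hUCl
  -- setup for this fixed lam
  have hb : β lam < 0 := hβneg lam hlam
  set b : ℝ := β lam
  set a : ℝ := α b with hadef
  set c : ℝ := γ b with hcdef
  have ha : 0 < a := hαpos b hb
  have hc : 0 < c := hγpos b hb
  have hlc : -lam = a / c := hβeq lam hlam
  obtain ⟨huc0, hud, hueq, hub⟩ := hu lam hlam
  -- laplacian of u in terms of f
  have hueq' : ∀ x ∈ Ω, laplacian (u lam) x = (a/c) * f (u lam x) := by
    intro x hx
    have := hueq x hx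
    have h2 : laplacian (u lam) x = (-lam) * f (u lam x) := by linarith
    rw [h2, hlc]
  -- Step 1 : u lam ≤ 0 on closure Ω
  have hu0 : ∀ x ∈ closure Ω, u lam x ≤ 0 := by
    have key := nonneg_on_closure (Ω := Ω) hΩo hΩb
      (φ := fun y => (-1) * u lam y + 0 * v y + 0)
      (by fun_prop) (by fun_prop)
      (fun x hx => by simp [hub x hx])
      (fun x hx _ => by
        rw [laplacian_combo hΩo hud hvd (-1) 0 0 hx, hueq' x hx]
        have h1 := hfpos (u lam x)
        have h2 : 0 < (a/c) * f (u lam x) := by positivity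
        nlinarith)
    intro x hx
    have h : 0 ≤ -1 * u lam x + 0 * v x + 0 := key x hx
    linarith
  -- b/a bounds
  have habs := abs_sub_le_iff.1 hADl.le
  have hba1 : A - δ/2 ≤ b/a := by linarith [habs.2]
  have hba2 : b/a ≤ A + δ/2 := by linarith [habs.1]
  -- error bounds from uniform convergence
  have hUCl' : ∀ t ∈ Icc (m - A - δ/2) (-A - δ/2),
      g t - err < f (a * t + b)/c ∧ f (a * t + b)/c < g t + err := by
    intro t ht
    have h := hUCl t ht
    rw [Real.dist_eq, abs_sub_lt_iff] at h
    constructor <;> linarith [h.1, h.2]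
  -- Step 2 : lower bound  u/a ≥ (1+ε) v - δ  on closure Ω
  have hlow : ∀ x ∈ closure Ω, 0 ≤ (1/a) * u lam x + (-(1+ε)) * v x + δ := by
    apply nonneg_on_closure hΩo hΩb (by fun_prop) (by fun_prop)
    · intro x hx
      simp [hub x hx, hvbd x hx, hδpos.le]
    · intro x hx hneg
      replace hneg : (1/a) * u lam x + (-(1+ε)) * v x + δ < 0 := hneg
      rw [laplacian_combo hΩo hud hvd (1/a) (-(1+ε)) δ hx, hueq' x hx, hveq x hx]
      have hvx : v x < 0 := hvneg x hx
      have hvxm : m ≤ v x := hvm x (subset_closure hx)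
      have hσmem : v x - A - δ/2 ∈ Icc (m - A - δ/2) (-A - δ/2) :=
        ⟨by linarith, by linarith⟩
      have harg : u lam x ≤ a * (v x - A - δ/2) + b := by
        have h1 : (1/a) * u lam x < (1+ε) * v x - δ := by linarith
        have h2 : u lam x = a * ((1/a) * u lam x) := by field_simp
        have h3 : u lam x < a * ((1+ε) * v x - δ) := by
          rw [h2]; exact (mul_lt_mul_iff_right₀ ha).2 h1
        have h4 : (1+ε) * v x - δ ≤ (v x - A - δ/2) + b/a := by nlinarith
        have h5 : a * ((1+ε) * v x - δ) ≤ a * ((v x - A - δ/2) + b/a) :=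
          (mul_le_mul_iff_right₀ ha).2 h4
        have h6 : a * ((v x - A - δ/2) + b/a) = a * (v x - A - δ/2) + b := by
          field_simp
        linarith
      have hfle : f (u lam x) ≤ f (a * (v x - A - δ/2) + b) := hf.2.1 harg
      have h7 : f (u lam x) / c ≤ f (a * (v x - A - δ/2) + b) / c := by gcongr
      have hFσ := (hUCl' _ hσmem).2
      have hgσ : g (v x - A - δ/2) ≤ g (v x - A) :=
        gmono _ _ (by linarith) (by linarith) (by linarith)
      have hgg0 : g₀ ≤ g (v x - A) := gmono (m - A) (v x - A)
        (by linarith) (by linarith) (by linarith)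
      have hchain : (1/a) * ((a/c) * f (u lam x)) = f (u lam x) / c := by
        field_simp
      rw [hchain]
      have hεg : ε * g₀ ≤ ε * g (v x - A) := mul_le_mul_of_nonneg_left hgg0 hεpos.le
      have h8 : 0 < ε * g₀ := by positivity
      linarith
  -- Step 3 : upper bound  u/a ≤ (1-ε) v + δ  on closure Ω
  have hup : ∀ x ∈ closure Ω, 0 ≤ (-(1/a)) * u lam x + (1-ε) * v x + δ := by
    apply nonneg_on_closure hΩo hΩb (by fun_prop) (by fun_prop)
    · intro x hx
      simp [hub x hx, hvbd x hx, hδpos.le]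
    · intro x hx hneg
      replace hneg : (-(1/a)) * u lam x + (1-ε) * v x + δ < 0 := hneg
      rw [laplacian_combo hΩo hud hvd (-(1/a)) (1-ε) δ hx, hueq' x hx, hveq x hx]
      have hvx : v x < 0 := hvneg x hx
      have hvxm : m ≤ v x := hvm x (subset_closure hx)
      have hW0 : (1/a) * u lam x ≤ 0 := by
        have h := hu0 x (subset_closure hx)
        have h1 : 0 < 1/a := by positivity
        nlinarith
      by_cases hcase : -δ ≤ v x
      · exfalso
        have h1 : (1-ε) * (-δ) ≤ (1-ε) * v x :=
          mul_le_mul_of_nonneg_left hcase (by linarith)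
        have h2 : 0 < ε * δ := by positivity
        nlinarith
      · push_neg at hcase
        obtain ⟨s, hs⟩ : ∃ s, s = min (v x - A + δ/2) (-A - δ/2) := ⟨_, rfl⟩
        have hsle1 : s ≤ v x - A + δ/2 := hs ▸ min_le_left _ _
        have hsle2 : s ≤ -A - δ/2 := hs ▸ min_le_right _ _
        have hsge : ∀ r : ℝ, r ≤ v x - A + δ/2 → r ≤ -A - δ/2 → r ≤ s := by
          intro r hr1 hr2; rw [hs]; exact le_min hr1 hr2
        have hsmem : s ∈ Icc (m - A - δ/2) (-A - δ/2) :=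
          ⟨hsge _ (by linarith) (by linarith), hsle2⟩
        have harg : a * s + b ≤ u lam x := by
          have h1 : (1-ε) * v x + δ < (1/a) * u lam x := by linarith
          have h2 : 0 ≤ -(ε * v x) := by nlinarith
          have h3 : s + b/a ≤ v x + δ := by linarith
          have h4 : a * (s + b/a) ≤ a * ((1/a) * u lam x) := by
            apply (mul_le_mul_iff_right₀ ha).2
            linarith
          have h5 : a * (s + b/a) = a * s + b := by field_simp
          have h6 : a * ((1/a) * u lam x) = u lam x := by field_simp
          linarith
        have hfle : f (a * s + b) ≤ f (u lam x) := hf.2.1 harg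
        have h7 : f (a * s + b) / c ≤ f (u lam x) / c := by gcongr
        have hFs := (hUCl' _ hsmem).1
        have hgs : g (v x - A) ≤ g s := by
          apply gmono
          · linarith
          · linarith
          · exact hsge _ (by linarith) (by linarith)
        have hgg0 : g₀ ≤ g (v x - A) := gmono (m - A) (v x - A)
          (by linarith) (by linarith) (by linarith)
        have hchain : (-(1/a)) * ((a/c) * f (u lam x)) = -(f (u lam x) / c) := by
          field_simp
        rw [hchain]
        have hεg : ε * g₀ ≤ ε * g (v x - A) := mul_le_mul_of_nonneg_left hgg0 hεpos.le
        have h8 : 0 < ε * g₀ := by positivity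
        linarith
  -- conclusion
  intro x hx
  have hxcl : x ∈ closure Ω := subset_closure (hK hx)
  have h1 := hlow x hxcl
  have h2 := hup x hxcl
  have hvx0 : v x ≤ 0 := hv0 x hxcl
  have hvxm : m ≤ v x := hvm x hxcl
  have hWe : (1/a) * u lam x = u lam x / a := by ring
  have hWe2 : (-(1/a)) * u lam x = -(u lam x / a) := by ring
  rw [hWe] at h1
  rw [hWe2] at h2
  have hεm : ε * (-m) ≤ ε₀/2 := by
    have h3 : ε ≤ ε₀/(2*(1-m)) := min_le_right _ _
    have h4 : 0 < 1 - m := by linarith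
    rw [le_div_iff₀ (by linarith : (0:ℝ) < 2*(1-m))] at h3
    nlinarith [hεpos.le]
  have hεv : ε * m ≤ ε * v x := mul_le_mul_of_nonneg_left hvxm hεpos.le
  rw [Real.dist_eq, abs_sub_lt_iff]
  constructor <;> nlinarith [h1, h2, hεv, hεm, hδpos, hε₀]
end

section
/- Let t₀ < 0 and let f : ℝ → ℝ be non-decreasing with f(t) = 0 for every t ≤ t₀ and f(t) > 0 for every t > t₀. Let α : (t₀, 0) → (0, ∞) be continuous with α(β) → 0 and (β − t₀)/α(β) → t̄ as β → t₀⁺, where t̄ ∈ (0, ∞). Let g : (−t̄, ∞) → ℝ be continuous and suppose f(α(β) t + β)/f(β) → g(t) as β → t₀⁺, locally uniformly in t ∈ (−t̄, ∞). Then there exists p ≥ 0 such that g(t) = ((t + t̄)/t̄)^p for every t > −t̄, and f(α(β) s + t₀)/f(β) → (s/t̄)^p as β → t₀⁺, locally uniformly in s ∈ (0, ∞). -/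
open Set Filter Topology


/-- Composing a locally-uniformly-convergent family with a map of index filters. -/
lemma tlu_idx {F : ℝ → ℝ → ℝ} {g : ℝ → ℝ} {l l' : Filter ℝ} {s : Set ℝ}
    (hF : TendstoLocallyUniformlyOn F g l s) {m : ℝ → ℝ} (hm : Tendsto m l' l) :
    TendstoLocallyUniformlyOn (fun β => F (m β)) g l' s := by
  intro v hv x hx
  obtain ⟨t, ht, h⟩ := hF v hv x hx
  exact ⟨t, ht, hm.eventually h⟩

/-- Evaluating a locally-uniformly-convergent family at a moving point. -/
lemma tlu_move {F : ℝ → ℝ → ℝ} {g : ℝ → ℝ} {l : Filter ℝ} {s : Set ℝ} (hs : IsOpen s)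
    (hF : TendstoLocallyUniformlyOn F g l s) (hg : ContinuousOn g s)
    {u : ℝ → ℝ} {c : ℝ} (hc : c ∈ s) (hu : Tendsto u l (𝓝 c)) :
    Tendsto (fun β => F β (u β)) l (𝓝 (g c)) := by
  rw [Metric.tendsto_nhds]
  intro ε hε
  obtain ⟨t, ht, hev⟩ := Metric.tendstoLocallyUniformlyOn_iff.mp hF (ε/2) (half_pos hε) c hc
  rw [nhdsWithin_eq_nhds.mpr (hs.mem_nhds hc)] at ht
  have hgC : ContinuousAt g c := hg.continuousAt (hs.mem_nhds hc)
  have h2 : ∀ᶠ y in 𝓝 c, dist (g y) (g c) < ε/2 :=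
    (Metric.tendsto_nhds.mp hgC.tendsto (ε/2) (half_pos hε))
  filter_upwards [hev, hu.eventually ht, hu.eventually h2] with β h1 h3 h4
  calc dist (F β (u β)) (g c) ≤ dist (F β (u β)) (g (u β)) + dist (g (u β)) (g c) :=
        dist_triangle _ _ _
    _ < ε/2 + ε/2 := by
        have := h1 (u β) h3
        rw [dist_comm] at this
        exact add_lt_add this h4
    _ = ε := add_halves ε

/-- Lemma A.1(3): if `(β - t₀)/α(β) → t̄ ∈ (0, ∞)` and `f(α(β)t + β)/f(β) → g(t)` locally
uniformly in `t > -t̄`, then `g(t) = ((t + t̄)/t̄)^p` for some `p ≥ 0` and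
`f(α(β)s + t₀)/f(β) → (s/t̄)^p` locally uniformly in `s > 0`. -/
theorem stmt_15 (t₀ : ℝ) (ht₀ : t₀ < 0) (f : ℝ → ℝ) (hf : Monotone f)
    (hf0 : ∀ t ≤ t₀, f t = 0) (hfpos : ∀ t, t₀ < t → 0 < f t)
    (α : ℝ → ℝ) (hαc : ContinuousOn α (Ioo t₀ 0)) (hαpos : ∀ β ∈ Ioo t₀ 0, 0 < α β)
    (hα0 : Tendsto α (𝓝[Ioo t₀ 0] t₀) (𝓝 0))
    (tb : ℝ) (htb : 0 < tb)
    (hαlim : Tendsto (fun β => (β - t₀) / α β) (𝓝[Ioo t₀ 0] t₀) (𝓝 tb))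
    (g : ℝ → ℝ) (hgc : ContinuousOn g (Ioi (-tb)))
    (hconv : TendstoLocallyUniformlyOn (fun β t => f (α β * t + β) / f β) g
      (𝓝[Ioo t₀ 0] t₀) (Ioi (-tb))) :
    ∃ p ≥ (0:ℝ), (∀ t, -tb < t → g t = ((t + tb)/tb) ^ p) ∧
      TendstoLocallyUniformlyOn (fun β s => f (α β * s + t₀) / f β)
        (fun s => (s / tb) ^ p) (𝓝[Ioo t₀ 0] t₀) (Ioi 0) := by
  set l := 𝓝[Ioo t₀ 0] t₀ with hl
  haveI hne : l.NeBot := by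
    apply mem_closure_iff_nhdsWithin_neBot.mp
    rw [closure_Ioo (ne_of_lt ht₀)]
    exact ⟨le_refl t₀, ht₀.le⟩
  set F : ℝ → ℝ → ℝ := fun β t => f (α β * t + β) / f β with hFd
  set r : ℝ → ℝ := fun β => (β - t₀) / α β with hrd
  have hrlim : Tendsto r l (𝓝 tb) := hαlim
  have hfnn : ∀ x, 0 ≤ f x := by
    intro x
    rcases le_or_gt x t₀ with h | h
    · rw [hf0 x h]
    · exact (hfpos x h).le
  have hmem : ∀ᶠ β in l, β ∈ Ioo t₀ 0 := self_mem_nhdsWithin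
  have hαposE : ∀ᶠ β in l, 0 < α β := hmem.mono fun β hβ => hαpos β hβ
  have hfβ : ∀ᶠ β in l, 0 < f β := hmem.mono fun β hβ => hfpos β hβ.1
  have hO : IsOpen (Ioi (-tb)) := isOpen_Ioi
  have hrmul : ∀ β, 0 < α β → α β * r β = β - t₀ := by
    intro β hβ
    rw [hrd]
    field_simp
  -- pointwise limits
  have hpt : ∀ c ∈ Ioi (-tb), Tendsto (fun β => F β c) l (𝓝 (g c)) := fun c hc =>
    tlu_move hO hconv hgc hc tendsto_const_nhds
  -- g 0 = 1
  have hg0 : g 0 = 1 := by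
    have h0 : (0:ℝ) ∈ Ioi (-tb) := by simpa using htb
    have h1 : Tendsto (fun β => F β 0) l (𝓝 (g 0)) := hpt 0 h0
    have h2 : (fun β => F β 0) =ᶠ[l] (fun _ => (1:ℝ)) := by
      filter_upwards [hfβ] with β hβ
      simp [hFd, div_self hβ.ne']
    exact (tendsto_nhds_unique (h1.congr' h2) tendsto_const_nhds).symm.symm
  -- nonnegativity of g
  have hgnn : ∀ c ∈ Ioi (-tb), 0 ≤ g c := fun c hc =>
    ge_of_tendsto (hpt c hc) (Eventually.of_forall fun β => div_nonneg (hfnn _) (hfnn _))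
  -- monotonicity of g
  have hgmono : ∀ c ∈ Ioi (-tb), ∀ d ∈ Ioi (-tb), c ≤ d → g c ≤ g d := by
    intro c hc d hd hcd
    refine le_of_tendsto_of_tendsto (hpt c hc) (hpt d hd) ?_
    filter_upwards [hαposE, hfβ] with β h1 h2
    have : α β * c + β ≤ α β * d + β := by nlinarith
    exact div_le_div_of_nonneg_right (hf this) h2.le
  -- the functional equation
  have key : ∀ a, 0 < a → ∀ b, 0 < b → g (a*b - tb) = g (tb*(b-1)) * g (a - tb) := by
    intro a ha b hb
    set B : ℝ → ℝ := fun β => α β * a + t₀ with hBd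
    have hBt : Tendsto B l (𝓝 t₀) := by
      have : Tendsto (fun β => α β * a + t₀) l (𝓝 (0 * a + t₀)) :=
        (hα0.mul_const a).add_const t₀
      simpa using this
    have hBl : Tendsto B l l := by
      rw [hl, tendsto_nhdsWithin_iff]
      refine ⟨hBt, ?_⟩
      have h1 : ∀ᶠ β in l, B β < 0 := hBt.eventually_lt_const ht₀
      filter_upwards [h1, hαposE] with β hb1 hb2
      exact ⟨by simp only [hBd]; nlinarith, hb1⟩
    have hrB : Tendsto (fun β => r (B β)) l (𝓝 tb) := hrlim.comp hBl
    have hratio : Tendsto (fun β => α β / α (B β)) l (𝓝 (tb / a)) := by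
      refine (hrB.div_const a).congr ?_
      intro β
      show r (B β) / a = α β / α (B β)
      have h1 : B β - t₀ = α β * a := by simp [hBd]
      rw [hrd]
      simp only [h1]
      rw [div_div, mul_comm (α (B β)) a, ← div_div]
      rw [mul_div_assoc, div_self ha.ne', mul_one]
    set u : ℝ → ℝ := fun β => α β * (a * (b-1)) / α (B β) with hud
    have hu : Tendsto u l (𝓝 (tb * (b-1))) := by
      have h1 : Tendsto (fun β => (α β / α (B β)) * (a * (b-1))) l
          (𝓝 ((tb / a) * (a * (b-1)))) := hratio.mul_const _
      have h2 : (tb / a) * (a * (b-1)) = tb * (b-1) := by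
        field_simp
      rw [h2] at h1
      refine h1.congr fun β => ?_
      rw [hud, div_mul_eq_mul_div]
    have c1 : Tendsto (fun β => F β (a*b - r β)) l (𝓝 (g (a*b - tb))) := by
      refine tlu_move hO hconv hgc ?_ (tendsto_const_nhds.sub hrlim)
      simp only [mem_Ioi]; nlinarith
    have c2 : Tendsto (fun β => F (B β) (u β)) l (𝓝 (g (tb*(b-1)))) := by
      refine tlu_move hO (tlu_idx hconv hBl) hgc ?_ hu
      simp only [mem_Ioi]; nlinarith
    have c3 : Tendsto (fun β => F β (a - r β)) l (𝓝 (g (a - tb))) := by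
      refine tlu_move hO hconv hgc ?_ (tendsto_const_nhds.sub hrlim)
      simp only [mem_Ioi]; nlinarith
    have hid : (fun β => F β (a*b - r β)) =ᶠ[l]
        (fun β => F (B β) (u β) * F β (a - r β)) := by
      filter_upwards [hαposE, hfβ, hBl.eventually hmem] with β h1 h2 h3
      have hαB : 0 < α (B β) := hαpos _ h3
      have hfB : 0 < f (B β) := hfpos _ h3.1
      have hm := hrmul β h1
      have e1 : α β * (a*b - r β) + β = α β * (a*b) + t₀ := by
        rw [mul_sub, hm]; ring
      have e2 : α (B β) * u β + B β = α β * (a*b) + t₀ := by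
        have h4 : α (B β) * u β = α β * (a*(b-1)) := by
          rw [hud, mul_comm]
          exact div_mul_cancel₀ _ hαB.ne'
        rw [h4, hBd]; ring
      have e3 : α β * (a - r β) + β = B β := by
        rw [mul_sub, hm, hBd]; ring
      show f (α β * (a*b - r β) + β) / f β
          = f (α (B β) * u β + B β) / f (B β) * (f (α β * (a - r β) + β) / f β)
      rw [e1, e2, e3]
      field_simp
    exact tendsto_nhds_unique c1 ((c2.mul c3).congr' hid.symm)
  -- the function φ and its properties
  set φ : ℝ → ℝ := fun x => g (tb*(x-1)) with hφd
  have hφ1 : φ 1 = 1 := by simp [hφd, hg0]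
  have hmap : ∀ x, 0 < x → tb*(x-1) ∈ Ioi (-tb) := by
    intro x hx
    simp only [mem_Ioi]
    nlinarith
  have hφmul : ∀ x, 0 < x → ∀ y, 0 < y → φ (x*y) = φ x * φ y := by
    intro x hx y hy
    have h1 := key (tb*x) (by positivity) y hy
    simp only [hφd]
    rw [show tb*(x*y-1) = tb*x*y - tb by ring, h1,
      show tb*x - tb = tb*(x-1) by ring]
    ring
  have hφnn : ∀ x, 0 < x → 0 ≤ φ x := fun x hx => hgnn _ (hmap x hx)
  have hφpos : ∀ x, 0 < x → 0 < φ x := by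
    intro x hx
    rcases (hφnn x hx).lt_or_eq with h | h
    · exact h
    · exfalso
      have h1 : φ (x * x⁻¹) = φ x * φ x⁻¹ := hφmul x hx x⁻¹ (by positivity)
      rw [mul_inv_cancel₀ hx.ne', hφ1, ← h] at h1
      simp at h1
  have hφcont : ContinuousOn φ (Ioi 0) := by
    refine hgc.comp (Continuous.continuousOn (by continuity)) ?_
    exact fun x hx => hmap x hx
  have hψadd : ∀ y z : ℝ, Real.log (φ (Real.exp (y + z)))
      = Real.log (φ (Real.exp y)) + Real.log (φ (Real.exp z)) := by
    intro y z
    rw [Real.exp_add, hφmul _ (Real.exp_pos y) _ (Real.exp_pos z),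
      Real.log_mul (hφpos _ (Real.exp_pos y)).ne' (hφpos _ (Real.exp_pos z)).ne']
  set ψ : ℝ →+ ℝ := AddMonoidHom.mk' (fun y => Real.log (φ (Real.exp y))) hψadd with hψd
  have hψcont : Continuous ψ := by
    have h1 : Continuous (fun y => φ (Real.exp y)) :=
      hφcont.comp_continuous Real.continuous_exp (fun y => Real.exp_pos y)
    rw [continuous_iff_continuousAt]
    intro y
    have h2 : ContinuousAt (fun z => Real.log (φ z)) (Real.exp y) :=
      (Real.continuousAt_log (hφpos _ (Real.exp_pos y)).ne').comp
        (hφcont.continuousAt (isOpen_Ioi.mem_nhds (Real.exp_pos y)))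
    exact h2.comp Real.continuous_exp.continuousAt
  set p : ℝ := ψ 1 with hpd
  have hψlin : ∀ y, ψ y = y * p := by
    intro y
    have h1 := (ψ.toRealLinearMap hψcont).map_smul y (1:ℝ)
    rw [AddMonoidHom.coe_toRealLinearMap] at h1
    simpa [smul_eq_mul] using h1
  have hφeq : ∀ x, 0 < x → φ x = x ^ p := by
    intro x hx
    have h1 : ψ (Real.log x) = Real.log x * p := hψlin _
    have h2 : ψ (Real.log x) = Real.log (φ x) := by
      simp only [hψd, AddMonoidHom.mk'_apply, Real.exp_log hx]
    rw [Real.rpow_def_of_pos hx, ← h1, h2, Real.exp_log (hφpos x hx)]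
  have hp : 0 ≤ p := by
    have h1 : φ 1 ≤ φ (Real.exp 1) := by
      refine hgmono _ (hmap 1 one_pos) _ (hmap _ (Real.exp_pos 1)) ?_
      nlinarith [Real.add_one_le_exp (1:ℝ)]
    rw [hφ1] at h1
    have h2 : ψ 1 = Real.log (φ (Real.exp 1)) := by
      simp [hψd]
    rw [hpd, h2]
    exact Real.log_nonneg h1
  have hgform : ∀ t, -tb < t → g t = ((t + tb)/tb) ^ p := by
    intro t ht
    have hx : 0 < (t + tb)/tb := div_pos (by linarith) htb
    have h1 := hφeq _ hx
    simp only [hφd] at h1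
    rwa [show tb * ((t + tb)/tb - 1) = t by field_simp; ring] at h1
  refine ⟨p, hp, hgform, ?_⟩
  rw [tendstoLocallyUniformlyOn_iff_forall_isCompact isOpen_Ioi]
  intro K hKsub hK
  rcases K.eq_empty_or_nonempty with rfl | hKne
  · intro v hv
    filter_upwards with β s hs
    exact absurd hs (notMem_empty s)
  set m := sInf K with hmd
  set M := sSup K with hMd
  have hmK : m ∈ K := hK.sInf_mem hKne
  have hm : 0 < m := hKsub hmK
  have hKbd : ∀ s ∈ K, m ≤ s ∧ s ≤ M :=
    fun s hs => ⟨csInf_le hK.bddBelow hs, le_csSup hK.bddAbove hs⟩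
  set L := Icc (m/2 - tb) (M + 1 - tb) with hLd
  have hLsub : L ⊆ Ioi (-tb) := by
    intro x hx
    simp only [mem_Ioi]
    have := hx.1
    linarith
  have hU : TendstoUniformlyOn F g l L :=
    (tendstoLocallyUniformlyOn_iff_forall_isCompact isOpen_Ioi).mp hconv L hLsub isCompact_Icc
  have hUC : UniformContinuousOn g L :=
    isCompact_Icc.uniformContinuousOn_of_continuous (hgc.mono hLsub)
  rw [Metric.tendstoUniformlyOn_iff]
  intro ε hε
  obtain ⟨δ, hδ, hδc⟩ := Metric.uniformContinuousOn_iff.mp hUC (ε/2) (half_pos hε)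
  have hrE : ∀ᶠ β in l, |r β - tb| < min δ (min (m/2) 1) := by
    have hpos : 0 < min δ (min (m/2) 1) := lt_min hδ (lt_min (half_pos hm) one_pos)
    have := Metric.tendsto_nhds.mp hrlim _ hpos
    simpa [Real.dist_eq] using this
  filter_upwards [hαposE, Metric.tendstoUniformlyOn_iff.mp hU (ε/2) (half_pos hε), hrE]
    with β h1 h2 h3
  intro s hs
  obtain ⟨hms, hsM⟩ := hKbd s hs
  have hs0 : 0 < s := hKsub hs
  have hδ1 : |r β - tb| < δ := lt_of_lt_of_le h3 (min_le_left _ _)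
  have hm2 : |r β - tb| < m/2 :=
    lt_of_lt_of_le h3 (le_trans (min_le_right _ _) (min_le_left _ _))
  have h1' : |r β - tb| < 1 :=
    lt_of_lt_of_le h3 (le_trans (min_le_right _ _) (min_le_right _ _))
  obtain ⟨ha1, ha2⟩ := abs_lt.mp hm2
  obtain ⟨hb1, hb2⟩ := abs_lt.mp h1'
  have hsr : s - r β ∈ L := ⟨by linarith, by linarith⟩
  have hst : s - tb ∈ L := ⟨by linarith, by linarith⟩
  have heq : α β * s + t₀ = α β * (s - r β) + β := by
    rw [mul_sub, hrmul β h1]; ring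
  have hgs : (s/tb) ^ p = g (s - tb) := by
    rw [hgform (s - tb) (by linarith), show s - tb + tb = s by ring]
  have hd2 : dist (g (s - tb)) (g (s - r β)) < ε/2 := by
    refine hδc _ hst _ hsr ?_
    rw [Real.dist_eq, show s - tb - (s - r β) = r β - tb by ring]
    exact hδ1
  calc dist ((s/tb) ^ p) (f (α β * s + t₀) / f β)
      = dist (g (s - tb)) (F β (s - r β)) := by rw [hgs, heq]
    _ ≤ dist (g (s - tb)) (g (s - r β)) + dist (g (s - r β)) (F β (s - r β)) :=
        dist_triangle _ _ _
    _ < ε/2 + ε/2 := add_lt_add hd2 (h2 _ hsr)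
    _ = ε := add_halves ε
end

section
/- Let f : ℝ → ℝ be non-decreasing with f(t) > 0 for every t ∈ ℝ and f(t) → 0 as t → −∞. Let α : (−∞, 0) → (0, ∞) be continuous and suppose β/α(β) → t̄ as β → −∞, where t̄ ∈ (−∞, 0). Let g : (−∞, −t̄) → ℝ be continuous and suppose f(α(β) t + β)/f(β) → g(t) as β → −∞, locally uniformly in t ∈ (−∞, −t̄). Then there exists p ≥ 0 such that g(t) = (t̄/(t + t̄))^p for every t < −t̄, and f(α(β) s)/f(β) → (t̄/s)^p as β → −∞, locally uniformly in s ∈ (−∞, 0). -/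
open Set Filter Topology

/-- A monotone additive function `ℝ → ℝ` is linear. -/
lemma aux_linear_16 (φ : ℝ → ℝ) (hadd : ∀ x y, φ (x + y) = φ x + φ y)
    (hmono : Monotone φ) (x : ℝ) : φ x = φ 1 * x := by
  have h0 : φ 0 = 0 := by have := hadd 0 0; simp at this; linarith
  have h1nn : 0 ≤ φ 1 := by have := hmono (by norm_num : (0:ℝ) ≤ 1); rwa [h0] at this
  let F : ℝ →+ ℝ := AddMonoidHom.mk' φ hadd
  have hq : ∀ q : ℚ, φ (q : ℝ) = (q : ℝ) * φ 1 := by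
    intro q
    have h := map_rat_smul F q (1 : ℝ)
    simpa [F, Rat.smul_def, AddMonoidHom.mk'_apply] using h
  have hle : φ x ≤ φ 1 * x := by
    refine le_of_forall_pos_le_add fun ε hε => ?_
    obtain ⟨q, hq1, hq2⟩ := exists_rat_btwn (lt_add_of_pos_right x (div_pos hε (by positivity : (0:ℝ) < φ 1 + 1)))
    calc φ x ≤ φ (q : ℝ) := hmono hq1.le
      _ = (q : ℝ) * φ 1 := hq q
      _ ≤ (x + ε / (φ 1 + 1)) * φ 1 := by nlinarith
      _ ≤ φ 1 * x + ε := by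
          have : ε / (φ 1 + 1) * φ 1 ≤ ε := by
            rw [div_mul_eq_mul_div, div_le_iff₀ (by linarith)]; nlinarith
          nlinarith
  have hge : φ 1 * x ≤ φ x := by
    refine le_of_forall_pos_le_add fun ε hε => ?_
    obtain ⟨q, hq1, hq2⟩ := exists_rat_btwn (sub_lt_self x (div_pos hε (by positivity : (0:ℝ) < φ 1 + 1)))
    have : φ (q : ℝ) ≤ φ x := hmono hq2.le
    rw [hq q] at this
    have h2 : ε / (φ 1 + 1) * φ 1 ≤ ε := by
      rw [div_mul_eq_mul_div, div_le_iff₀ (by linarith)]; nlinarith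
    nlinarith
  linarith

/-- Compose a locally uniform limit in the index with a map of index filters. -/
lemma aux_tluo_comp_16 {F : ℝ → ℝ → ℝ} {g : ℝ → ℝ} {s : Set ℝ}
    (h : TendstoLocallyUniformlyOn F g atBot s) {u : ℝ → ℝ}
    (hu : Tendsto u atBot atBot) :
    TendstoLocallyUniformlyOn (fun β => F (u β)) g atBot s := by
  intro v hv x hx
  obtain ⟨t, ht, h2⟩ := h v hv x hx
  exact ⟨t, ht, hu.eventually h2⟩

/-- Lemma A.1(4): if `f > 0` is non-decreasing with `f(t) → 0` as `t → -∞`,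
`β/α(β) → t̄ ∈ (-∞, 0)` as `β → -∞`, and `f(α(β)t + β)/f(β) → g(t)` locally uniformly in
`t < -t̄`, then `g(t) = (t̄/(t + t̄))^p` for some `p ≥ 0` and `f(α(β)s)/f(β) → (t̄/s)^p`
locally uniformly in `s < 0`. -/
theorem stmt_16 (f : ℝ → ℝ) (hf : Monotone f) (hfpos : ∀ t, 0 < f t)
    (hf0 : Tendsto f atBot (𝓝 0))
    (α : ℝ → ℝ) (hαc : ContinuousOn α (Iio 0)) (hαpos : ∀ β < (0:ℝ), 0 < α β)
    (tb : ℝ) (htb : tb < 0)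
    (hlim : Tendsto (fun β => β / α β) atBot (𝓝 tb))
    (g : ℝ → ℝ) (hgc : ContinuousOn g (Iio (-tb)))
    (hconv : TendstoLocallyUniformlyOn (fun β t => f (α β * t + β) / f β) g
      atBot (Iio (-tb))) :
    ∃ p ≥ (0:ℝ), (∀ t, t < -tb → g t = (tb/(t + tb)) ^ p) ∧
      TendstoLocallyUniformlyOn (fun β s => f (α β * s) / f β)
        (fun s => (tb / s) ^ p) atBot (Iio 0) := by
  have htb' : tb ≠ 0 := ne_of_lt htb
  -- α tends to +∞ at -∞
  have hαT : Tendsto α atBot atTop := by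
    have h1 : Tendsto (fun β : ℝ => β * (β / α β)⁻¹) atBot atTop :=
      Tendsto.atBot_mul_neg (inv_neg''.mpr htb) tendsto_id (hlim.inv₀ htb')
    refine h1.congr' ?_
    filter_upwards [eventually_lt_atBot (0:ℝ)] with β hβ
    have hα := hαpos β hβ
    rw [inv_div, mul_div_assoc', mul_div_cancel_left₀ _ (ne_of_lt hβ)]
  -- moving-argument convergence lemma
  have key : ∀ (u w : ℝ → ℝ), Tendsto u atBot atBot → ∀ t0, t0 < -tb →
      Tendsto w atBot (𝓝 t0) →
      Tendsto (fun β => f (α (u β) * w β + u β) / f (u β)) atBot (𝓝 (g t0)) := by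
    intro u w hu t0 ht0 hw
    have hcomp := aux_tluo_comp_16 hconv hu
    have ht0m : t0 ∈ Iio (-tb) := ht0
    have hw' : Tendsto w atBot (𝓝[Iio (-tb)] t0) := by
      rw [tendsto_nhdsWithin_iff]
      exact ⟨hw, hw.eventually (Iio_mem_nhds ht0)⟩
    exact hcomp.tendsto_comp (hgc.continuousWithinAt ht0m) ht0m hw'
  -- pointwise limit of f(α β s)/f β
  have pL : ∀ s < (0:ℝ), Tendsto (fun β => f (α β * s) / f β) atBot (𝓝 (g (s - tb))) := by
    intro s hs
    have h := key id (fun β => s - β / α β) tendsto_id (s - tb) (by linarith)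
      (tendsto_const_nhds.sub hlim)
    refine h.congr' ?_
    filter_upwards [eventually_lt_atBot (0:ℝ)] with β hβ
    have hα := (hαpos β hβ).ne'
    simp only [id]
    congr 2
    field_simp
    ring
  -- abbreviation
  set L : ℝ → ℝ := fun s => g (s - tb) with hL
  have pL' : ∀ s < (0:ℝ), Tendsto (fun β => f (α β * s) / f β) atBot (𝓝 (L s)) := pL
  -- L tb = 1
  have g0 : g 0 = 1 := by
    have h1 := hconv.tendsto_at (show (0:ℝ) ∈ Iio (-tb) by simp [htb])
    have h2 : Tendsto (fun β : ℝ => f (α β * 0 + β) / f β) atBot (𝓝 1) := by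
      refine tendsto_const_nhds.congr' ?_
      filter_upwards with β
      rw [mul_zero, zero_add, div_self (hfpos β).ne']
    exact tendsto_nhds_unique h1 h2
  have Ltb : L tb = 1 := by simp [hL, g0]
  -- L nonneg
  have Lnn : ∀ s < (0:ℝ), 0 ≤ L s := by
    intro s hs
    refine ge_of_tendsto (pL' s hs) ?_
    filter_upwards with β
    exact le_of_lt (div_pos (hfpos _) (hfpos _))
  -- multiplicativity
  have Lmul : ∀ s1 < (0:ℝ), ∀ s2 < (0:ℝ), L (s1 * s2 / tb) = L s1 * L s2 := by
    intro s1 hs1 s2 hs2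
    set u : ℝ → ℝ := fun β => α β * s1 with hu_def
    have hu : Tendsto u atBot atBot := hαT.atTop_mul_const_of_neg hs1
    set w : ℝ → ℝ := fun β => (s2 / tb - 1) * (u β / α (u β)) with hw_def
    have hw : Tendsto w atBot (𝓝 (s2 - tb)) := by
      have h1 : Tendsto (fun β => u β / α (u β)) atBot (𝓝 tb) := hlim.comp hu
      have h2 := h1.const_mul (s2 / tb - 1)
      have : (s2 / tb - 1) * tb = s2 - tb := by field_simp
      rwa [this] at h2
    have hA := key u w hu (s2 - tb) (by linarith) hw
    have hB := pL' s1 hs1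
    have hAB : Tendsto (fun β => f (α (u β) * w β + u β) / f (u β) * (f (α β * s1) / f β))
        atBot (𝓝 (L s2 * L s1)) := hA.mul hB
    have hprod : L (s1 * s2 / tb) = L s2 * L s1 := by
      have hs12 : s1 * s2 / tb < 0 := div_neg_of_pos_of_neg (mul_pos_of_neg_of_neg hs1 hs2) htb
      have hC := pL' (s1 * s2 / tb) hs12
      refine tendsto_nhds_unique (hC.congr' ?_) hAB
      have hev : ∀ᶠ β in atBot, u β < 0 := hu.eventually (eventually_lt_atBot 0)
      filter_upwards [hev] with β hβ
      have hα := (hαpos (u β) hβ).ne'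
      have harg : α (u β) * w β + u β = α β * (s1 * s2 / tb) := by
        rw [hw_def]
        have : α (u β) * ((s2 / tb - 1) * (u β / α (u β))) = (s2 / tb - 1) * u β := by
          field_simp
        rw [this, hu_def]
        field_simp; ring
      rw [harg, div_mul_div_cancel₀]
      exact (hfpos (u β)).ne'
    rw [hprod, mul_comm]
  -- L positive
  have Lpos : ∀ s < (0:ℝ), 0 < L s := by
    intro s hs
    rcases lt_or_eq_of_le (Lnn s hs) with h | h
    · exact h
    · exfalso
      have hs2 : tb * tb / s < 0 := div_neg_of_pos_of_neg (mul_pos_of_neg_of_neg htb htb) hs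
      have := Lmul s hs (tb * tb / s) hs2
      have harg : s * (tb * tb / s) / tb = tb := by
        field_simp [hs.ne]
      rw [harg, Ltb, ← h] at this
      simp at this
  -- the additive function
  set H : ℝ → ℝ := fun x => Real.log (L (tb * Real.exp x)) with hH
  have hxneg : ∀ x : ℝ, tb * Real.exp x < 0 := fun x =>
    mul_neg_of_neg_of_pos htb (Real.exp_pos x)
  have Hadd : ∀ x y, H (x + y) = H x + H y := by
    intro x y
    have harg : tb * Real.exp (x + y) = (tb * Real.exp x) * (tb * Real.exp y) / tb := by
      rw [Real.exp_add]; field_simp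
    rw [hH]
    simp only
    rw [harg, Lmul _ (hxneg x) _ (hxneg y),
      Real.log_mul (Lpos _ (hxneg x)).ne' (Lpos _ (hxneg y)).ne']
  have Lmono : ∀ s1 < (0:ℝ), ∀ s2 < (0:ℝ), s1 ≤ s2 → L s1 ≤ L s2 := by
    intro s1 hs1 s2 hs2 h12
    refine le_of_tendsto_of_tendsto (pL' s1 hs1) (pL' s2 hs2) ?_
    filter_upwards [eventually_lt_atBot (0:ℝ)] with β hβ
    have hα := hαpos β hβ
    exact (div_le_div_iff_of_pos_right (hfpos β)).mpr (hf (mul_le_mul_of_nonneg_left h12 hα.le))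
  have Hanti : Antitone H := by
    intro x y hxy
    have harg : tb * Real.exp y ≤ tb * Real.exp x :=
      mul_le_mul_of_nonpos_left (Real.exp_le_exp.mpr hxy) htb.le
    exact Real.log_le_log (Lpos _ (hxneg y)) (Lmono _ (hxneg y) _ (hxneg x) harg)
  have Hlin : ∀ x, H x = H 1 * x := by
    intro x
    have h := aux_linear_16 (fun x => -H x) (fun a b => by show -H (a + b) = -H a + -H b; rw [Hadd]; ring)
      (fun a b hab => neg_le_neg (Hanti hab)) x
    linarith [h]
  have H0 : H 0 = 0 := by
    rw [hH]
    simp only [Real.exp_zero, mul_one, Ltb, Real.log_one]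
  have H1nonpos : H 1 ≤ 0 := by
    have := Hanti (by norm_num : (0:ℝ) ≤ 1)
    rwa [H0] at this

  have Lform : ∀ s < (0:ℝ), L s = (tb / s) ^ (-(H 1)) := by
    intro s hs
    have hst : (0:ℝ) < s / tb := div_pos_of_neg_of_neg hs htb
    have hts : (0:ℝ) < tb / s := div_pos_of_neg_of_neg htb hs
    have harg : tb * Real.exp (Real.log (s / tb)) = s := by
      rw [Real.exp_log hst]; field_simp
    have h1 : Real.log (L s) = H (Real.log (s / tb)) := by
      rw [hH]; simp only [harg]
    have h3 : L s = Real.exp (Real.log (s / tb) * H 1) := by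
      rw [← Real.exp_log (Lpos s hs), h1, Hlin]; ring_nf
    rw [h3, ← Real.rpow_def_of_pos hst]
    rw [Real.rpow_neg hts.le, ← Real.inv_rpow hts.le, inv_div]
  refine ⟨-(H 1), by linarith, ?_, ?_⟩
  · intro t ht
    have h1 : g t = L (t + tb) := by rw [hL]; simp
    rw [h1, Lform _ (by linarith)]
  · rw [tendstoLocallyUniformlyOn_iff_forall_isCompact isOpen_Iio]
    intro K hKs hK
    rcases K.eq_empty_or_nonempty with rfl | hne
    · exact tendstoUniformlyOn_empty
    · set b := sSup K with hbdef
      set a := sInf K with hadef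
      have hbK : b ∈ K := hK.sSup_mem hne
      have hb0 : b < 0 := hKs hbK
      have hKab : K ⊆ Icc a b := fun x hx =>
        ⟨csInf_le hK.bddBelow hx, le_csSup hK.bddAbove hx⟩
      set δ : ℝ := -b / 2 with hδdef
      have hδ : 0 < δ := by rw [hδdef]; linarith
      set K' : Set ℝ := Icc (a - tb - δ) (b - tb + δ) with hK'def
      have hK's : K' ⊆ Iio (-tb) := by
        intro x hx
        have h2 := hx.2
        simp only [mem_Iio]
        rw [hδdef] at h2
        linarith
      have hUO : TendstoUniformlyOn (fun β t => f (α β * t + β) / f β) g atBot K' :=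
        (tendstoLocallyUniformlyOn_iff_forall_isCompact isOpen_Iio).mp hconv K' hK's
          isCompact_Icc
      have hUC : UniformContinuousOn g K' :=
        isCompact_Icc.uniformContinuousOn_of_continuous (hgc.mono hK's)
      rw [Metric.tendstoUniformlyOn_iff]
      intro ε hε
      obtain ⟨δ', hδ'pos, hδ'⟩ := Metric.uniformContinuousOn_iff.mp hUC (ε/2) (by linarith)
      have E1 : ∀ᶠ β in atBot, dist (β / α β) tb < min δ δ' :=
        Metric.tendsto_nhds.mp hlim (min δ δ') (lt_min hδ hδ'pos)
      have E2 := (Metric.tendstoUniformlyOn_iff.mp hUO) (ε/2) (by linarith)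
      filter_upwards [E1, E2, eventually_lt_atBot (0:ℝ)] with β h1 h2 h3
      intro s hsK
      have hα := hαpos β h3
      have hsab := hKab hsK
      rw [Real.dist_eq] at h1
      have hdδ : |β / α β - tb| < δ := lt_of_lt_of_le h1 (min_le_left _ _)
      have hdδ' : |β / α β - tb| < δ' := lt_of_lt_of_le h1 (min_le_right _ _)
      obtain ⟨hb1, hb2⟩ := abs_lt.mp hdδ
      set t := s - β / α β with htdef
      have hstb : s - tb ∈ K' := by
        constructor
        · have := hsab.1; linarith
        · have := hsab.2; linarith
      have htK' : t ∈ K' := by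
        constructor
        · have := hsab.1; rw [htdef]; linarith
        · have := hsab.2; rw [htdef]; linarith
      have harg : α β * t + β = α β * s := by
        rw [htdef]
        field_simp
        ring
      have hform : (tb / s) ^ (-(H 1)) = g (s - tb) := (Lform s (hKs hsK)).symm
      rw [hform, ← harg]
      have hdist : dist (s - tb) t < δ' := by
        rw [Real.dist_eq, htdef]
        have heq : s - tb - (s - β / α β) = β / α β - tb := by ring
        rw [heq]
        exact hdδ'
      calc dist (g (s - tb)) (f (α β * t + β) / f β)
          ≤ dist (g (s - tb)) (g t) + dist (g t) (f (α β * t + β) / f β) :=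
            dist_triangle _ _ _
        _ < ε/2 + ε/2 := add_lt_add (hδ' _ hstb _ htK' hdist) (h2 t htK')
        _ = ε := by ring
end
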